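/- arXiv:2403.05232 — 6 statements merged into one kernel-verified Lean document; each statement's English description precedes it below -/
import Mathlib

section
/- Let A be an abelian category and B a full subcategory closed under extensions and under kernels of epimorphisms. If (X, Y) is a complete cotorsion pair in A with X ⊆ B, then (X, Y ∩ B) is a complete cotorsion pair in the exact category B. -/
universe u

open CategoryTheory

/-- `Ext¹(X, Y) = 0` in an abelian category, expressed via the splitting of every
short exact sequence `0 → Y → E → X → 0`. -/
def Ext1Z {A : Type u} [Category.{u} A] [Abelian A] (X Y : A) : Prop :=
  ∀ (E : A) (i : Y ⟶ E) (p : E ⟶ X) (w : i ≫ p = 0),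
    (ShortComplex.mk i p w).ShortExact → ∃ s : X ⟶ E, s ≫ p = 𝟙 X

/-- A complete cotorsion pair `(X, Y)` in an abelian category. -/
def IsCompleteCotorsionPair {A : Type u} [Category.{u} A] [Abelian A]
    (X Y : Set A) : Prop :=
  (∀ M, M ∈ Y ↔ ∀ C ∈ X, Ext1Z C M) ∧
  (∀ M, M ∈ X ↔ ∀ F ∈ Y, Ext1Z M F) ∧
  (∀ M : A, ∃ (F C : A) (i : F ⟶ C) (p : C ⟶ M) (w : i ≫ p = 0),
      (ShortComplex.mk i p w).ShortExact ∧ F ∈ Y ∧ C ∈ X) ∧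
  (∀ M : A, ∃ (F C : A) (i : M ⟶ F) (p : F ⟶ C) (w : i ≫ p = 0),
      (ShortComplex.mk i p w).ShortExact ∧ F ∈ Y ∧ C ∈ X)

/-- A complete cotorsion pair `(X, Y)` in the exact category given by an
extension-closed full subcategory `B` of an abelian category, where the admissible
exact sequences of `B` are the short exact sequences of the ambient abelian category
with all three terms in `B`. -/
def IsCompleteCotorsionPairIn {A : Type u} [Category.{u} A] [Abelian A]
    (B X Y : Set A) : Prop :=
  X ⊆ B ∧ Y ⊆ B ∧
  (∀ M ∈ B, (M ∈ Y ↔ ∀ C ∈ X, Ext1Z C M)) ∧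
  (∀ M ∈ B, (M ∈ X ↔ ∀ F ∈ Y, Ext1Z M F)) ∧
  (∀ M ∈ B, ∃ (F C : A) (i : F ⟶ C) (p : C ⟶ M) (w : i ≫ p = 0),
      (ShortComplex.mk i p w).ShortExact ∧ F ∈ Y ∧ C ∈ X) ∧
  (∀ M ∈ B, ∃ (F C : A) (i : M ⟶ F) (p : F ⟶ C) (w : i ≫ p = 0),
      (ShortComplex.mk i p w).ShortExact ∧ F ∈ Y ∧ C ∈ X)

/-- A cotorsion pair `(X, Y)` (orthogonality only) in the exact category given by an
extension-closed full subcategory `B` of an abelian category. -/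
def IsCotorsionPairIn {A : Type u} [Category.{u} A] [Abelian A]
    (B X Y : Set A) : Prop :=
  X ⊆ B ∧ Y ⊆ B ∧
  (∀ M ∈ B, (M ∈ Y ↔ ∀ C ∈ X, Ext1Z C M)) ∧
  (∀ M ∈ B, (M ∈ X ↔ ∀ F ∈ Y, Ext1Z M F))

open Limits in
/-- Pulling back a short exact sequence `0 → F → E → M → 0` along `p : C ⟶ M` gives a
short exact sequence `0 → F → E ×_M C → C → 0`. -/
lemma pullback_shortExact {A : Type u} [Category.{u} A] [Abelian A]
    {F E M C : A} (i : F ⟶ E) (q : E ⟶ M) (w : i ≫ q = 0)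
    (hse : (ShortComplex.mk i q w).ShortExact) (p : C ⟶ M) :
    ∃ (j : F ⟶ pullback q p) (w' : j ≫ pullback.snd q p = 0),
      (ShortComplex.mk j (pullback.snd q p) w').ShortExact ∧
      j ≫ pullback.fst q p = i := by
  haveI := hse.mono_f
  haveI := hse.epi_g
  refine ⟨pullback.lift i 0 (show i ≫ q = 0 ≫ p by simp [w]), pullback.lift_snd _ _ _, ?_,
    pullback.lift_fst _ _ _⟩
  have hj : Mono (pullback.lift i 0 (show i ≫ q = 0 ≫ p by simp [w])) := by
    have : pullback.lift i 0 (show i ≫ q = 0 ≫ p by simp [w]) ≫ pullback.fst q p = i := by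
      exact pullback.lift_fst _ _ _
    exact mono_of_mono_fac this
  haveI := hj
  refine ShortComplex.ShortExact.mk (ShortComplex.exact_of_f_is_kernel _
    (KernelFork.IsLimit.ofι' _ _ (fun {T} k hk => ?_)))
  have hk2 : (k ≫ pullback.fst q p) ≫ q = 0 := by
    rw [Category.assoc, pullback.condition, ← Category.assoc, hk, zero_comp]
  refine ⟨hse.exact.lift (k ≫ pullback.fst q p) hk2, ?_⟩
  apply pullback.hom_ext
  · rw [Category.assoc, pullback.lift_fst _ _ _]
    exact hse.exact.lift_f _ _
  · rw [Category.assoc, pullback.lift_snd _ _ _, comp_zero]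
    exact hk.symm

/-- If `B` is a full subcategory of an abelian category closed under extensions and
kernels of epimorphisms, and `(X, Y)` is a complete cotorsion pair with `X ⊆ B`, then
`(X, Y ∩ B)` is a complete cotorsion pair in the exact category `B`. -/
theorem induced_complete_cotorsion_pair {A : Type u} [Category.{u} A] [Abelian A]
    (B X Y : Set A)
    (hext : ∀ S : ShortComplex A, S.ShortExact → S.X₁ ∈ B → S.X₃ ∈ B → S.X₂ ∈ B)
    (hker : ∀ S : ShortComplex A, S.ShortExact → S.X₂ ∈ B → S.X₃ ∈ B → S.X₁ ∈ B)
    (hXY : IsCompleteCotorsionPair X Y) (hXB : X ⊆ B) :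
    IsCompleteCotorsionPairIn B X (Y ∩ B) := by
  obtain ⟨hY, hX, hcomp1, hcomp2⟩ := hXY
  refine ⟨hXB, fun F hF => hF.2, ?_, ?_, ?_, ?_⟩
  · intro M hM
    exact ⟨fun h C hC => (hY M).1 h.1 C hC, fun h => ⟨(hY M).2 h, hM⟩⟩
  · intro M hM
    constructor
    · intro hMX F hF
      exact (hX M).1 hMX F hF.1
    · intro h
      obtain ⟨F', C, i, p, w, hse, hF'Y, hCX⟩ := hcomp1 M
      have hF'B : F' ∈ B := hker _ hse (hXB hCX) hM
      obtain ⟨s, hs⟩ := h F' ⟨hF'Y, hF'B⟩ C i p w hse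
      refine (hX M).2 (fun F hF E i' q w' hse' => ?_)
      obtain ⟨j, wj, hsej, hjfst⟩ := pullback_shortExact i' q w' hse' p
      obtain ⟨t, ht⟩ := (hX C).1 hCX F hF _ j (Limits.pullback.snd q p) wj hsej
      refine ⟨s ≫ t ≫ Limits.pullback.fst q p, ?_⟩
      rw [Category.assoc, Category.assoc, Limits.pullback.condition,
        ← Category.assoc t, ht, Category.id_comp, hs]
  · intro M hM
    obtain ⟨F, C, i, p, w, hse, hFY, hCX⟩ := hcomp1 M
    exact ⟨F, C, i, p, w, hse, ⟨hFY, hker _ hse (hXB hCX) hM⟩, hCX⟩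
  · intro M hM
    obtain ⟨F, C, i, p, w, hse, hFY, hCX⟩ := hcomp2 M
    exact ⟨F, C, i, p, w, hse, ⟨hFY, hext _ hse hM (hXB hCX)⟩, hCX⟩
end

section
/- Let A be an abelian category and B a full subcategory closed under extensions and under cokernels of monomorphisms. If (X, Y) is a complete cotorsion pair in A with Y ⊆ B, then (X ∩ B, Y) is a complete cotorsion pair in the exact category B; moreover, if (X, Y) is hereditary in A, then (X ∩ B, Y) is hereditary in B. -/
universe u

open CategoryTheory Limits

section Aux

variable {A : Type u} [Category.{u} A] [Abelian A]

/-- From a section of the quotient map of a short exact sequence, get a retraction of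
the inclusion. -/
lemma retraction_of_section {M F C : A} (i : M ⟶ F) (p : F ⟶ C) (w : i ≫ p = 0)
    (hS : (ShortComplex.mk i p w).ShortExact) (s : C ⟶ F) (hs : s ≫ p = 𝟙 C) :
    ∃ r : F ⟶ M, i ≫ r = 𝟙 M := by
  have := hS.mono_f
  have he : (𝟙 F - p ≫ s) ≫ p = 0 := by
    simp [Preadditive.sub_comp, Category.assoc, hs]
  refine ⟨hS.exact.lift (𝟙 F - p ≫ s) he, ?_⟩
  have h1 : (i ≫ hS.exact.lift (𝟙 F - p ≫ s) he) ≫ i = 𝟙 M ≫ i := by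
    rw [Category.assoc, hS.exact.lift_f]
    simp [Preadditive.comp_sub, reassoc_of% w]
  exact (cancel_mono i).1 h1

/-- `Ext¹(C, -) = 0` passes to retracts. -/
lemma ext1Z_of_retract {M F : A} (i : M ⟶ F) (r : F ⟶ M) (hir : i ≫ r = 𝟙 M)
    (C : A) (h : Ext1Z C F) : Ext1Z C M := by
  intro E j q w hS
  have := hS.mono_f
  have := hS.epi_g
  -- pushout of j along i
  let P := pushout i j
  let q' : P ⟶ C := pushout.desc 0 q (by simp [w])
  have winl : (pushout.inl i j) ≫ q' = 0 := pushout.inl_desc _ _ _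
  have hepi : Epi q' := by
    have : pushout.inr i j ≫ q' = q := pushout.inr_desc _ _ _
    exact epi_of_epi_fac this
  have hmono : Mono (pushout.inl i j) := inferInstance
  -- q' is a cokernel of inl
  have hcolim : IsColimit (CokernelCofork.ofπ q' winl) := by
    refine CokernelCofork.IsColimit.ofπ _ _
      (fun {T} t ht => hS.exact.desc (pushout.inr i j ≫ t)
        (by rw [← Category.assoc, ← pushout.condition, Category.assoc, ht, comp_zero]))
      (fun {T} t ht => ?_) (fun {T} t ht m hm => ?_)
    · apply pushout.hom_ext
      · rw [reassoc_of% winl, zero_comp]; exact ht.symm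
      · have : pushout.inr i j ≫ q' = q := pushout.inr_desc _ _ _
        rw [reassoc_of% this, hS.exact.g_desc]
    · have hq : pushout.inr i j ≫ q' = q := pushout.inr_desc _ _ _
      have hq2 : Epi ((ShortComplex.mk j q w).g) := hS.epi_g
      rw [← cancel_epi q]
      rw [hS.exact.g_desc, ← hm, ← Category.assoc, hq]
  have hexact : (ShortComplex.mk (pushout.inl i j) q' winl).Exact :=
    ShortComplex.exact_of_g_is_cokernel _ hcolim
  have hSE : (ShortComplex.mk (pushout.inl i j) q' winl).ShortExact :=
    { exact := hexact, mono_f := hmono, epi_g := hepi }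
  obtain ⟨t, ht⟩ := h P (pushout.inl i j) q' winl hSE
  -- retract back to E
  let ρ : P ⟶ E := pushout.desc (r ≫ j) (𝟙 E) (by rw [reassoc_of% hir]; simp)
  have hρq : ρ ≫ q = q' := by
    apply pushout.hom_ext
    · show pushout.inl i j ≫ ρ ≫ q = pushout.inl i j ≫ q'
      rw [winl]
      simp only [ρ, pushout.inl_desc_assoc]
      rw [Category.assoc, w, comp_zero]
    · show pushout.inr i j ≫ ρ ≫ q = pushout.inr i j ≫ q'
      have e1 : pushout.inr i j ≫ ρ = 𝟙 E := pushout.inr_desc _ _ _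
      have e2 : pushout.inr i j ≫ q' = q := pushout.inr_desc _ _ _
      rw [← Category.assoc, e1, Category.id_comp, e2]
  exact ⟨t ≫ ρ, by rw [Category.assoc, hρq, ht]⟩

end Aux

/-- Dual version: if `B` is closed under extensions and cokernels of monomorphisms,
and `(X, Y)` is a complete cotorsion pair with `Y ⊆ B`, then `(X ∩ B, Y)` is a complete
cotorsion pair in the exact category `B`; moreover, if `(X, Y)` is hereditary in `A`
(the right class is closed under cokernels of monomorphisms), then `(X ∩ B, Y)` is
hereditary in `B`. -/
theorem induced_complete_cotorsion_pair_dual {A : Type u} [Category.{u} A] [Abelian A]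
    (B X Y : Set A)
    (hext : ∀ S : ShortComplex A, S.ShortExact → S.X₁ ∈ B → S.X₃ ∈ B → S.X₂ ∈ B)
    (hcoker : ∀ S : ShortComplex A, S.ShortExact → S.X₁ ∈ B → S.X₂ ∈ B → S.X₃ ∈ B)
    (hXY : IsCompleteCotorsionPair X Y) (hYB : Y ⊆ B) :
    IsCompleteCotorsionPairIn B (X ∩ B) Y ∧
    ((∀ S : ShortComplex A, S.ShortExact → S.X₁ ∈ Y → S.X₂ ∈ Y → S.X₃ ∈ Y) →
      (∀ S : ShortComplex A, S.ShortExact → S.X₁ ∈ B → S.X₂ ∈ B → S.X₃ ∈ B →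
        S.X₁ ∈ Y → S.X₂ ∈ Y → S.X₃ ∈ Y)) := by
  have hY := hXY.1
  have hX := hXY.2.1
  have happrox := hXY.2.2.1
  have henv := hXY.2.2.2
  constructor
  · refine ⟨fun C hC => hC.2, hYB, ?_, ?_, ?_, ?_⟩
    · intro M hM
      constructor
      · intro hMY C hC
        exact (hY M).1 hMY C hC.1
      · intro h
        -- special preenvelope of M
        obtain ⟨F, C, i, p, w, hSE, hF, hC⟩ := henv M
        have hCB : C ∈ B := hcoker _ hSE hM (hYB hF)
        obtain ⟨s, hs⟩ := h C ⟨hC, hCB⟩ F i p w hSE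
        obtain ⟨r, hr⟩ := retraction_of_section i p w hSE s hs
        refine (hY M).2 (fun C' hC' => ?_)
        exact ext1Z_of_retract i r hr C' ((hY F).1 hF C' hC')
    · intro M hM
      constructor
      · intro hMX F hF
        exact (hX M).1 hMX.1 F hF
      · intro h
        exact ⟨(hX M).2 h, hM⟩
    · intro M hM
      obtain ⟨F, C, i, p, w, hSE, hF, hC⟩ := happrox M
      exact ⟨F, C, i, p, w, hSE, hF, hC, hext _ hSE (hYB hF) hM⟩
    · intro M hM
      obtain ⟨F, C, i, p, w, hSE, hF, hC⟩ := henv M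
      exact ⟨F, C, i, p, w, hSE, hF, hC, hcoker _ hSE hM (hYB hF)⟩
  · intro hher S hS _ _ _ h1 h2
    exact hher S hS h1 h2
end

section
/- For any ring R and any n ≥ 0, the class P_n of left R-modules of projective dimension at most n is thick inside the class GP_n of modules of Gorenstein projective dimension at most n: if 0 → X → Y → Z → 0 is exact with all three modules in GP_n, and two of X, Y, Z lie in P_n, then so does the third. -/
universe u

open CategoryTheory

/-- `Ext¹_R(M, N) = 0`, expressed via the splitting of every short exact sequence
`0 → N → E → M → 0` of `R`-modules. -/
def Ext1Vanishes (R : Type u) [Ring R] (M N : ModuleCat.{u} R) : Prop :=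
  ∀ (E : ModuleCat.{u} R) (i : N →ₗ[R] E) (p : E →ₗ[R] M),
    Function.Injective i → Function.Surjective p → Function.Exact i p →
    ∃ s : M →ₗ[R] E, ∀ x, p (s x) = x

/-- `pdLE R n M` means that `M` has projective dimension at most `n`. -/
def pdLE (R : Type u) [Ring R] : ℕ → ModuleCat.{u} R → Prop
  | 0, M => Module.Projective R M
  | n+1, M => ∃ (P : ModuleCat.{u} R) (p : P →ₗ[R] M),
      Module.Projective R P ∧ Function.Surjective p ∧
        pdLE R n (ModuleCat.of R (LinearMap.ker p))

/-- A module is Gorenstein projective if it is a syzygy of an acyclic complex of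
projective modules which stays acyclic under `Hom_R(-, Q)` for every projective `Q`. -/
def IsGorensteinProjective (R : Type u) [Ring R] (M : ModuleCat.{u} R) : Prop :=
  ∃ (P : ℤ → ModuleCat.{u} R) (d : ∀ i : ℤ, P i →ₗ[R] P (i+1)),
    (∀ i, Module.Projective R (P i)) ∧
    (∀ i, Function.Exact (d i) (d (i+1))) ∧
    (∀ (Q : ModuleCat.{u} R), Module.Projective R Q →
      ∀ (i : ℤ) (f : P (i+1) →ₗ[R] Q), f ∘ₗ d i = 0 →
        ∃ g : P (i+1+1) →ₗ[R] Q, g ∘ₗ d (i+1) = f) ∧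
    Nonempty (M ≃ₗ[R] LinearMap.ker (d 0))

/-- `GpdLE R n M` means that `M` has Gorenstein projective dimension at most `n`,
i.e. admits a resolution of length `≤ n` by Gorenstein projective modules. -/
def GpdLE (R : Type u) [Ring R] : ℕ → ModuleCat.{u} R → Prop
  | 0, M => IsGorensteinProjective R M
  | n+1, M => ∃ (G : ModuleCat.{u} R) (p : G →ₗ[R] M),
      IsGorensteinProjective R G ∧ Function.Surjective p ∧
        GpdLE R n (ModuleCat.of R (LinearMap.ker p))


section helpers

variable {R : Type u} [Ring R]

lemma exists_proj_surj (M : ModuleCat.{u} R) :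
    ∃ (P : ModuleCat.{u} R) (p : P →ₗ[R] M), Module.Projective R P ∧ Function.Surjective p :=
  ⟨ModuleCat.of R (↥M →₀ R), Finsupp.linearCombination R _root_.id,
    (inferInstance : Module.Projective R (↥M →₀ R)),
    Finsupp.linearCombination_id_surjective R ↥M⟩

lemma proj_of_subsingleton (A : Type u) [AddCommGroup A] [Module R A] (h : Subsingleton A) :
    Module.Projective R A :=
  Module.Projective.of_split (M := A →₀ R) 0 0 (LinearMap.ext fun x => Subsingleton.elim _ _)

noncomputable def equivOfSection {A B C : Type u} [AddCommGroup A] [Module R A]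
    [AddCommGroup B] [Module R B] [AddCommGroup C] [Module R C]
    (f : A →ₗ[R] B) (g : B →ₗ[R] C) (hf : Function.Injective f)
    (h : Function.Exact f g) (l : C →ₗ[R] B) (hl : ∀ x, g (l x) = x) :
    B ≃ₗ[R] A × C :=
  (h.splitSurjectiveEquiv hf ⟨l, LinearMap.ext hl⟩).1

lemma section_of_proj {B C : Type u} [AddCommGroup B] [Module R B] [AddCommGroup C] [Module R C]
    (hC : Module.Projective R C) (g : B →ₗ[R] C) (hg : Function.Surjective g) :
    ∃ l : C →ₗ[R] B, ∀ x, g (l x) = x := by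
  obtain ⟨l, hl⟩ := Module.projective_lifting_property g LinearMap.id hg
  exact ⟨l, fun x => by simpa using LinearMap.congr_fun hl x⟩

def prodSubEquiv {A B : Type u} [AddCommGroup A] [Module R A] [AddCommGroup B] [Module R B]
    (S : Submodule R A) (T : Submodule R B) : ↥(S.prod T) ≃ₗ[R] ↥S × ↥T where
  toFun z := (⟨z.1.1, z.2.1⟩, ⟨z.1.2, z.2.2⟩)
  invFun w := ⟨(w.1.1, w.2.1), ⟨w.1.2, w.2.2⟩⟩
  map_add' _ _ := rfl
  map_smul' _ _ := rfl
  left_inv _ := rfl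
  right_inv _ := rfl

end helpers

section pd

variable {R : Type u} [Ring R]

lemma pd_of_equiv : ∀ (n : ℕ) {M N : ModuleCat.{u} R}, (↥M ≃ₗ[R] ↥N) → pdLE R n M → pdLE R n N
  | 0, M, N, e, h => by
    haveI : Module.Projective R ↥M := h
    exact Module.Projective.of_equiv e
  | (n+1), M, N, e, h => by
    obtain ⟨P, p, hP, hs, hk⟩ := h
    refine ⟨P, e.toLinearMap ∘ₗ p, hP, e.surjective.comp hs, ?_⟩
    have hker : LinearMap.ker (e.toLinearMap ∘ₗ p) = LinearMap.ker p := by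
      ext x; simp [LinearMap.mem_ker]
    rw [hker]; exact hk

lemma pd_of_proj : ∀ (n : ℕ) (M : ModuleCat.{u} R), Module.Projective R ↥M → pdLE R n M
  | 0, _, h => h
  | (n+1), M, h => ⟨M, LinearMap.id, h, Function.surjective_id,
      pd_of_proj n _ (proj_of_subsingleton _
        (by rw [LinearMap.ker_id]; exact inferInstanceAs (Subsingleton ↥(⊥ : Submodule R ↥M))))⟩

lemma pd_mono : ∀ (n : ℕ) {M : ModuleCat.{u} R}, pdLE R n M → pdLE R (n+1) M
  | 0, M, h => ⟨M, LinearMap.id, h, Function.surjective_id,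
      proj_of_subsingleton _
        (by rw [LinearMap.ker_id]; exact inferInstanceAs (Subsingleton ↥(⊥ : Submodule R ↥M)))⟩
  | (n+1), M, h => by
    obtain ⟨P, p, hP, hs, hk⟩ := h
    exact ⟨P, p, hP, hs, pd_mono n hk⟩

lemma pd_prod : ∀ (n : ℕ) (A B : Type u) [AddCommGroup A] [Module R A] [AddCommGroup B]
    [Module R B], pdLE R n (ModuleCat.of R A) → pdLE R n (ModuleCat.of R B) →
    pdLE R n (ModuleCat.of R (A × B))
  | 0, A, B, _, _, _, _, hA, hB => by
    haveI : Module.Projective R A := hA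
    haveI : Module.Projective R B := hB
    exact (inferInstance : Module.Projective R (A × B))
  | (n+1), A, B, _, _, _, _, hA, hB => by
    obtain ⟨P, p, hP, hps, hpk⟩ := hA
    obtain ⟨Q, q, hQ, hqs, hqk⟩ := hB
    haveI := hP; haveI := hQ
    refine ⟨ModuleCat.of R (↥P × ↥Q), LinearMap.prodMap p q,
      (inferInstance : Module.Projective R (↥P × ↥Q)), ?_, ?_⟩
    · rintro ⟨a, b⟩
      obtain ⟨x, hx⟩ := hps a
      obtain ⟨y, hy⟩ := hqs b
      exact ⟨(x, y), Prod.ext hx hy⟩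
    · rw [LinearMap.ker_prodMap]
      exact pd_of_equiv n (prodSubEquiv (LinearMap.ker p) (LinearMap.ker q)).symm
        (pd_prod n _ _ hpk hqk)

end pd
section pd2

variable {R : Type u} [Ring R]

lemma pd_summand : ∀ (n : ℕ) (A B : Type u) [AddCommGroup A] [Module R A] [AddCommGroup B]
    [Module R B], pdLE R n (ModuleCat.of R (A × B)) → Module.Projective R B →
    pdLE R n (ModuleCat.of R A)
  | 0, A, B, _, _, _, _, hAB, _ => by
    haveI : Module.Projective R (A × B) := hAB
    exact Module.Projective.of_split (LinearMap.inl R A B) (LinearMap.fst R A B)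
      (LinearMap.ext fun x => rfl)
  | (n+1), A, B, _, _, _, _, hAB, hB => by
    obtain ⟨P, q, hP, hqs, hqk⟩ := hAB
    set qA : ↥P →ₗ[R] A := (LinearMap.fst R A B) ∘ₗ q with hqA
    have hqAs : Function.Surjective qA := by
      intro a
      obtain ⟨x, hx⟩ := hqs (a, (0 : B))
      exact ⟨x, by show (q x).1 = a; rw [hx]⟩
    have hle : LinearMap.ker q ≤ LinearMap.ker qA := fun x hx => by
      have hx' : q x = 0 := hx
      show (q x).1 = 0
      rw [hx']; rfl
    set j := Submodule.inclusion hle with hj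
    set π : ↥(LinearMap.ker qA) →ₗ[R] B :=
      ((LinearMap.snd R A B) ∘ₗ q) ∘ₗ (LinearMap.ker qA).subtype with hπ
    have hjinj : Function.Injective j := Submodule.inclusion_injective hle
    have hπs : Function.Surjective π := by
      intro b
      obtain ⟨x, hx⟩ := hqs ((0 : A), b)
      have hxm : x ∈ LinearMap.ker qA := by show (q x).1 = 0; rw [hx]
      exact ⟨⟨x, hxm⟩, by show (q x).2 = b; rw [hx]⟩
    have hex : Function.Exact j π := by
      intro z
      constructor
      · intro hz
        have h1 : (q z.1).2 = 0 := hz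
        have h2 : (q z.1).1 = 0 := z.2
        have : z.1 ∈ LinearMap.ker q := by
          simp only [LinearMap.mem_ker]
          exact Prod.ext h2 h1
        exact ⟨⟨z.1, this⟩, Subtype.ext rfl⟩
      · rintro ⟨w, rfl⟩
        have : q w.1 = 0 := w.2
        show (q w.1).2 = 0
        rw [this]; rfl
    obtain ⟨l, hl⟩ := section_of_proj hB π hπs
    have hNequiv := equivOfSection j π hjinj hex l hl
    have hN : pdLE R n (ModuleCat.of R ↥(LinearMap.ker qA)) :=
      pd_of_equiv n hNequiv.symm (pd_prod n _ _ hqk (pd_of_proj n (ModuleCat.of R B) hB))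
    exact ⟨P, qA, hP, hqAs, hN⟩

lemma pd_ses_middle : ∀ (n : ℕ) (A B C : ModuleCat.{u} R) (f : A →ₗ[R] B) (g : B →ₗ[R] C),
    Function.Injective f → Function.Surjective g → Function.Exact f g →
    pdLE R n A → pdLE R n C → pdLE R n B
  | 0, A, B, C, f, g, hf, hg, he, hA, hC => by
    obtain ⟨l, hl⟩ := section_of_proj (B := ↥B) hC g hg
    haveI : Module.Projective R ↥A := hA
    haveI : Module.Projective R ↥C := hC
    exact Module.Projective.of_equiv (equivOfSection f g hf he l hl).symm
  | (n+1), A, B, C, f, g, hf, hg, he, hA, hC => by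
    obtain ⟨P, pA, hP, hPs, hPk⟩ := hA
    obtain ⟨Q, pC, hQ, hQs, hQk⟩ := hC
    haveI := hP; haveI := hQ
    obtain ⟨h, hh⟩ := Module.projective_lifting_property g pC hg
    set g' : (↥P × ↥Q) →ₗ[R] ↥B :=
      (f ∘ₗ pA ∘ₗ LinearMap.fst R ↥P ↥Q) + (h ∘ₗ LinearMap.snd R ↥P ↥Q) with hg'
    have hg'apply : ∀ w : ↥P × ↥Q, g' w = f (pA w.1) + h w.2 := fun w => rfl
    have hg's : Function.Surjective g' := by
      intro b
      obtain ⟨t, ht⟩ := hQs (g b)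
      have h0 : g (b - h t) = 0 := by
        have := LinearMap.congr_fun hh t
        simp only [LinearMap.comp_apply] at this
        rw [map_sub, this, ht, sub_self]
      obtain ⟨a, ha⟩ := (he (b - h t)).mp h0
      obtain ⟨w, hw⟩ := hPs a
      exact ⟨(w, t), by rw [hg'apply, hw, ha]; abel⟩
    have hmem1 : ∀ x : ↥(LinearMap.ker pA), ((x.1, 0) : ↥P × ↥Q) ∈ LinearMap.ker g' := by
      intro x
      have hx : pA x.1 = 0 := x.2
      simp [LinearMap.mem_ker, hg'apply, hx]
    set aMap : ↥(LinearMap.ker pA) →ₗ[R] ↥(LinearMap.ker g') :=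
      LinearMap.codRestrict _ ((LinearMap.inl R ↥P ↥Q) ∘ₗ (LinearMap.ker pA).subtype) hmem1
      with haMap
    have hmem2 : ∀ z : ↥(LinearMap.ker g'), pC z.1.2 = 0 := by
      intro z
      have hz : g (g' z.1) = 0 := by rw [(z.2 : g' z.1 = 0), map_zero]
      rw [hg'apply, map_add] at hz
      have h1 : g (f (pA z.1.1)) = 0 := Function.Exact.apply_apply_eq_zero he _
      have h2 := LinearMap.congr_fun hh z.1.2
      simp only [LinearMap.comp_apply] at h2
      rw [h1, zero_add, h2] at hz
      exact hz
    set bMap : ↥(LinearMap.ker g') →ₗ[R] ↥(LinearMap.ker pC) :=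
      LinearMap.codRestrict _ ((LinearMap.snd R ↥P ↥Q) ∘ₗ (LinearMap.ker g').subtype)
        (fun z => hmem2 z) with hbMap
    have hainj : Function.Injective aMap := by
      intro x y hxy
      have : ((x.1, 0) : ↥P × ↥Q) = (y.1, 0) := congrArg Subtype.val hxy
      exact Subtype.ext (congrArg Prod.fst this)
    have hbsurj : Function.Surjective bMap := by
      rintro ⟨t, ht⟩
      have ht' : pC t = 0 := ht
      have : g (h t) = 0 := by
        have h2 := LinearMap.congr_fun hh t
        simp only [LinearMap.comp_apply] at h2
        rw [h2, ht']
      obtain ⟨a, ha⟩ := (he (h t)).mp this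
      obtain ⟨w, hw⟩ := hPs a
      have hmem : ((-w, t) : ↥P × ↥Q) ∈ LinearMap.ker g' := by
        simp only [LinearMap.mem_ker, hg'apply, map_neg, hw, ha]
        abel
      exact ⟨⟨(-w, t), hmem⟩, Subtype.ext rfl⟩
    have hexact : Function.Exact aMap bMap := by
      intro z
      constructor
      · intro hz
        have ht : z.1.2 = 0 := congrArg Subtype.val hz
        have hz0 : g' z.1 = 0 := z.2
        rw [hg'apply, ht, map_zero, add_zero] at hz0
        have hpA : pA z.1.1 = 0 := hf (by rw [hz0, map_zero])
        refine ⟨⟨z.1.1, hpA⟩, ?_⟩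
        apply Subtype.ext
        show ((z.1.1, 0) : ↥P × ↥Q) = z.1
        exact Prod.ext rfl ht.symm
      · rintro ⟨w, rfl⟩
        exact Subtype.ext rfl
    have hK : pdLE R n (ModuleCat.of R ↥(LinearMap.ker g')) :=
      pd_ses_middle n (ModuleCat.of R ↥(LinearMap.ker pA)) (ModuleCat.of R ↥(LinearMap.ker g'))
        (ModuleCat.of R ↥(LinearMap.ker pC)) aMap bMap hainj hbsurj hexact hPk hQk
    exact ⟨ModuleCat.of R (↥P × ↥Q), g', (inferInstance : Module.Projective R (↥P × ↥Q)),
      hg's, hK⟩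

lemma pd_syzygy' : ∀ (n : ℕ) (M : ModuleCat.{u} R), pdLE R n M →
    ∃ (P : ModuleCat.{u} R) (p : P →ₗ[R] M), Module.Projective R P ∧ Function.Surjective p ∧
      pdLE R n (ModuleCat.of R (LinearMap.ker p))
  | 0, M, h => ⟨M, LinearMap.id, h, Function.surjective_id,
      proj_of_subsingleton _
        (by rw [LinearMap.ker_id]; exact inferInstanceAs (Subsingleton ↥(⊥ : Submodule R ↥M)))⟩
  | (n+1), M, h => by
    obtain ⟨P, p, hP, hs, hk⟩ := h
    exact ⟨P, p, hP, hs, pd_mono n hk⟩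

end pd2
/-- `ExtV R k M` encodes `Ext^{k+1}(M, Q) = 0` for all projective `Q`. -/
def ExtV (R : Type u) [Ring R] : ℕ → ModuleCat.{u} R → Prop
  | 0, M => ∀ (Q : ModuleCat.{u} R), Module.Projective R Q → Ext1Vanishes R M Q
  | k+1, M => ∀ (P : ModuleCat.{u} R) (p : P →ₗ[R] M), Module.Projective R P →
      Function.Surjective p → ExtV R k (ModuleCat.of R (LinearMap.ker p))

section extv

variable {R : Type u} [Ring R]

lemma ext1_of_equiv {M M' N : ModuleCat.{u} R} (e : ↥M ≃ₗ[R] ↥M') :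
    Ext1Vanishes R M N → Ext1Vanishes R M' N := by
  intro h E i p hi hp hexact
  have hp' : Function.Surjective (e.symm.toLinearMap ∘ₗ p) := e.symm.surjective.comp hp
  have hexact' : Function.Exact i (e.symm.toLinearMap ∘ₗ p) := by
    intro y
    rw [← hexact y]
    constructor
    · intro hy
      have := congrArg e hy
      simpa using this
    · intro hy
      show e.symm (p y) = 0
      rw [hy, map_zero]
  obtain ⟨s, hs⟩ := h E i (e.symm.toLinearMap ∘ₗ p) hi hp' hexact'
  refine ⟨s ∘ₗ e.symm.toLinearMap, fun x => ?_⟩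
  have h2 := hs (e.symm x)
  simp only [LinearMap.comp_apply, LinearEquiv.coe_coe] at h2 ⊢
  exact e.symm.injective h2

lemma extV_of_equiv : ∀ (k : ℕ) {M M' : ModuleCat.{u} R}, (↥M ≃ₗ[R] ↥M') →
    ExtV R k M → ExtV R k M'
  | 0, M, M', e, h => fun Q hQ => ext1_of_equiv e (h Q hQ)
  | (k+1), M, M', e, h => by
    intro P p hP hp
    have h' := h P (e.symm.toLinearMap ∘ₗ p) hP (e.symm.surjective.comp hp)
    have hker : LinearMap.ker (e.symm.toLinearMap ∘ₗ p) = LinearMap.ker p := by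
      ext x; simp [LinearMap.mem_ker]
    rw [hker] at h'
    exact h'

lemma extV_of_proj : ∀ (k : ℕ) (M : ModuleCat.{u} R), Module.Projective R ↥M → ExtV R k M
  | 0, M, hM => by
    intro Q hQ E i p hi hp hexact
    obtain ⟨l, hl⟩ := section_of_proj hM p hp
    exact ⟨l, hl⟩
  | (k+1), M, hM => by
    intro P p hP hp
    obtain ⟨l, hl⟩ := section_of_proj hM p hp
    have hmem : ∀ x : ↥P, x - l (p x) ∈ LinearMap.ker p := fun x => by
      simp [LinearMap.mem_ker, hl]
    set r : ↥P →ₗ[R] ↥(LinearMap.ker p) :=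
      LinearMap.codRestrict _ (LinearMap.id - l ∘ₗ p) hmem with hr
    haveI := hP
    have hproj : Module.Projective R ↥(LinearMap.ker p) := by
      refine Module.Projective.of_split (LinearMap.ker p).subtype r ?_
      ext x
      show (x : ↥P) - l (p (x : ↥P)) = (x : ↥P)
      rw [(x.2 : p (x : ↥P) = 0), map_zero, sub_zero]
    exact extV_of_proj k _ hproj

lemma extV_summand : ∀ (k : ℕ) (A B : Type u) [AddCommGroup A] [Module R A] [AddCommGroup B]
    [Module R B], ExtV R k (ModuleCat.of R (A × B)) → Module.Projective R B →
    ExtV R k (ModuleCat.of R A)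
  | 0, A, B, _, _, _, _, hAB, hB => by
    intro Q hQ E i p hi hp hexact
    set i' : ↥Q →ₗ[R] (↥E × B) := (LinearMap.inl R ↥E B) ∘ₗ i with hi'
    set p' : (↥E × B) →ₗ[R] (A × B) := LinearMap.prodMap p LinearMap.id with hp'
    have hi'inj : Function.Injective i' := fun x y hxy =>
      hi (congrArg Prod.fst hxy)
    have hp's : Function.Surjective p' := by
      rintro ⟨a, b⟩
      obtain ⟨e, he⟩ := hp a
      exact ⟨(e, b), Prod.ext he rfl⟩
    have hex' : Function.Exact i' p' := by
      intro z
      constructor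
      · intro hz
        have h1 : p z.1 = 0 := congrArg Prod.fst hz
        have h2 : z.2 = 0 := congrArg Prod.snd hz
        obtain ⟨q, hq⟩ := (hexact z.1).mp h1
        exact ⟨q, Prod.ext hq h2.symm⟩
      · rintro ⟨q, rfl⟩
        show ((p (i q) : A), (0 : B)) = 0
        rw [Function.Exact.apply_apply_eq_zero hexact q]; rfl
    obtain ⟨s, hs⟩ := hAB Q hQ (ModuleCat.of R (↥E × B)) i' p' hi'inj hp's hex'
    refine ⟨(LinearMap.fst R ↥E B) ∘ₗ s ∘ₗ (LinearMap.inl R A B), fun x => ?_⟩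
    have := hs ((x, 0) : A × B)
    exact congrArg Prod.fst this
  | (k+1), A, B, _, _, _, _, hAB, hB => by
    intro P p hP hp
    set p' : (↥P × B) →ₗ[R] (A × B) := LinearMap.prodMap p LinearMap.id with hp'
    have hp's : Function.Surjective p' := by
      rintro ⟨a, b⟩
      obtain ⟨e, he⟩ := hp a
      exact ⟨(e, b), Prod.ext he rfl⟩
    haveI := hP; haveI := hB
    have h' := hAB (ModuleCat.of R (↥P × B)) p'
      (inferInstance : Module.Projective R (↥P × B)) hp's
    -- ker p' ≃ ker p
    have e : ↥(LinearMap.ker p') ≃ₗ[R] ↥(LinearMap.ker p) := by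
      refine LinearEquiv.ofBijective
        (LinearMap.codRestrict _ ((LinearMap.fst R ↥P B) ∘ₗ (LinearMap.ker p').subtype)
          (fun z => congrArg Prod.fst (z.2 : p' z.1 = 0))) ⟨?_, ?_⟩
      · intro x y hxy
        have h1 : x.1.1 = y.1.1 := congrArg Subtype.val hxy
        have h2 : x.1.2 = y.1.2 := by
          have hx2 : x.1.2 = 0 := congrArg Prod.snd (x.2 : p' x.1 = 0)
          have hy2 : y.1.2 = 0 := congrArg Prod.snd (y.2 : p' y.1 = 0)
          rw [hx2, hy2]
        exact Subtype.ext (Prod.ext h1 h2)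
      · rintro ⟨x, hx⟩
        have hm : ((x, 0) : ↥P × B) ∈ LinearMap.ker p' := by
          show (p x, (0 : B)) = 0
          rw [(hx : p x = 0)]; rfl
        exact ⟨⟨(x, 0), hm⟩, Subtype.ext rfl⟩
    exact extV_of_equiv k e h'

lemma extV_sum_proj : ∀ (k : ℕ) (A B : Type u) [AddCommGroup A] [Module R A] [AddCommGroup B]
    [Module R B], ExtV R k (ModuleCat.of R A) → Module.Projective R B →
    ExtV R k (ModuleCat.of R (A × B))
  | 0, A, B, _, _, _, _, hA, hB => by
    intro Q hQ E i p hi hp hexact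
    -- section over B by projectivity
    obtain ⟨sB, hsB⟩ := Module.projective_lifting_property (R := R) p (LinearMap.inr R A B) hp
    -- pull back over A
    set EA := LinearMap.ker ((LinearMap.snd R A B) ∘ₗ p) with hEA
    have hmemi : ∀ q : ↥Q, i q ∈ EA := fun q => by
      have : p (i q) = 0 := Function.Exact.apply_apply_eq_zero hexact q
      show (p (i q)).2 = 0
      rw [this]; rfl
    set i' : ↥Q →ₗ[R] ↥EA := LinearMap.codRestrict _ i hmemi with hi'
    set p' : ↥EA →ₗ[R] A := (LinearMap.fst R A B) ∘ₗ p ∘ₗ EA.subtype with hp'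
    have hi'inj : Function.Injective i' := fun x y hxy =>
      hi (congrArg Subtype.val hxy)
    have hp's : Function.Surjective p' := by
      intro a
      obtain ⟨e, he⟩ := hp ((a, 0) : A × B)
      have hm : e ∈ EA := by show (p e).2 = 0; rw [he]
      exact ⟨⟨e, hm⟩, by show (p e).1 = a; rw [he]⟩
    have hex' : Function.Exact i' p' := by
      intro z
      constructor
      · intro hz
        have h1 : (p z.1).1 = 0 := hz
        have h2 : (p z.1).2 = 0 := z.2
        obtain ⟨q, hq⟩ := (hexact z.1).mp (Prod.ext h1 h2)
        exact ⟨q, Subtype.ext hq⟩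
      · rintro ⟨q, rfl⟩
        show (p (i q)).1 = 0
        rw [Function.Exact.apply_apply_eq_zero hexact q]; rfl
    obtain ⟨sA, hsA⟩ := hA Q hQ (ModuleCat.of R ↥EA) i' p' hi'inj hp's hex'
    refine ⟨EA.subtype ∘ₗ sA ∘ₗ LinearMap.fst R A B + sB ∘ₗ LinearMap.snd R A B,
      fun x => ?_⟩
    rw [LinearMap.add_apply, map_add]
    simp only [LinearMap.comp_apply]
    have h1 : p (EA.subtype (sA x.1)) = ((x.1 : A), (0 : B)) :=
      Prod.ext (hsA x.1) ((sA x.1).2)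
    have h2 : p (sB x.2) = ((0 : A), x.2) := by
      have := LinearMap.congr_fun hsB x.2
      simpa using this
    show p (EA.subtype (sA x.1)) + p (sB x.2) = x
    rw [h1, h2]
    exact Prod.ext (add_zero _) (zero_add _)
  | (k+1), A, B, _, _, _, _, hA, hB => by
    intro P q hP hq
    set qA : ↥P →ₗ[R] A := (LinearMap.fst R A B) ∘ₗ q with hqA
    have hqAs : Function.Surjective qA := by
      intro a
      obtain ⟨x, hx⟩ := hq ((a, 0) : A × B)
      exact ⟨x, by show (q x).1 = a; rw [hx]⟩
    have hK := hA P qA hP hqAs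
    -- ker q ⊆ ker qA  with quotient B, split
    have hle : LinearMap.ker q ≤ LinearMap.ker qA := fun x hx => by
      have hx' : q x = 0 := hx
      show (q x).1 = 0
      rw [hx']; rfl
    set j := Submodule.inclusion hle with hj
    set π : ↥(LinearMap.ker qA) →ₗ[R] B :=
      ((LinearMap.snd R A B) ∘ₗ q) ∘ₗ (LinearMap.ker qA).subtype with hπ
    have hjinj : Function.Injective j := Submodule.inclusion_injective hle
    have hπs : Function.Surjective π := by
      intro b
      obtain ⟨x, hx⟩ := hq ((0, b) : A × B)
      have hxm : x ∈ LinearMap.ker qA := by show (q x).1 = 0; rw [hx]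
      exact ⟨⟨x, hxm⟩, by show (q x).2 = b; rw [hx]⟩
    have hex : Function.Exact j π := by
      intro z
      constructor
      · intro hz
        have h1 : (q z.1).2 = 0 := hz
        have h2 : (q z.1).1 = 0 := z.2
        have : z.1 ∈ LinearMap.ker q := by
          show q z.1 = 0
          exact Prod.ext h2 h1
        exact ⟨⟨z.1, this⟩, Subtype.ext rfl⟩
      · rintro ⟨w, rfl⟩
        have : q w.1 = 0 := w.2
        show (q w.1).2 = 0
        rw [this]; rfl
    obtain ⟨l, hl⟩ := section_of_proj hB π hπs
    have e := equivOfSection j π hjinj hex l hl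
    exact extV_summand k _ _ (extV_of_equiv k e hK) hB

end extv
section factor

variable {R : Type u} [Ring R]

lemma factor_through_injective {A B C : Type u} [AddCommGroup A] [Module R A] [AddCommGroup B]
    [Module R B] [AddCommGroup C] [Module R C] (ι : A →ₗ[R] B) (hι : Function.Injective ι)
    (g : C →ₗ[R] B) (hg : ∀ x, g x ∈ LinearMap.range ι) :
    ∃ gbar : C →ₗ[R] A, ∀ x, ι (gbar x) = g x := by
  set e := LinearEquiv.ofInjective ι hι with he
  have key : ∀ w : ↥(LinearMap.range ι), ι (e.symm w) = w := by
    intro w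
    have h1 : e (e.symm w) = w := e.apply_symm_apply w
    have h2 : ((e (e.symm w)) : B) = ι (e.symm w) := by
      rw [he]; exact LinearEquiv.ofInjective_apply ι _
    rw [← h2, h1]
  exact ⟨e.symm.toLinearMap ∘ₗ LinearMap.codRestrict _ g hg, fun x => key _⟩

lemma factor_through_surjective {A B C : Type u} [AddCommGroup A] [Module R A] [AddCommGroup B]
    [Module R B] [AddCommGroup C] [Module R C] (g : A →ₗ[R] B) (hg : Function.Surjective g)
    (u : A →ₗ[R] C) (hker : ∀ x, g x = 0 → u x = 0) :
    ∃ v : B →ₗ[R] C, ∀ x, v (g x) = u x := by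
  set e := LinearMap.quotKerEquivOfSurjective g hg with he
  have hle : LinearMap.ker g ≤ LinearMap.ker u := fun x hx => hker x hx
  refine ⟨(Submodule.liftQ (LinearMap.ker g) u hle) ∘ₗ e.symm.toLinearMap, fun x => ?_⟩
  have hmk : e.symm (g x) = Submodule.Quotient.mk x := by
    apply e.injective
    rw [e.apply_symm_apply]
    rfl
  show Submodule.liftQ (LinearMap.ker g) u hle (e.symm (g x)) = u x
  rw [hmk]
  rfl

end factor

section schanuel

variable {R : Type u} [Ring R]

lemma schanuel {M P Q : ModuleCat.{u} R} (p : P →ₗ[R] M) (q : Q →ₗ[R] M)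
    (hP : Module.Projective R ↥P) (hQ : Module.Projective R ↥Q)
    (hps : Function.Surjective p) (hqs : Function.Surjective q) :
    Nonempty ((↥(LinearMap.ker p) × ↥Q) ≃ₗ[R] (↥(LinearMap.ker q) × ↥P)) := by
  set d : (↥P × ↥Q) →ₗ[R] ↥M :=
    (p ∘ₗ LinearMap.fst R ↥P ↥Q) - (q ∘ₗ LinearMap.snd R ↥P ↥Q) with hd
  have hdapply : ∀ z : ↥P × ↥Q, d z = p z.1 - q z.2 := fun z => rfl
  set E := LinearMap.ker d with hE
  -- first equiv : E ≃ ker q × P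
  have hmem1 : ∀ y : ↥(LinearMap.ker q), ((0, y.1) : ↥P × ↥Q) ∈ E := by
    intro y
    show p 0 - q y.1 = 0
    rw [map_zero, (y.2 : q y.1 = 0), sub_zero]
  set jq : ↥(LinearMap.ker q) →ₗ[R] ↥E :=
    LinearMap.codRestrict _ ((LinearMap.inr R ↥P ↥Q) ∘ₗ (LinearMap.ker q).subtype) hmem1
  set fstE : ↥E →ₗ[R] ↥P := (LinearMap.fst R ↥P ↥Q) ∘ₗ E.subtype
  have hjqinj : Function.Injective jq := by
    intro x y hxy
    exact Subtype.ext (congrArg Prod.snd (congrArg Subtype.val hxy))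
  have hfstEs : Function.Surjective fstE := by
    intro x
    obtain ⟨y, hy⟩ := hqs (p x)
    have hm : ((x, y) : ↥P × ↥Q) ∈ E := by
      show p x - q y = 0
      rw [hy, sub_self]
    exact ⟨⟨(x, y), hm⟩, rfl⟩
  have hexE : Function.Exact jq fstE := by
    intro z
    constructor
    · intro hz
      have h1 : z.1.1 = 0 := hz
      have h2 : p z.1.1 - q z.1.2 = 0 := z.2
      rw [h1, map_zero, zero_sub, neg_eq_zero] at h2
      exact ⟨⟨z.1.2, h2⟩, Subtype.ext (Prod.ext h1.symm rfl)⟩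
    · rintro ⟨w, rfl⟩
      rfl
  obtain ⟨l1, hl1⟩ := section_of_proj hP fstE hfstEs
  have e1 := equivOfSection jq fstE hjqinj hexE l1 hl1
  -- second equiv : E ≃ ker p × Q
  have hmem2 : ∀ y : ↥(LinearMap.ker p), ((y.1, 0) : ↥P × ↥Q) ∈ E := by
    intro y
    show p y.1 - q 0 = 0
    rw [map_zero, (y.2 : p y.1 = 0), sub_zero]
  set jp : ↥(LinearMap.ker p) →ₗ[R] ↥E :=
    LinearMap.codRestrict _ ((LinearMap.inl R ↥P ↥Q) ∘ₗ (LinearMap.ker p).subtype) hmem2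
  set sndE : ↥E →ₗ[R] ↥Q := (LinearMap.snd R ↥P ↥Q) ∘ₗ E.subtype
  have hjpinj : Function.Injective jp := by
    intro x y hxy
    exact Subtype.ext (congrArg Prod.fst (congrArg Subtype.val hxy))
  have hsndEs : Function.Surjective sndE := by
    intro y
    obtain ⟨x, hx⟩ := hps (q y)
    have hm : ((x, y) : ↥P × ↥Q) ∈ E := by
      show p x - q y = 0
      rw [hx, sub_self]
    exact ⟨⟨(x, y), hm⟩, rfl⟩
  have hexE2 : Function.Exact jp sndE := by
    intro z
    constructor
    · intro hz
      have h1 : z.1.2 = 0 := hz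
      have h2 : p z.1.1 - q z.1.2 = 0 := z.2
      rw [h1, map_zero, sub_zero] at h2
      exact ⟨⟨z.1.1, h2⟩, Subtype.ext (Prod.ext rfl h1.symm)⟩
    · rintro ⟨w, rfl⟩
      rfl
  obtain ⟨l2, hl2⟩ := section_of_proj hQ sndE hsndEs
  have e2 := equivOfSection jp sndE hjpinj hexE2 l2 hl2
  exact ⟨e2.symm.trans e1⟩

lemma extV_one_witness (k : ℕ) {M P₀ : ModuleCat.{u} R} (p₀ : P₀ →ₗ[R] M)
    (hP₀ : Module.Projective R ↥P₀) (hp₀ : Function.Surjective p₀)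
    (hk : ExtV R k (ModuleCat.of R (LinearMap.ker p₀))) : ExtV R (k+1) M := by
  intro P p hP hp
  obtain ⟨e⟩ := schanuel p p₀ hP hP₀ hp hp₀
  have h1 : ExtV R k (ModuleCat.of R (↥(LinearMap.ker p₀) × ↥P)) :=
    extV_sum_proj k _ _ hk hP
  have h2 : ExtV R k (ModuleCat.of R (↥(LinearMap.ker p) × ↥P₀)) :=
    extV_of_equiv k e.symm h1
  exact extV_summand k _ _ h2 hP₀

end schanuel
section les

variable {R : Type u} [Ring R]

lemma extV_les : ∀ (k : ℕ) (L E G : ModuleCat.{u} R) (ι : L →ₗ[R] E) (σ : E →ₗ[R] G),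
    Function.Injective ι → Function.Surjective σ → Function.Exact ι σ →
    ExtV R k E → ExtV R (k+1) G → ExtV R k L
  | 0, L, E, G, ι, σ, hι, hσ, he, hE, hG => by
    intro Q hQ F j f hj hf hexF
    obtain ⟨P', π, hP', hπ⟩ := exists_proj_surj E
    haveI := hP'
    have hσπ : Function.Surjective (σ ∘ₗ π) := hσ.comp hπ
    have hG0 : ExtV R 0 (ModuleCat.of R (LinearMap.ker (σ ∘ₗ π))) := hG P' (σ ∘ₗ π) hP' hσπ
    set P'' := LinearMap.ker (σ ∘ₗ π) with hP''def
    -- the induced surjection  πbar : P'' → L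
    have hrange : ∀ x : ↥P'', (π ∘ₗ P''.subtype) x ∈ LinearMap.range ι := by
      intro x
      obtain ⟨a, ha⟩ := (he (π x.1)).mp x.2
      exact ⟨a, ha⟩
    obtain ⟨πbar, hπbar⟩ := factor_through_injective ι hι (π ∘ₗ P''.subtype) hrange
    have hπbars : Function.Surjective πbar := by
      intro l
      obtain ⟨x, hx⟩ := hπ (ι l)
      have hm : x ∈ P'' := by
        show σ (π x) = 0
        rw [hx]
        exact he.apply_apply_eq_zero l
      refine ⟨⟨x, hm⟩, hι ?_⟩
      rw [hπbar]
      exact hx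
    -- lift  πbar  to F using  Ext¹(P'', Q) = 0  via pullback
    set dZ : (↥F × ↥P'') →ₗ[R] ↥L :=
      (f ∘ₗ LinearMap.fst R ↥F ↥P'') - (πbar ∘ₗ LinearMap.snd R ↥F ↥P'') with hdZ
    set Z := LinearMap.ker dZ with hZ
    have hmemjZ : ∀ q : ↥Q, ((j q, 0) : ↥F × ↥P'') ∈ Z := by
      intro q
      show f (j q) - πbar 0 = 0
      rw [map_zero, hexF.apply_apply_eq_zero q, sub_zero]
    set jZ : ↥Q →ₗ[R] ↥Z :=
      LinearMap.codRestrict _ ((LinearMap.inl R ↥F ↥P'') ∘ₗ j) (fun q => hmemjZ q) with hjZ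
    set sndZ : ↥Z →ₗ[R] ↥P'' := (LinearMap.snd R ↥F ↥P'') ∘ₗ Z.subtype with hsndZ
    have hjZval : ∀ q : ↥Q, (jZ q : ↥F × ↥P'') = (j q, 0) := fun q => rfl
    have hjZinj : Function.Injective jZ := by
      intro x y hxy
      have := congrArg Subtype.val hxy
      rw [hjZval, hjZval] at this
      exact hj (congrArg Prod.fst this)
    have hsndZs : Function.Surjective sndZ := by
      intro x
      obtain ⟨y, hy⟩ := hf (πbar x)
      have hm : ((y, x) : ↥F × ↥P'') ∈ Z := by
        show f y - πbar x = 0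
        rw [hy, sub_self]
      exact ⟨⟨(y, x), hm⟩, rfl⟩
    have hexZ : Function.Exact jZ sndZ := by
      intro z
      constructor
      · intro hz
        have h1 : z.1.2 = 0 := hz
        have h2 : f z.1.1 - πbar z.1.2 = 0 := z.2
        rw [h1, map_zero, sub_zero] at h2
        obtain ⟨q, hq⟩ := (hexF z.1.1).mp h2
        refine ⟨q, Subtype.ext ?_⟩
        rw [hjZval]
        exact Prod.ext hq h1.symm
      · rintro ⟨w, rfl⟩
        show (jZ w : ↥F × ↥P'').2 = 0
        rw [hjZval]
    obtain ⟨t, ht⟩ := hG0 Q hQ (ModuleCat.of R ↥Z) jZ sndZ hjZinj hsndZs hexZ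
    set u : ↥P'' →ₗ[R] ↥F := (LinearMap.fst R ↥F ↥P'') ∘ₗ Z.subtype ∘ₗ t with hu
    have hfu : ∀ x : ↥P'', f (u x) = πbar x := by
      intro x
      have hm : f (t x).1.1 - πbar (t x).1.2 = 0 := (t x).2
      have hx2 : (t x).1.2 = x := ht x
      rw [hx2] at hm
      have := sub_eq_zero.mp hm
      exact this
    -- restriction of u to ker π lands in the image of j
    have hle1 : LinearMap.ker π ≤ P'' := by
      intro x hx
      show σ (π x) = 0
      rw [(hx : π x = 0), map_zero]
    set incl1 : ↥(LinearMap.ker π) →ₗ[R] ↥P'' := Submodule.inclusion hle1 with hincl1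
    have hrange2 : ∀ x : ↥(LinearMap.ker π), (u ∘ₗ incl1) x ∈ LinearMap.range j := by
      intro x
      have h0 : ι (πbar (incl1 x)) = π x.1 := hπbar (incl1 x)
      have h1 : πbar (incl1 x) = 0 := by
        apply hι
        rw [h0, map_zero]
        exact x.2
      have h2 : f (u (incl1 x)) = 0 := by rw [hfu, h1]
      obtain ⟨q, hq⟩ := (hexF _).mp h2
      exact ⟨q, hq⟩
    obtain ⟨v, hv⟩ := factor_through_injective j hj (u ∘ₗ incl1) hrange2
    -- pushout  Y = (Q × P') / W
    set wmap : ↥(LinearMap.ker π) →ₗ[R] (↥Q × ↥P') :=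
      LinearMap.prod v (-((LinearMap.ker π).subtype)) with hwmap
    set W := LinearMap.range wmap with hW
    set Y := (↥Q × ↥P') ⧸ W with hY
    have hkillW : ∀ z ∈ W, (π ∘ₗ LinearMap.snd R ↥Q ↥P') z = 0 := by
      rintro z ⟨x, rfl⟩
      show π (-(x.1)) = 0
      rw [map_neg, (x.2 : π x.1 = 0), neg_zero]
    set πY : Y →ₗ[R] ↥E :=
      Submodule.liftQ W (π ∘ₗ LinearMap.snd R ↥Q ↥P') (fun z hz => hkillW z hz) with hπY
    set jY : ↥Q →ₗ[R] Y := W.mkQ ∘ₗ LinearMap.inl R ↥Q ↥P' with hjY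
    have hπYmk : ∀ z : ↥Q × ↥P', πY (Submodule.Quotient.mk z) = π z.2 := fun z => rfl
    have hjYinj : Function.Injective jY := by
      intro a b hab
      have hab' : (Submodule.Quotient.mk ((a, (0 : ↥P')) : ↥Q × ↥P') : Y) =
          Submodule.Quotient.mk ((b, (0 : ↥P')) : ↥Q × ↥P') := hab
      obtain ⟨x, hx⟩ := (Submodule.Quotient.eq W).mp hab'
      have hx2 : -((x : ↥P')) = (0 : ↥P') - (0 : ↥P') := congrArg Prod.snd hx
      rw [sub_zero] at hx2
      have hx0 : x = 0 := Subtype.ext (by rw [← neg_neg ((x : ↥P')), hx2, neg_zero]; rfl)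
      have hfst : v x = a - b := congrArg Prod.fst hx
      rw [hx0, map_zero] at hfst
      exact sub_eq_zero.mp hfst.symm
    have hπYs : Function.Surjective πY := by
      intro e
      obtain ⟨x, hx⟩ := hπ e
      exact ⟨Submodule.Quotient.mk ((0, x) : ↥Q × ↥P'), by rw [hπYmk]; exact hx⟩
    have hexY : Function.Exact jY πY := by
      intro z
      constructor
      · intro hz
        obtain ⟨⟨q, x⟩, rfl⟩ := Submodule.Quotient.mk_surjective W z
        have hx : x ∈ LinearMap.ker π := by
          rw [hπYmk] at hz
          exact hz
        refine ⟨q + v ⟨x, hx⟩, ?_⟩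
        show W.mkQ (q + v ⟨x, hx⟩, (0 : ↥P')) = Submodule.Quotient.mk (q, x)
        rw [show W.mkQ (q + v ⟨x, hx⟩, (0 : ↥P')) =
          Submodule.Quotient.mk ((q + v ⟨x, hx⟩, (0 : ↥P')) : ↥Q × ↥P') from rfl,
          Submodule.Quotient.eq]
        exact ⟨⟨x, hx⟩, by
          show (v ⟨x, hx⟩, -(x : ↥P')) =
            ((q + v ⟨x, hx⟩, (0 : ↥P')) : ↥Q × ↥P') - (q, x)
          refine Prod.ext ?_ ?_
          · show v ⟨x, hx⟩ = q + v ⟨x, hx⟩ - q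
            abel
          · show -(x : ↥P') = (0 : ↥P') - x
            abel⟩
      · rintro ⟨q, rfl⟩
        show πY (W.mkQ (q, (0 : ↥P'))) = 0
        rw [show W.mkQ (q, (0 : ↥P')) = Submodule.Quotient.mk ((q, (0 : ↥P')) : ↥Q × ↥P')
          from rfl, hπYmk]
        exact map_zero π
    obtain ⟨sY, hsY⟩ := hE Q hQ (ModuleCat.of R Y) jY πY hjYinj hπYs hexY
    -- extract w' : P' → Q
    set sY' : ↥E →ₗ[R] Y := sY with hsY'
    set m0 : ↥P' →ₗ[R] Y := W.mkQ ∘ₗ LinearMap.inr R ↥Q ↥P' - sY' ∘ₗ π with hm0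
    have hrange3 : ∀ x : ↥P', m0 x ∈ LinearMap.range jY := by
      intro x
      have h0 : πY (m0 x) = 0 := by
        show πY (W.mkQ (0, x) - sY' (π x)) = 0
        rw [map_sub]
        rw [show πY (sY' (π x)) = π x from hsY (π x)]
        rw [show W.mkQ ((0 : ↥Q), x) = Submodule.Quotient.mk (((0 : ↥Q), x) : ↥Q × ↥P')
          from rfl, hπYmk]
        exact sub_self _
      obtain ⟨q, hq⟩ := (hexY (m0 x)).mp h0
      exact ⟨q, hq⟩
    obtain ⟨w', hw'⟩ := factor_through_injective jY hjYinj m0 hrange3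
    have hw'N : ∀ (x : ↥P') (hx : x ∈ LinearMap.ker π), w' x = v ⟨x, hx⟩ := by
      intro x hx
      apply hjYinj
      rw [hw']
      show W.mkQ (0, x) - sY' (π x) = jY (v ⟨x, hx⟩)
      rw [(hx : π x = 0), map_zero, sub_zero]
      show Submodule.Quotient.mk (((0 : ↥Q), x) : ↥Q × ↥P') =
        Submodule.Quotient.mk ((v ⟨x, hx⟩, (0 : ↥P')) : ↥Q × ↥P')
      rw [Submodule.Quotient.eq]
      refine ⟨-⟨x, hx⟩, ?_⟩
      show (v (-⟨x, hx⟩), -((-⟨x, hx⟩ : ↥(LinearMap.ker π)) : ↥P')) =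
        (((0 : ↥Q), x) : ↥Q × ↥P') - (v ⟨x, hx⟩, (0 : ↥P'))
      refine Prod.ext ?_ ?_
      · show v (-⟨x, hx⟩) = (0 : ↥Q) - v ⟨x, hx⟩
        rw [map_neg, zero_sub]
      · show -(((-⟨x, hx⟩ : ↥(LinearMap.ker π)) : ↥P')) = x - 0
        rw [sub_zero]
        show -(-(x)) = x
        rw [neg_neg]
    -- corrected lift
    set u' : ↥P'' →ₗ[R] ↥F := u - j ∘ₗ w' ∘ₗ P''.subtype with hu'
    have hfu' : ∀ z : ↥P'', f (u' z) = πbar z := by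
      intro z
      show f (u z - j (w' z.1)) = πbar z
      rw [map_sub, hfu, hexF.apply_apply_eq_zero, sub_zero]
    have hkeru' : ∀ z : ↥P'', πbar z = 0 → u' z = 0 := by
      intro z hz
      have hπz : z.1 ∈ LinearMap.ker π := by
        show (π ∘ₗ P''.subtype) z = 0
        rw [← hπbar z, hz, map_zero]
      have hincl : incl1 ⟨z.1, hπz⟩ = z := Subtype.ext rfl
      show u z - j (w' z.1) = 0
      rw [hw'N z.1 hπz, hv]
      simp only [LinearMap.comp_apply]
      rw [hincl, sub_self]
    obtain ⟨s, hs⟩ := factor_through_surjective πbar hπbars u' hkeru'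
    refine ⟨s, fun l => ?_⟩
    obtain ⟨z, hz⟩ := hπbars l
    rw [← hz, hs z, hfu' z]
  | (k+1), L, E, G, ι, σ, hι, hσ, he, hE, hG => by
    intro PL pL hPL hpL
    obtain ⟨PG, πG, hPG, hπG⟩ := exists_proj_surj G
    haveI := hPG
    obtain ⟨h, hh⟩ := Module.projective_lifting_property σ πG hσ
    set g : (↥PL × ↥PG) →ₗ[R] ↥E :=
      (ι ∘ₗ pL ∘ₗ LinearMap.fst R ↥PL ↥PG) + (h ∘ₗ LinearMap.snd R ↥PL ↥PG) with hg
    have hgapply : ∀ w : ↥PL × ↥PG, g w = ι (pL w.1) + h w.2 := fun w => rfl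
    have hgs : Function.Surjective g := by
      intro e
      obtain ⟨t, ht⟩ := hπG (σ e)
      have h0 : σ (e - h t) = 0 := by
        have h2 := LinearMap.congr_fun hh t
        simp only [LinearMap.comp_apply] at h2
        rw [map_sub, h2, ht, sub_self]
      obtain ⟨a, ha⟩ := (he (e - h t)).mp h0
      obtain ⟨w, hw⟩ := hpL a
      exact ⟨(w, t), by rw [hgapply, hw, ha]; abel⟩
    have hB : ExtV R k (ModuleCat.of R (LinearMap.ker g)) :=
      hE (ModuleCat.of R (↥PL × ↥PG)) g (inferInstance : Module.Projective R (↥PL × ↥PG)) hgs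
    have hC : ExtV R (k+1) (ModuleCat.of R (LinearMap.ker πG)) := hG PG πG hPG hπG
    -- ses  0 → ker pL → ker g → ker πG → 0
    have hmema : ∀ x : ↥(LinearMap.ker pL), ((x.1, 0) : ↥PL × ↥PG) ∈ LinearMap.ker g := by
      intro x
      show ι (pL x.1) + h 0 = 0
      rw [(x.2 : pL x.1 = 0), map_zero, map_zero, add_zero]
    set aMap : ↥(LinearMap.ker pL) →ₗ[R] ↥(LinearMap.ker g) :=
      LinearMap.codRestrict _ ((LinearMap.inl R ↥PL ↥PG) ∘ₗ (LinearMap.ker pL).subtype) hmema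
    have hmemb : ∀ z : ↥(LinearMap.ker g), z.1.2 ∈ LinearMap.ker πG := by
      intro z
      have h0 : σ (g z.1) = 0 := by rw [(z.2 : g z.1 = 0), map_zero]
      rw [hgapply, map_add] at h0
      have h1 : σ (ι (pL z.1.1)) = 0 := he.apply_apply_eq_zero _
      have h2 := LinearMap.congr_fun hh z.1.2
      simp only [LinearMap.comp_apply] at h2
      rw [h1, zero_add, h2] at h0
      exact h0
    set bMap : ↥(LinearMap.ker g) →ₗ[R] ↥(LinearMap.ker πG) :=
      LinearMap.codRestrict _ ((LinearMap.snd R ↥PL ↥PG) ∘ₗ (LinearMap.ker g).subtype) hmemb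
    have hainj : Function.Injective aMap := by
      intro x y hxy
      exact Subtype.ext (congrArg Prod.fst (congrArg Subtype.val hxy))
    have hbsurj : Function.Surjective bMap := by
      rintro ⟨t, ht⟩
      have h0 : σ (h t) = 0 := by
        have h2 := LinearMap.congr_fun hh t
        simp only [LinearMap.comp_apply] at h2
        rw [h2, (ht : πG t = 0)]
      obtain ⟨a, ha⟩ := (he (h t)).mp h0
      obtain ⟨w, hw⟩ := hpL a
      have hmem : ((-w, t) : ↥PL × ↥PG) ∈ LinearMap.ker g := by
        show ι (pL (-w)) + h t = 0
        rw [map_neg, hw, map_neg, ha]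
        abel
      exact ⟨⟨(-w, t), hmem⟩, Subtype.ext rfl⟩
    have hexact : Function.Exact aMap bMap := by
      intro z
      constructor
      · intro hz
        have ht : z.1.2 = 0 := congrArg Subtype.val hz
        have hz0 : g z.1 = 0 := z.2
        rw [hgapply, ht, map_zero, add_zero] at hz0
        have hpA : pL z.1.1 = 0 := hι (by rw [hz0, map_zero])
        exact ⟨⟨z.1.1, hpA⟩, Subtype.ext (Prod.ext rfl ht.symm)⟩
      · rintro ⟨w, rfl⟩
        exact Subtype.ext rfl
    exact extV_les k (ModuleCat.of R (LinearMap.ker pL)) (ModuleCat.of R (LinearMap.ker g))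
      (ModuleCat.of R (LinearMap.ker πG)) aMap bMap hainj hbsurj hexact hB hC

end les
section gp

variable {R : Type u} [Ring R]

lemma extV_ker_d (P : ℤ → ModuleCat.{u} R) (d : ∀ i : ℤ, P i →ₗ[R] P (i+1))
    (hproj : ∀ i, Module.Projective R (P i))
    (hexact : ∀ i, Function.Exact (d i) (d (i+1)))
    (hlift : ∀ (Q : ModuleCat.{u} R), Module.Projective R Q →
      ∀ (i : ℤ) (f : P (i+1) →ₗ[R] Q), f ∘ₗ d i = 0 →
        ∃ g : P (i+1+1) →ₗ[R] Q, g ∘ₗ d (i+1) = f) :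
    ∀ (k : ℕ) (i : ℤ), ExtV R k (ModuleCat.of R (LinearMap.ker (d i))) := by
  have hdd : ∀ (a : ℤ) (x : ↥(P a)), d (a+1) (d a x) = 0 := fun a x =>
    (hexact a (d a x)).mpr ⟨x, rfl⟩
  intro k
  induction k with
  | zero =>
    intro i
    obtain ⟨i3, rfl⟩ : ∃ j', i = j' + 1 + 1 + 1 := ⟨i - 3, by ring⟩
    intro Q hQ E0 j ρ hj hρ hexE
    -- canonical surjection c : P (i3+1+1) → ker (d (i3+1+1+1))
    have hmemc : ∀ x : ↥(P (i3+1+1)), d (i3+1+1) x ∈ LinearMap.ker (d (i3+1+1+1)) :=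
      fun x => hdd _ x
    set c : ↥(P (i3+1+1)) →ₗ[R] ↥(LinearMap.ker (d (i3+1+1+1))) :=
      LinearMap.codRestrict _ (d (i3+1+1)) hmemc with hc
    have hcs : Function.Surjective c := by
      rintro ⟨y, hy⟩
      obtain ⟨x, hx⟩ := (hexact (i3+1+1) y).mp hy
      exact ⟨x, Subtype.ext hx⟩
    -- lift c along ρ
    haveI := hproj (i3+1+1)
    obtain ⟨f, hf⟩ := Module.projective_lifting_property ρ c hρ
    have hfapp : ∀ x, ρ (f x) = c x := fun x => LinearMap.congr_fun hf x
    -- f ∘ d lands in the image of j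
    have hrange : ∀ x : ↥(P (i3+1)), (f ∘ₗ d (i3+1)) x ∈ LinearMap.range j := by
      intro x
      have h0 : ρ (f (d (i3+1) x)) = 0 := by
        rw [hfapp]
        exact Subtype.ext (hdd (i3+1) x)
      obtain ⟨q, hq⟩ := (hexE _).mp h0
      exact ⟨q, hq⟩
    obtain ⟨g, hg⟩ := factor_through_injective j hj (f ∘ₗ d (i3+1)) hrange
    -- g ∘ d = 0, so g extends by completeness
    have hg0 : g ∘ₗ d i3 = 0 := by
      apply LinearMap.ext
      intro x
      apply hj
      have := hg (d i3 x)
      simp only [LinearMap.comp_apply] at this ⊢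
      rw [this, hdd i3 x, map_zero]; simp
    obtain ⟨h', hh'⟩ := hlift Q hQ i3 g hg0
    set uu : ↥(P (i3+1+1)) →ₗ[R] ↥E0 := f - j ∘ₗ h' with huu
    have hker : ∀ x, c x = 0 → uu x = 0 := by
      intro x hx
      have hx' : d (i3+1+1) x = 0 := congrArg Subtype.val hx
      obtain ⟨w, hw⟩ := (hexact (i3+1) x).mp hx'
      show f x - j (h' x) = 0
      rw [← hw]
      have h1 : h' (d (i3+1) w) = g w := LinearMap.congr_fun hh' w
      have h2 : j (g w) = f (d (i3+1) w) := hg w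
      rw [h1, h2, sub_self]
    obtain ⟨s, hs⟩ := factor_through_surjective c hcs uu hker
    refine ⟨s, fun m => ?_⟩
    obtain ⟨x, hx⟩ := hcs m
    have h3 : ρ (uu x) = c x := by
      show ρ (f x - j (h' x)) = c x
      rw [map_sub, hfapp, hexE.apply_apply_eq_zero, sub_zero]
    have h4 := congrArg ρ (hs x)
    rw [← hx]
    exact h4.trans h3
  | succ k ih =>
    intro i
    obtain ⟨i1, rfl⟩ : ∃ j', i = j' + 1 := ⟨i - 1, by ring⟩
    have hmemc : ∀ x : ↥(P i1), d i1 x ∈ LinearMap.ker (d (i1+1)) := fun x => hdd _ x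
    set c : ↥(P i1) →ₗ[R] ↥(LinearMap.ker (d (i1+1))) :=
      LinearMap.codRestrict _ (d i1) hmemc with hc
    have hcs : Function.Surjective c := by
      rintro ⟨y, hy⟩
      obtain ⟨x, hx⟩ := (hexact i1 y).mp hy
      exact ⟨x, Subtype.ext hx⟩
    have hkerc : LinearMap.ker c = LinearMap.ker (d i1) := by
      ext x
      constructor
      · intro hx
        exact congrArg Subtype.val (hx : c x = 0)
      · intro hx
        exact Subtype.ext (hx : d i1 x = 0)
    have hV : ExtV R k (ModuleCat.of R (LinearMap.ker c)) := by
      rw [hkerc]; exact ih i1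
    exact extV_one_witness k (M := ModuleCat.of R (LinearMap.ker (d (i1+1)))) (P₀ := P i1)
      c (hproj i1) hcs hV

lemma extV_of_gp {M : ModuleCat.{u} R} (h : IsGorensteinProjective R M) (k : ℕ) :
    ExtV R k M := by
  obtain ⟨P, d, hproj, hexact, hlift, ⟨e⟩⟩ := h
  exact extV_of_equiv k e.symm (extV_ker_d P d hproj hexact hlift k 0)

lemma extV_of_gpd : ∀ (n : ℕ) (M : ModuleCat.{u} R), GpdLE R n M → ExtV R n M
  | 0, M, h => extV_of_gp h 0
  | (n+1), M, h => by
    obtain ⟨G, q, hG, hqs, hK⟩ := h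
    intro P p hP hp
    set dE : (↥G × ↥P) →ₗ[R] ↥M :=
      (q ∘ₗ LinearMap.fst R ↥G ↥P) - (p ∘ₗ LinearMap.snd R ↥G ↥P) with hdE
    set E := LinearMap.ker dE with hEdef
    -- split ses 0 → ker q → E → P → 0
    have hmemK : ∀ x : ↥(LinearMap.ker q), ((x.1, 0) : ↥G × ↥P) ∈ E := by
      intro x
      show q x.1 - p 0 = 0
      rw [(x.2 : q x.1 = 0), map_zero, sub_zero]
    set jK : ↥(LinearMap.ker q) →ₗ[R] ↥E :=
      LinearMap.codRestrict _ ((LinearMap.inl R ↥G ↥P) ∘ₗ (LinearMap.ker q).subtype) hmemK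
    set πP : ↥E →ₗ[R] ↥P := (LinearMap.snd R ↥G ↥P) ∘ₗ E.subtype
    have hjKinj : Function.Injective jK := fun x y hxy =>
      Subtype.ext (congrArg Prod.fst (congrArg Subtype.val hxy))
    have hπPs : Function.Surjective πP := by
      intro x
      obtain ⟨g, hg⟩ := hqs (p x)
      have hm : ((g, x) : ↥G × ↥P) ∈ E := by
        show q g - p x = 0
        rw [hg, sub_self]
      exact ⟨⟨(g, x), hm⟩, rfl⟩
    have hexKP : Function.Exact jK πP := by
      intro z
      constructor
      · intro hz
        have h1 : z.1.2 = 0 := hz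
        have h2 : q z.1.1 - p z.1.2 = 0 := z.2
        rw [h1, map_zero, sub_zero] at h2
        exact ⟨⟨z.1.1, h2⟩, Subtype.ext (Prod.ext rfl h1.symm)⟩
      · rintro ⟨w, rfl⟩
        rfl
    obtain ⟨lP, hlP⟩ := section_of_proj hP πP hπPs
    have eE := equivOfSection jK πP hjKinj hexKP lP hlP
    have hEext : ExtV R n (ModuleCat.of R ↥E) :=
      extV_of_equiv n eE.symm (extV_sum_proj n _ _ (extV_of_gpd n _ hK) hP)
    -- ses 0 → ker p → E → G → 0
    have hmemL : ∀ x : ↥(LinearMap.ker p), ((0, x.1) : ↥G × ↥P) ∈ E := by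
      intro x
      show q 0 - p x.1 = 0
      rw [map_zero, (x.2 : p x.1 = 0), sub_zero]
    set jL : ↥(LinearMap.ker p) →ₗ[R] ↥E :=
      LinearMap.codRestrict _ ((LinearMap.inr R ↥G ↥P) ∘ₗ (LinearMap.ker p).subtype) hmemL
    set πG : ↥E →ₗ[R] ↥G := (LinearMap.fst R ↥G ↥P) ∘ₗ E.subtype
    have hjLinj : Function.Injective jL := fun x y hxy =>
      Subtype.ext (congrArg Prod.snd (congrArg Subtype.val hxy))
    have hπGs : Function.Surjective πG := by
      intro g
      obtain ⟨x, hx⟩ := hp (q g)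
      have hm : ((g, x) : ↥G × ↥P) ∈ E := by
        show q g - p x = 0
        rw [hx, sub_self]
      exact ⟨⟨(g, x), hm⟩, rfl⟩
    have hexLG : Function.Exact jL πG := by
      intro z
      constructor
      · intro hz
        have h1 : z.1.1 = 0 := hz
        have h2 : q z.1.1 - p z.1.2 = 0 := z.2
        rw [h1, map_zero, zero_sub, neg_eq_zero] at h2
        exact ⟨⟨z.1.2, h2⟩, Subtype.ext (Prod.ext h1.symm rfl)⟩
      · rintro ⟨w, rfl⟩
        rfl
    exact extV_les n (ModuleCat.of R (LinearMap.ker p)) (ModuleCat.of R ↥E) G jL πG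
      hjLinj hπGs hexLG hEext (extV_of_gp hG (n+1))

lemma pd_of_extV : ∀ (n : ℕ) (M : ModuleCat.{u} R), ExtV R n M → pdLE R (n+1) M → pdLE R n M
  | 0, M, hx, hpd => by
    obtain ⟨P, p, hP, hps, hk⟩ := hpd
    have hexact : Function.Exact (LinearMap.ker p).subtype p := by
      intro y
      exact ⟨fun hy => ⟨⟨y, hy⟩, rfl⟩, fun ⟨a, ha⟩ => ha ▸ a.2⟩
    obtain ⟨s, hs⟩ := hx (ModuleCat.of R (LinearMap.ker p)) hk P (LinearMap.ker p).subtype p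
      (Submodule.injective_subtype _) hps hexact
    haveI := hP
    exact Module.Projective.of_split s p (LinearMap.ext hs)
  | (n+1), M, hx, hpd => by
    obtain ⟨P, p, hP, hps, hk⟩ := hpd
    exact ⟨P, p, hP, hps, pd_of_extV n _ (hx P p hP hps) hk⟩

end gp
section assembly

variable {R : Type u} [Ring R]

lemma exact_ker_subtype {A B : Type u} [AddCommGroup A] [Module R A] [AddCommGroup B]
    [Module R B] (f : A →ₗ[R] B) : Function.Exact (LinearMap.ker f).subtype f :=
  fun y => ⟨fun hy => ⟨⟨y, hy⟩, rfl⟩, fun ⟨a, ha⟩ => ha ▸ a.2⟩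

lemma pd_quot (n : ℕ) (X Y Z : ModuleCat.{u} R) (i : X →ₗ[R] Y) (p : Y →ₗ[R] Z)
    (hi : Function.Injective i) (hp : Function.Surjective p) (he : Function.Exact i p)
    (hX : pdLE R n X) (hY : pdLE R n Y) : pdLE R (n+1) Z := by
  obtain ⟨P, π, hP, hπs, hπk⟩ := pd_syzygy' n Y hY
  refine ⟨P, p ∘ₗ π, hP, hp.comp hπs, ?_⟩
  set N := LinearMap.ker (p ∘ₗ π) with hNdef
  have hle : LinearMap.ker π ≤ N := fun x hx => by
    show p (π x) = 0
    rw [(hx : π x = 0), map_zero]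
  set incl : ↥(LinearMap.ker π) →ₗ[R] ↥N := Submodule.inclusion hle with hincl
  have hrange : ∀ z : ↥N, (π ∘ₗ N.subtype) z ∈ LinearMap.range i := by
    intro z
    obtain ⟨a, ha⟩ := (he (π z.1)).mp z.2
    exact ⟨a, ha⟩
  obtain ⟨ψ, hψ⟩ := factor_through_injective i hi (π ∘ₗ N.subtype) hrange
  have hψs : Function.Surjective ψ := by
    intro x
    obtain ⟨w, hw⟩ := hπs (i x)
    have hm : w ∈ N := by
      show p (π w) = 0
      rw [hw, he.apply_apply_eq_zero]
    refine ⟨⟨w, hm⟩, hi ?_⟩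
    rw [hψ]
    exact hw
  have hincinj : Function.Injective incl := Submodule.inclusion_injective hle
  have hex : Function.Exact incl ψ := by
    intro z
    constructor
    · intro hz
      have h0 := hψ z
      rw [hz, map_zero] at h0
      exact ⟨⟨z.1, h0.symm⟩, Subtype.ext rfl⟩
    · rintro ⟨w, rfl⟩
      apply hi
      rw [hψ]
      show π w.1 = i 0
      rw [map_zero]
      exact w.2
  exact pd_ses_middle n (ModuleCat.of R ↥(LinearMap.ker π)) (ModuleCat.of R ↥N) X incl ψ
    hincinj hψs hex hπk hX

lemma pd_sub (n : ℕ) (X Y Z : ModuleCat.{u} R) (i : X →ₗ[R] Y) (p : Y →ₗ[R] Z)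
    (hi : Function.Injective i) (hp : Function.Surjective p) (he : Function.Exact i p)
    (hY : pdLE R n Y) (hZ : pdLE R n Z) : pdLE R n X := by
  obtain ⟨PZ, pZ, hPZ, hpZs, hpZk⟩ := pd_syzygy' n Z hZ
  haveI := hPZ
  obtain ⟨h, hh⟩ := Module.projective_lifting_property p pZ hp
  set φ : (↥X × ↥PZ) →ₗ[R] ↥Y :=
    (i ∘ₗ LinearMap.fst R ↥X ↥PZ) + (h ∘ₗ LinearMap.snd R ↥X ↥PZ) with hφ
  have hφapply : ∀ w : ↥X × ↥PZ, φ w = i w.1 + h w.2 := fun w => rfl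
  have hφs : Function.Surjective φ := by
    intro y
    obtain ⟨t, ht⟩ := hpZs (p y)
    have h0 : p (y - h t) = 0 := by
      have h2 := LinearMap.congr_fun hh t
      simp only [LinearMap.comp_apply] at h2
      rw [map_sub, h2, ht, sub_self]
    obtain ⟨a, ha⟩ := (he (y - h t)).mp h0
    exact ⟨(a, t), by rw [hφapply, ha]; abel⟩
  have hmem : ∀ z : ↥(LinearMap.ker φ), z.1.2 ∈ LinearMap.ker pZ := by
    intro z
    have h0 : p (φ z.1) = 0 := by rw [(z.2 : φ z.1 = 0), map_zero]
    rw [hφapply, map_add] at h0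
    have h1 : p (i z.1.1) = 0 := he.apply_apply_eq_zero _
    have h2 := LinearMap.congr_fun hh z.1.2
    simp only [LinearMap.comp_apply] at h2
    rw [h1, zero_add, h2] at h0
    exact h0
  set ψK : ↥(LinearMap.ker φ) →ₗ[R] ↥(LinearMap.ker pZ) :=
    LinearMap.codRestrict _ ((LinearMap.snd R ↥X ↥PZ) ∘ₗ (LinearMap.ker φ).subtype) hmem
    with hψK
  have hbij : Function.Bijective ψK := by
    constructor
    · intro z w hzw
      have h2 : z.1.2 = w.1.2 := congrArg Subtype.val hzw
      have hz0 : i z.1.1 + h z.1.2 = 0 := z.2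
      have hw0 : i w.1.1 + h w.1.2 = 0 := w.2
      rw [h2] at hz0
      have hiz : i z.1.1 = i w.1.1 := add_right_cancel (hz0.trans hw0.symm)
      exact Subtype.ext (Prod.ext (hi hiz) h2)
    · rintro ⟨t, ht⟩
      have h0 : p (h t) = 0 := by
        have h2 := LinearMap.congr_fun hh t
        simp only [LinearMap.comp_apply] at h2
        rw [h2, (ht : pZ t = 0)]
      obtain ⟨a, ha⟩ := (he (h t)).mp h0
      have hm : ((-a, t) : ↥X × ↥PZ) ∈ LinearMap.ker φ := by
        show i (-a) + h t = 0
        rw [map_neg, ha]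
        abel
      exact ⟨⟨(-a, t), hm⟩, Subtype.ext rfl⟩
  have e := LinearEquiv.ofBijective ψK hbij
  have h1 : pdLE R n (ModuleCat.of R ↥(LinearMap.ker φ)) := pd_of_equiv n e.symm hpZk
  have h2 : pdLE R n (ModuleCat.of R (↥X × ↥PZ)) :=
    pd_ses_middle n (ModuleCat.of R ↥(LinearMap.ker φ)) (ModuleCat.of R (↥X × ↥PZ)) Y
      (LinearMap.ker φ).subtype φ (Submodule.injective_subtype _) hφs
      (exact_ker_subtype φ) h1 hY
  exact pd_summand n ↥X ↥PZ h2 hPZ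

end assembly
/-- For any ring `R` and `n ≥ 0`, the class `P_n` is thick inside `GP_n`:
in a short exact sequence of modules of Gorenstein projective dimension `≤ n`,
if two of the three terms have projective dimension `≤ n`, then so does the third. -/
theorem pn_thick_in_gpn (R : Type u) [Ring R] (n : ℕ) (X Y Z : ModuleCat.{u} R)
    (i : X →ₗ[R] Y) (p : Y →ₗ[R] Z)
    (hi : Function.Injective i) (hp : Function.Surjective p) (he : Function.Exact i p)
    (hX : GpdLE R n X) (hY : GpdLE R n Y) (hZ : GpdLE R n Z) :
    (pdLE R n X → pdLE R n Y → pdLE R n Z) ∧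
    (pdLE R n X → pdLE R n Z → pdLE R n Y) ∧
    (pdLE R n Y → pdLE R n Z → pdLE R n X) := by
  refine ⟨?_, ?_, ?_⟩
  · intro hXpd hYpd
    exact pd_of_extV n Z (extV_of_gpd n Z hZ) (pd_quot n X Y Z i p hi hp he hXpd hYpd)
  · intro hXpd hZpd
    exact pd_ses_middle n X Y Z i p hi hp he hXpd hZpd
  · intro hYpd hZpd
    exact pd_sub n X Y Z i p hi hp he hYpd hZpd
end

section
/- Let R be a ring and M a Gorenstein projective left R-module of finite projective dimension. Then M is projective. -/
universe u

open CategoryTheory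

section Aux

variable {R : Type u} [Ring R]

/-- `pdLE` is invariant under linear isomorphism. -/
lemma pdLE_of_equiv : ∀ (n : ℕ) (M N : ModuleCat.{u} R), (M ≃ₗ[R] N) → pdLE R n M → pdLE R n N := by
  intro n
  induction n with
  | zero =>
    intro M N e h
    haveI : Module.Projective R M := h
    exact Module.Projective.of_equiv e
  | succ n ih =>
    intro M N e h
    obtain ⟨P, p, hP, hsurj, hker⟩ :
        ∃ (P : ModuleCat.{u} R) (p : P →ₗ[R] M),
          Module.Projective R P ∧ Function.Surjective p ∧
            pdLE R n (ModuleCat.of R (LinearMap.ker p)) := h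
    refine ⟨P, e.toLinearMap ∘ₗ p, hP, e.surjective.comp hsurj, ?_⟩
    have hk : LinearMap.ker (e.toLinearMap ∘ₗ p) = LinearMap.ker p := by
      rw [LinearMap.ker_comp, LinearMap.ker_eq_bot.mpr e.injective, Submodule.comap_bot]
    exact ih _ _ (LinearEquiv.ofEq _ _ hk.symm) hker

variable (P : ℤ → ModuleCat.{u} R) (d : ∀ i : ℤ, P i →ₗ[R] P (i+1))

/-- The base case: lifting against a projective target, restated with a kernel condition
so that it applies at an arbitrary index. -/
lemma lift_of_projective
    (hlift : ∀ (Q : ModuleCat.{u} R), Module.Projective R Q →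
      ∀ (i : ℤ) (f : P (i+1) →ₗ[R] Q), f ∘ₗ d i = 0 →
        ∃ g : P (i+1+1) →ₗ[R] Q, g ∘ₗ d (i+1) = f)
    (hd2 : ∀ (i : ℤ) (x : P i), d (i+1) (d i x) = 0)
    (Q : ModuleCat.{u} R) (hQ : Module.Projective R Q)
    (j : ℤ) (f : P j →ₗ[R] Q) (hf : ∀ x : P j, d j x = 0 → f x = 0) :
    ∃ g : P (j+1) →ₗ[R] Q, g ∘ₗ d j = f := by
  obtain ⟨i, rfl⟩ : ∃ i : ℤ, j = i + 1 := ⟨j - 1, by ring⟩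
  refine hlift Q hQ i f ?_
  ext x
  exact hf (d i x) (hd2 i x)

/-- The key induction: lifting against any target of projective dimension at most `n`. -/
lemma lift_of_pdLE
    (hproj : ∀ i, Module.Projective R (P i))
    (hexact : ∀ i, Function.Exact (d i) (d (i+1)))
    (hlift : ∀ (Q : ModuleCat.{u} R), Module.Projective R Q →
      ∀ (i : ℤ) (f : P (i+1) →ₗ[R] Q), f ∘ₗ d i = 0 →
        ∃ g : P (i+1+1) →ₗ[R] Q, g ∘ₗ d (i+1) = f) :
    ∀ (n : ℕ) (L : ModuleCat.{u} R), pdLE R n L →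
      ∀ (j : ℤ) (f : P j →ₗ[R] L), (∀ x : P j, d j x = 0 → f x = 0) →
        ∃ g : P (j+1) →ₗ[R] L, g ∘ₗ d j = f := by
  have hd2 : ∀ (i : ℤ) (x : P i), d (i+1) (d i x) = 0 :=
    fun i x => (hexact i (d i x)).mpr ⟨x, rfl⟩
  intro n
  induction n with
  | zero =>
    intro L hL
    exact lift_of_projective P d hlift hd2 L (hL : Module.Projective R L)
  | succ n ih =>
    intro L hL j f hf
    obtain ⟨P', p, hP', hsurj, hker⟩ :
        ∃ (P' : ModuleCat.{u} R) (p : P' →ₗ[R] L),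
          Module.Projective R P' ∧ Function.Surjective p ∧
            pdLE R n (ModuleCat.of R (LinearMap.ker p)) := hL
    obtain ⟨i, rfl⟩ : ∃ i : ℤ, j = i + 1 := ⟨j - 1, by ring⟩
    -- lift `f` along the surjection `p : P' → L`
    haveI : Module.Projective R (P (i+1)) := hproj (i+1)
    obtain ⟨f₁, hf₁⟩ := Module.projective_lifting_property p f hsurj
    -- `f₁ ∘ d i` lands in `ker p`
    have hmem : ∀ x : P i, f₁ (d i x) ∈ LinearMap.ker p := by
      intro x
      have h1 : p (f₁ (d i x)) = f (d i x) := LinearMap.congr_fun hf₁ (d i x)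
      have h2 : f (d i x) = 0 := hf (d i x) (hd2 i x)
      rw [LinearMap.mem_ker, h1, h2]
    set k : P i →ₗ[R] ModuleCat.of R ↥(LinearMap.ker p) :=
      (f₁ ∘ₗ d i).codRestrict (LinearMap.ker p) hmem with hk
    have hkker : ∀ x : P i, d i x = 0 → k x = 0 := by
      intro x hx
      apply Subtype.ext
      show f₁ (d i x) = (0 : P')
      rw [hx, map_zero]
    obtain ⟨g₁, hg₁⟩ := ih (ModuleCat.of R ↥(LinearMap.ker p)) hker i k hkker
    set f₂ : P (i+1) →ₗ[R] P' := f₁ - (LinearMap.ker p).subtype ∘ₗ g₁ with hf₂def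
    have hf₂ : ∀ x : P (i+1), d (i+1) x = 0 → f₂ x = 0 := by
      intro x hx
      obtain ⟨y, rfl⟩ := (hexact i x).mp hx
      rw [hf₂def]
      exact sub_eq_zero_of_eq
        (congrArg (LinearMap.ker p).subtype (LinearMap.congr_fun hg₁ y)).symm
    obtain ⟨g₂, hg₂⟩ := lift_of_projective P d hlift hd2 P' hP' (i+1) f₂ hf₂
    refine ⟨p ∘ₗ g₂, ?_⟩
    have h3 : p ∘ₗ f₂ = f := by
      rw [hf₂def]
      ext x
      simp only [LinearMap.comp_apply, LinearMap.sub_apply, map_sub]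
      exact (congrArg₂ Sub.sub (LinearMap.congr_fun hf₁ x)
        (LinearMap.mem_ker.mp (g₁ x).2)).trans (sub_zero (f x))
    rw [LinearMap.comp_assoc, hg₂, h3]

end Aux

/-- A Gorenstein projective module of finite projective dimension is projective. -/
theorem gorensteinProjective_finite_pd_projective (R : Type u) [Ring R]
    (M : ModuleCat.{u} R) (hGP : IsGorensteinProjective R M)
    (n : ℕ) (hpd : pdLE R n M) :
    Module.Projective R M := by
  obtain ⟨P, d, hproj, hexact, hlift, ⟨e⟩⟩ := hGP
  have hd2 : ∀ (i : ℤ) (x : P i), d (i+1) (d i x) = 0 :=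
    fun i x => (hexact i (d i x)).mpr ⟨x, rfl⟩
  have hpdG : pdLE R n (ModuleCat.of R ↥(LinearMap.ker (d 0))) :=
    pdLE_of_equiv n M (ModuleCat.of R ↥(LinearMap.ker (d 0))) e hpd
  -- corestriction of `d (-1)` to `ker (d 0)`
  have hmem : ∀ x : P (-1), d (-1) x ∈ LinearMap.ker (d 0) := by
    intro x
    exact hd2 (-1) x
  set f : P (-1) →ₗ[R] ModuleCat.of R ↥(LinearMap.ker (d 0)) :=
    (d (-1)).codRestrict (LinearMap.ker (d 0)) hmem with hf
  have hfker : ∀ x : P (-1), d (-1) x = 0 → f x = 0 := by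
    intro x hx
    apply Subtype.ext
    show d (-1) x = (0 : P ((-1 : ℤ)+1))
    exact hx
  obtain ⟨g, hg⟩ := lift_of_pdLE P d hproj hexact hlift n
    (ModuleCat.of R ↥(LinearMap.ker (d 0))) hpdG (-1) f hfker
  -- `g` is a retraction of the inclusion `ker (d 0) → P 0`
  have hr : ∀ y : LinearMap.ker (d 0), g y.1 = y := by
    intro y
    obtain ⟨x, hx⟩ := (hexact (-1) (show (P ((-1:ℤ)+1) : Type u) from y.1)).mp
      (LinearMap.mem_ker.mp y.2)
    have h1 : g (d (-1) x) = f x := LinearMap.congr_fun hg x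
    exact Subtype.ext ((congrArg Subtype.val ((congrArg g hx).symm.trans h1)).trans hx)
  have hrcomp : g ∘ₗ (LinearMap.ker (d 0)).subtype = LinearMap.id :=
    LinearMap.ext fun y => hr y
  haveI : Module.Projective R (P ((-1 : ℤ) + 1)) := hproj _
  have hker_proj : Module.Projective R ↥(LinearMap.ker (d 0)) :=
    Module.Projective.of_split (LinearMap.ker (d 0)).subtype g hrcomp
  exact Module.Projective.of_equiv (M := ↥(LinearMap.ker (d 0))) e.symm
end

section
/- Let R be a ring, n ≥ 0, and M a module with Gorenstein projective dimension at most n (n ≥ 1). Then there is a short exact sequence 0 → K → G → M → 0 with G Gorenstein projective and K of projective dimension at most n − 1, which remains exact after applying Hom_R(-, X) for every module X with Ext¹_R(L, X) = 0 for all L of projective dimension ≤ n. -/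
universe u

open CategoryTheory

namespace GPAux
open LinearMap Submodule Function
variable {R : Type u} [Ring R]

/-- `Ext¹(B,Q)=0` in "extend maps along monos with cokernel `B`" form. -/
def Lifts (R : Type u) [Ring R] (B Q : ModuleCat.{u} R) : Prop :=
  ∀ (M N : ModuleCat.{u} R) (m : M →ₗ[R] N) (c : N →ₗ[R] B),
    Function.Injective m → Function.Surjective c → Function.Exact m c →
    ∀ φ : M →ₗ[R] Q, ∃ ψ : N →ₗ[R] Q, ψ ∘ₗ m = φ

theorem factor_surj {A B C : Type u} [AddCommGroup A] [Module R A] [AddCommGroup B] [Module R B]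
    [AddCommGroup C] [Module R C] (p : A →ₗ[R] B) (hp : Function.Surjective p)
    (f : A →ₗ[R] C) (h : ∀ a, p a = 0 → f a = 0) : ∃ g : B →ₗ[R] C, g.comp p = f := by
  have h' : ker p ≤ ker f := fun a ha => h a ha
  set e := p.quotKerEquivOfSurjective hp with he
  have hes : ∀ a, e.symm (p a) = Submodule.Quotient.mk a := by
    intro a
    apply e.injective
    rw [e.apply_symm_apply]
    rfl
  refine ⟨(Submodule.liftQ (ker p) f h').comp e.symm.toLinearMap, ?_⟩
  ext a
  simp [hes a]

end GPAux
namespace GPAux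
open LinearMap Submodule Function
variable {R : Type u} [Ring R]

theorem ext1_to_lifts {B Q : ModuleCat.{u} R} (h : Ext1Vanishes R B Q) : Lifts R B Q := by
  intro M N m c hm hc hex φ
  classical
  -- pushout D = (Q × N) ⧸ T
  set T : Submodule R (↥Q × ↥N) := LinearMap.range (LinearMap.prod φ (-m)) with hT
  let D : ModuleCat.{u} R := ModuleCat.of R ((↥Q × ↥N) ⧸ T)
  let ι : ↥Q →ₗ[R] ↥D := T.mkQ.comp (LinearMap.inl R ↥Q ↥N)
  let ν : ↥N →ₗ[R] ↥D := T.mkQ.comp (LinearMap.inr R ↥Q ↥N)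
  have hmemT : ∀ x : ↥M, (φ x, -m x) ∈ T := by
    intro x; exact ⟨x, rfl⟩
  have hπ0 : ∀ z ∈ T, c z.2 = (0 : ↥B) := by
    rintro z ⟨x, rfl⟩
    simp only [LinearMap.prod_apply, Function.prod, LinearMap.neg_apply]
    rw [map_neg]
    have : c (m x) = 0 := (hex (m x)).mpr ⟨x, rfl⟩
    rw [this, neg_zero]
  let π : ↥D →ₗ[R] ↥B := T.liftQ (c.comp (LinearMap.snd R ↥Q ↥N)) (fun z hz => hπ0 z hz)
  have hπmk : ∀ q x, π (T.mkQ (q, x)) = c x := fun q x => rfl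
  have hι : Function.Injective ι := by
    rw [← LinearMap.ker_eq_bot]
    rw [Submodule.eq_bot_iff]
    intro q hq
    have : ((q, (0:↥N)) : ↥Q × ↥N) ∈ T := by
      rw [← Submodule.Quotient.mk_eq_zero T]
      exact hq
    obtain ⟨x, hx⟩ := this
    have hx1 : φ x = q := congrArg Prod.fst hx
    have hx2 : -m x = 0 := congrArg Prod.snd hx
    have : x = 0 := hm (by simpa using neg_eq_zero.mp hx2)
    rw [← hx1, this, map_zero]
  have hπs : Function.Surjective π := by
    intro b
    obtain ⟨x, hx⟩ := hc b
    exact ⟨T.mkQ (0, x), hx⟩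
  have hexD : Function.Exact ι π := by
    intro z
    constructor
    · intro hz
      obtain ⟨w, rfl⟩ := T.mkQ_surjective z
      obtain ⟨q, x⟩ := w
      have : c x = 0 := hz
      obtain ⟨a, ha⟩ := (hex x).mp this
      refine ⟨q + φ a, ?_⟩
      show (Submodule.Quotient.mk (q + φ a, 0) : (↥Q × ↥N) ⧸ T) = Submodule.Quotient.mk (q, x)
      rw [Submodule.Quotient.eq]
      refine ⟨a, ?_⟩
      simp only [LinearMap.prod_apply, Function.prod, LinearMap.neg_apply]
      ext <;> simp [ha]
    · rintro ⟨q, rfl⟩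
      show c (0 : ↥N) = 0
      simp
  obtain ⟨s, hs⟩ := h D ι π hι hπs hexD
  -- retraction of ι
  let r' : ↥D →ₗ[R] ↥(LinearMap.range ι) :=
    LinearMap.codRestrict (LinearMap.range ι) ((LinearMap.id : ↥D →ₗ[R] ↥D) - s.comp π) (by
      intro z
      have : π (((LinearMap.id : ↥D →ₗ[R] ↥D) - s.comp π) z) = 0 := by
        simp [hs (π z)]
      exact (hexD _).mp this)
  let eQ : ↥Q ≃ₗ[R] ↥(LinearMap.range ι) := LinearEquiv.ofInjective ι hι
  let r : ↥D →ₗ[R] ↥Q := (eQ.symm : ↥(LinearMap.range ι) →ₗ[R] ↥Q).comp r'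
  have hr : ∀ q, r (ι q) = q := by
    intro q
    have hπι : π (ι q) = 0 := (hexD (ι q)).mpr ⟨q, rfl⟩
    have : r' (ι q) = eQ q := by
      apply Subtype.ext
      show ι q - s (π (ι q)) = ι q
      rw [hπι, map_zero, sub_zero]
    show eQ.symm (r' (ι q)) = q
    rw [this, LinearEquiv.symm_apply_apply]
  refine ⟨r.comp ν, ?_⟩
  ext x
  have key : ν (m x) = ι (φ x) := by
    show (Submodule.Quotient.mk (0, m x) : (↥Q × ↥N) ⧸ T) = Submodule.Quotient.mk (φ x, 0)
    rw [Submodule.Quotient.eq]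
    refine ⟨-x, ?_⟩
    simp only [LinearMap.prod_apply, Function.prod, LinearMap.neg_apply, map_neg, neg_neg]
    ext <;> simp
  show r (ν (m x)) = φ x
  rw [key, hr]

end GPAux
namespace GPAux
open LinearMap Submodule Function
variable {R : Type u} [Ring R]

/-- `Lifts` is closed under extensions in the first argument. -/
theorem lifts_of_ext {A B C Q : ModuleCat.{u} R} (fAB : A →ₗ[R] B) (gBC : B →ₗ[R] C)
    (hf : Function.Injective fAB) (hg : Function.Surjective gBC)
    (hfg : Function.Exact fAB gBC) (hA : Lifts R A Q) (hC : Lifts R C Q) :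
    Lifts R B Q := by
  intro M N m c hm hc hex φ
  set N' : Submodule R ↥N := LinearMap.ker (gBC.comp c) with hN'
  have hmN' : ∀ x : ↥M, m x ∈ N' := by
    intro x
    have : c (m x) = 0 := hex.apply_apply_eq_zero x
    show gBC (c (m x)) = 0
    rw [this, map_zero]
  let m' : ↥M →ₗ[R] ↥N' := LinearMap.codRestrict N' m hmN'
  have hcN' : ∀ z : ↥N', c z.1 ∈ LinearMap.range fAB := by
    intro z
    exact (hfg (c z.1)).mp z.2
  let eA : ↥A ≃ₗ[R] ↥(LinearMap.range fAB) := LinearEquiv.ofInjective fAB hf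
  let c' : ↥N' →ₗ[R] ↥A :=
    (eA.symm : ↥(LinearMap.range fAB) →ₗ[R] ↥A).comp
      (LinearMap.codRestrict (LinearMap.range fAB) (c.comp (N'.subtype)) hcN')
  have hc'val : ∀ z : ↥N', fAB (c' z) = c z.1 := by
    intro z
    show fAB (eA.symm ⟨c z.1, hcN' z⟩) = c z.1
    have : ∀ w : ↥(LinearMap.range fAB), fAB (eA.symm w) = w.1 := by
      intro w
      conv_rhs => rw [← eA.apply_symm_apply w]
      rfl
    rw [this]
  have hm' : Function.Injective m' := by
    intro x y hxy
    exact hm (congrArg Subtype.val hxy)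
  have hc' : Function.Surjective c' := by
    intro a
    obtain ⟨x, hx⟩ := hc (fAB a)
    have hxN : x ∈ N' := by
      show gBC (c x) = 0
      rw [hx]
      exact hfg.apply_apply_eq_zero a
    refine ⟨⟨x, hxN⟩, ?_⟩
    apply hf
    rw [hc'val ⟨x, hxN⟩, hx]
  have hex' : Function.Exact m' c' := by
    intro z
    constructor
    · intro hz
      have : c z.1 = 0 := by rw [← hc'val z, hz, map_zero]
      obtain ⟨x, hx⟩ := (hex z.1).mp this
      exact ⟨x, Subtype.ext hx⟩
    · rintro ⟨x, rfl⟩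
      apply hf
      rw [hc'val, map_zero]
      exact hex.apply_apply_eq_zero x
  obtain ⟨ψ₁, hψ₁⟩ := hA M (ModuleCat.of R ↥N') m' c' hm' hc' hex' φ
  -- now extend ψ₁ along N' ↪ N with cokernel C
  have hc₂ : Function.Surjective (gBC.comp c) := hg.comp hc
  have hex₂ : Function.Exact (N'.subtype) (gBC.comp c) := by
    intro y
    constructor
    · intro hy
      exact ⟨⟨y, hy⟩, rfl⟩
    · rintro ⟨z, rfl⟩
      exact z.2
  obtain ⟨ψ, hψ⟩ := hC (ModuleCat.of R ↥N') N (N'.subtype) (gBC.comp c)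
    (Submodule.injective_subtype N') hc₂ hex₂ ψ₁
  refine ⟨ψ, ?_⟩
  ext x
  have : ψ (m x) = ψ₁ (m' x) := by
    have := congrArg (fun f => f (m' x)) hψ
    exact this
  simp only [LinearMap.comp_apply]
  rw [this]
  have := congrArg (fun f => f x) hψ₁
  simpa using this

end GPAux
namespace GPAux
open LinearMap Submodule Function
variable {R : Type u} [Ring R]

section TotAcyc
variable (P : ℤ → ModuleCat.{u} R) (d : ∀ i : ℤ, P i →ₗ[R] P (i+1))
variable (hproj : ∀ i, Module.Projective R (P i))
variable (hexd : ∀ i, Function.Exact (d i) (d (i+1)))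
variable (hlift : ∀ (Q : ModuleCat.{u} R), Module.Projective R Q →
      ∀ (i : ℤ) (f : P (i+1) →ₗ[R] Q), f ∘ₗ d i = 0 →
        ∃ g : P (i+1+1) →ₗ[R] Q, g ∘ₗ d (i+1) = f)
variable (Qp : ModuleCat.{u} R) (hQp : Module.Projective R Qp)

include hproj hexd hlift hQp in
theorem totAcyc_ext1_shift (i : ℤ) :
    Ext1Vanishes R (ModuleCat.of R (LinearMap.ker (d (i+1+1+1)))) Qp := by
  intro E ι π hι hπ hexE
  haveI := hproj (i+1+1)
  -- surjection t : P (i+1+1) → ker (d (i+1+1+1))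
  have hmem : ∀ x : ↥(P (i+1+1)), d (i+1+1) x ∈ LinearMap.ker (d (i+1+1+1)) := by
    intro x
    exact (hexd (i+1+1)).apply_apply_eq_zero x
  let t : ↥(P (i+1+1)) →ₗ[R] ↥(LinearMap.ker (d (i+1+1+1))) :=
    LinearMap.codRestrict _ (d (i+1+1)) hmem
  have ht : Function.Surjective t := by
    rintro ⟨b, hb⟩
    obtain ⟨x, hx⟩ := (hexd (i+1+1) b).mp hb
    exact ⟨x, Subtype.ext hx⟩
  obtain ⟨β, hβ⟩ := Module.projective_lifting_property (R := R) π t hπ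
  have hβ' : ∀ x, π (β x) = t x := fun x => congrArg (fun f => f x) hβ
  -- the map F : P (i+1) → Qp
  have hmemF : ∀ y : ↥(P (i+1)), β (d (i+1) y) ∈ LinearMap.range ι := by
    intro y
    apply (hexE _).mp
    rw [hβ']
    apply Subtype.ext_iff.mpr
    show d (i+1+1) (d (i+1) y) = 0
    exact (hexd (i+1)).apply_apply_eq_zero y
  let eι : ↥Qp ≃ₗ[R] ↥(LinearMap.range ι) := LinearEquiv.ofInjective ι hι
  have heι : ∀ w : ↥(LinearMap.range ι), ι (eι.symm w) = w.1 := by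
    intro w
    conv_rhs => rw [← eι.apply_symm_apply w]
    rfl
  let F : ↥(P (i+1)) →ₗ[R] ↥Qp :=
    (eι.symm : ↥(LinearMap.range ι) →ₗ[R] ↥Qp).comp
      (LinearMap.codRestrict _ (β.comp (d (i+1))) hmemF)
  have hFval : ∀ y, ι (F y) = β (d (i+1) y) := by
    intro y
    show ι (eι.symm ⟨β (d (i+1) y), hmemF y⟩) = _
    rw [heι]
  have hF0 : F ∘ₗ d i = 0 := by
    ext x
    apply hι
    simp only [LinearMap.comp_apply, LinearMap.zero_apply, map_zero]
    rw [hFval]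
    rw [(hexd i).apply_apply_eq_zero x, map_zero]
  obtain ⟨g, hg⟩ := hlift Qp hQp i F hF0
  have hg' : ∀ x, g (d (i+1) x) = F x := fun x => congrArg (fun f => f x) hg
  -- corrected lift β' kills ker t
  let β' : ↥(P (i+1+1)) →ₗ[R] ↥E := β - ι.comp g
  have hker : ∀ x, t x = 0 → β' x = 0 := by
    intro x hx
    have hx' : d (i+1+1) x = 0 := congrArg Subtype.val hx
    obtain ⟨y, hy⟩ := (hexd (i+1) x).mp hx'
    show β x - ι (g x) = 0
    rw [← hy, hg', ← hFval, sub_self]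
  obtain ⟨s, hs⟩ := factor_surj t ht β' hker
  have hs' : ∀ x, s (t x) = β' x := fun x => congrArg (fun f => f x) hs
  refine ⟨s, ?_⟩
  intro b
  obtain ⟨x, rfl⟩ := ht b
  show π (s (t x)) = t x
  rw [hs']
  show π (β x - ι (g x)) = t x
  rw [map_sub, hβ']
  have : π (ι (g x)) = 0 := (hexE _).mpr ⟨g x, rfl⟩
  rw [this, sub_zero]

include hproj hexd hlift hQp in
theorem totAcyc_ext1 (i : ℤ) :
    Ext1Vanishes R (ModuleCat.of R (LinearMap.ker (d i))) Qp := by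
  have h := totAcyc_ext1_shift P d hproj hexd hlift Qp hQp (i-1-1-1)
  rw [show i-1-1-1+1+1+1 = i by omega] at h
  exact h

include hproj hexd hlift hQp in
theorem totAcyc_lifts (i : ℤ) :
    Lifts R (ModuleCat.of R (LinearMap.ker (d i))) Qp :=
  ext1_to_lifts (totAcyc_ext1 P d hproj hexd hlift Qp hQp i)

end TotAcyc
end GPAux
namespace GPAux
open LinearMap Submodule Function
variable {R : Type u} [Ring R]

/-- Pushout of a short exact sequence `0 → A → B → C → 0` along a mono `u : A ↪ W`
with cokernel `v : W ↠ Cc`. -/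
theorem pushout_ses {A B C W Cc : ModuleCat.{u} R}
    (m : A →ₗ[R] B) (c : B →ₗ[R] C)
    (hm : Function.Injective m) (hc : Function.Surjective c) (hmc : Function.Exact m c)
    (u : A →ₗ[R] W) (hu : Function.Injective u)
    (v : W →ₗ[R] Cc) (hv : Function.Surjective v) (huv : Function.Exact u v) :
    ∃ (E : ModuleCat.{u} R) (inW : W →ₗ[R] E) (outC : E →ₗ[R] C)
      (inB : B →ₗ[R] E) (outCc : E →ₗ[R] Cc),
      Function.Injective inW ∧ Function.Surjective outC ∧ Function.Exact inW outC ∧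
      Function.Injective inB ∧ Function.Surjective outCc ∧ Function.Exact inB outCc := by
  classical
  set T : Submodule R (↥B × ↥W) := LinearMap.range (LinearMap.prod m (-u)) with hT
  let E : ModuleCat.{u} R := ModuleCat.of R ((↥B × ↥W) ⧸ T)
  let inB : ↥B →ₗ[R] ↥E := T.mkQ.comp (LinearMap.inl R ↥B ↥W)
  let inW : ↥W →ₗ[R] ↥E := T.mkQ.comp (LinearMap.inr R ↥B ↥W)
  have houtC0 : ∀ z ∈ T, c z.1 = (0 : ↥C) := by
    rintro z ⟨a, rfl⟩
    exact hmc.apply_apply_eq_zero a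
  have houtCc0 : ∀ z ∈ T, v z.2 = (0 : ↥Cc) := by
    rintro z ⟨a, rfl⟩
    show v (-u a) = 0
    rw [map_neg, huv.apply_apply_eq_zero a, neg_zero]
  let outC : ↥E →ₗ[R] ↥C := T.liftQ (c.comp (LinearMap.fst R ↥B ↥W)) houtC0
  let outCc : ↥E →ₗ[R] ↥Cc := T.liftQ (v.comp (LinearMap.snd R ↥B ↥W)) houtCc0
  have hinW : Function.Injective inW := by
    rw [← LinearMap.ker_eq_bot, Submodule.eq_bot_iff]
    intro w hw
    have : (((0:↥B), w) : ↥B × ↥W) ∈ T := by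
      rw [← Submodule.Quotient.mk_eq_zero T]
      exact hw
    obtain ⟨a, ha⟩ := this
    have ha1 : m a = 0 := congrArg Prod.fst ha
    have : a = 0 := hm (by simpa using ha1)
    have ha2 : -u a = w := congrArg Prod.snd ha
    rw [← ha2, this, map_zero, neg_zero]
  have hinB : Function.Injective inB := by
    rw [← LinearMap.ker_eq_bot, Submodule.eq_bot_iff]
    intro b hb
    have : ((b, (0:↥W)) : ↥B × ↥W) ∈ T := by
      rw [← Submodule.Quotient.mk_eq_zero T]
      exact hb
    obtain ⟨a, ha⟩ := this
    have ha2 : -u a = 0 := congrArg Prod.snd ha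
    have : a = 0 := hu (by simpa using neg_eq_zero.mp ha2)
    have ha1 : m a = b := congrArg Prod.fst ha
    rw [← ha1, this, map_zero]
  have houtC : Function.Surjective outC := by
    intro z
    obtain ⟨b, hb⟩ := hc z
    exact ⟨T.mkQ (b, 0), hb⟩
  have houtCc : Function.Surjective outCc := by
    intro z
    obtain ⟨w, hw⟩ := hv z
    exact ⟨T.mkQ (0, w), hw⟩
  have hexC : Function.Exact inW outC := by
    intro z
    constructor
    · intro hz
      obtain ⟨p, rfl⟩ := T.mkQ_surjective z
      obtain ⟨b, w⟩ := p
      have hcb : c b = 0 := hz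
      obtain ⟨a, ha⟩ := (hmc b).mp hcb
      refine ⟨w + u a, ?_⟩
      show (Submodule.Quotient.mk (0, w + u a) : (↥B × ↥W) ⧸ T) = Submodule.Quotient.mk (b, w)
      rw [Submodule.Quotient.eq]
      refine ⟨-a, ?_⟩
      simp only [LinearMap.prod_apply, Pi.prod, LinearMap.neg_apply, map_neg, neg_neg]
      ext <;> simp [ha]
    · rintro ⟨w, rfl⟩
      show c (0 : ↥B) = 0
      simp
  have hexCc : Function.Exact inB outCc := by
    intro z
    constructor
    · intro hz
      obtain ⟨p, rfl⟩ := T.mkQ_surjective z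
      obtain ⟨b, w⟩ := p
      have hvw : v w = 0 := hz
      obtain ⟨a, ha⟩ := (huv w).mp hvw
      refine ⟨b + m a, ?_⟩
      show (Submodule.Quotient.mk (b + m a, 0) : (↥B × ↥W) ⧸ T) = Submodule.Quotient.mk (b, w)
      rw [Submodule.Quotient.eq]
      refine ⟨a, ?_⟩
      simp only [LinearMap.prod_apply, Pi.prod, LinearMap.neg_apply]
      ext <;> simp [ha]
    · rintro ⟨b, rfl⟩
      show v (0 : ↥W) = 0
      simp
  exact ⟨E, inW, outC, inB, outCc, hinW, houtC, hexC, hinB, houtCc, hexCc⟩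

end GPAux
namespace GPAux
open LinearMap Submodule Function
variable {R : Type u} [Ring R]

theorem int_chain {F : ℤ → Type (u+1)} (L : ∀ i : ℤ, F i → F (i+1) → Prop)
    (s0 : F 0) (hup : ∀ i (x : F i), ∃ y, L i x y)
    (hdown : ∀ i (y : F (i+1)), ∃ x, L i x y) :
    ∃ T : ∀ i, F i, T 0 = s0 ∧ ∀ i, L i (T i) (T (i+1)) := by
  choose up hup' using hup
  choose down hdown' using hdown
  let A : ∀ n : ℕ, F (Int.ofNat n) := fun n =>
    Nat.rec (motive := fun n => F (Int.ofNat n)) s0 (fun n x => up (Int.ofNat n) x) n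
  let B : ∀ n : ℕ, F (Int.negSucc n) := fun n =>
    Nat.rec (motive := fun n => F (Int.negSucc n)) (down (Int.negSucc 0) s0)
      (fun n x => down (Int.negSucc (n+1)) x) n
  refine ⟨fun i => Int.rec A B i, rfl, ?_⟩
  intro i
  cases i with
  | ofNat n => exact hup' (Int.ofNat n) (A n)
  | negSucc n =>
    cases n with
    | zero => exact hdown' (Int.negSucc 0) s0
    | succ n => exact hdown' (Int.negSucc (n+1)) (B n)

/-- Data for the horseshoe construction at a fixed degree. -/
structure HS (R : Type u) [Ring R] (Pi Qi : ModuleCat.{u} R)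
    (KP : Submodule R ↥Pi) (KQ : Submodule R ↥Qi) : Type (u+1) where
  E : ModuleCat.{u} R
  f : ↥KP →ₗ[R] ↥E
  g : ↥E →ₗ[R] ↥KQ
  v : ↥E →ₗ[R] ↥Pi × ↥Qi
  hf : Function.Injective f
  hg : Function.Surjective g
  hfg : Function.Exact f g
  hv : Function.Injective v
  hvf : ∀ a : ↥KP, v (f a) = ((a : ↥Pi), 0)
  hvg : ∀ x, (v x).2 = ((g x : ↥Qi))

end GPAux
namespace GPAux
open LinearMap Submodule Function
variable {R : Type u} [Ring R]

section Horseshoe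
variable (P : ℤ → ModuleCat.{u} R) (d : ∀ i : ℤ, P i →ₗ[R] P (i+1))
variable (Q : ℤ → ModuleCat.{u} R) (e : ∀ i : ℤ, Q i →ₗ[R] Q (i+1))
variable (hprojP : ∀ i, Module.Projective R (P i))
variable (hexP : ∀ i, Function.Exact (d i) (d (i+1)))
variable (hliftP : ∀ (Z : ModuleCat.{u} R), Module.Projective R Z →
      ∀ (i : ℤ) (f : P (i+1) →ₗ[R] Z), f ∘ₗ d i = 0 →
        ∃ g : P (i+1+1) →ₗ[R] Z, g ∘ₗ d (i+1) = f)
variable (hprojQ : ∀ i, Module.Projective R (Q i))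
variable (hexQ : ∀ i, Function.Exact (e i) (e (i+1)))
variable (hliftQ : ∀ (Z : ModuleCat.{u} R), Module.Projective R Z →
      ∀ (i : ℤ) (f : Q (i+1) →ₗ[R] Z), f ∘ₗ e i = 0 →
        ∃ g : Q (i+1+1) →ₗ[R] Z, g ∘ₗ e (i+1) = f)

/-- The horseshoe data at degree `i`. -/
abbrev SD (i : ℤ) : Type (u+1) :=
  HS R (P i) (Q i) (LinearMap.ker (d i)) (LinearMap.ker (e i))

include hprojQ hexQ hliftQ in
theorem mkV (i : ℤ) (E : ModuleCat.{u} R)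
    (f : ↥(LinearMap.ker (d i)) →ₗ[R] ↥E) (g : ↥E →ₗ[R] ↥(LinearMap.ker (e i)))
    (hf : Function.Injective f) (hg : Function.Surjective g) (hfg : Function.Exact f g)
    (hPi : Module.Projective R (P i)) :
    ∃ v : ↥E →ₗ[R] ↥(P i) × ↥(Q i), Function.Injective v ∧
      (∀ a : ↥(LinearMap.ker (d i)), v (f a) = ((a : ↥(P i)), 0)) ∧
      (∀ x, (v x).2 = ((g x : ↥(Q i)))) := by
  have hl : Lifts R (ModuleCat.of R ↥(LinearMap.ker (e i))) (P i) :=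
    totAcyc_lifts Q e hprojQ hexQ hliftQ (P i) hPi i
  obtain ⟨uu, huu⟩ := hl (ModuleCat.of R ↥(LinearMap.ker (d i))) E f g hf hg hfg
    ((LinearMap.ker (d i)).subtype)
  have huu' : ∀ a, uu (f a) = (a : ↥(P i)) := fun a => congrArg (fun F => F a) huu
  refine ⟨LinearMap.prod uu (((LinearMap.ker (e i)).subtype).comp g), ?_, ?_, ?_⟩
  · intro x y hxy
    have h2 : (g x : ↥(Q i)) = (g y : ↥(Q i)) := congrArg Prod.snd hxy
    have h2' : g (x - y) = 0 := by
      apply Subtype.ext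
      show ((g (x-y) : ↥(Q i))) = 0
      rw [map_sub]
      show (g x : ↥(Q i)) - (g y : ↥(Q i)) = 0
      rw [h2, sub_self]
    obtain ⟨a, ha⟩ := (hfg (x - y)).mp h2'
    have h1 : uu x = uu y := congrArg Prod.fst hxy
    have : (a : ↥(P i)) = 0 := by
      rw [← huu' a, ha, map_sub, h1, sub_self]
    have ha0 : a = 0 := Subtype.ext this
    have : x - y = 0 := by rw [← ha, ha0, map_zero]
    exact sub_eq_zero.mp this
  · intro a
    have : g (f a) = 0 := hfg.apply_apply_eq_zero a
    show (uu (f a), ((g (f a) : ↥(Q i)))) = _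
    rw [huu' a, this]
    rfl
  · intro x
    rfl

include hexP hexQ hprojP hprojQ hexQ hliftQ in
theorem upStep (i : ℤ) (s : SD P d Q e i) :
    ∃ s' : SD P d Q e (i+1), ∃ π : ↥(P i) × ↥(Q i) →ₗ[R] ↥s'.E,
      Function.Surjective π ∧ Function.Exact s.v π := by
  classical
  set V : Submodule R (↥(P i) × ↥(Q i)) := LinearMap.range s.v with hV
  let E' : ModuleCat.{u} R := ModuleCat.of R ((↥(P i) × ↥(Q i)) ⧸ V)
  let π : ↥(P i) × ↥(Q i) →ₗ[R] ↥E' := V.mkQ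
  -- t1 : P i ↠ ker (d (i+1))
  have hmem1 : ∀ x : ↥(P i), d i x ∈ LinearMap.ker (d (i+1)) :=
    fun x => (hexP i).apply_apply_eq_zero x
  let t1 : ↥(P i) →ₗ[R] ↥(LinearMap.ker (d (i+1))) := LinearMap.codRestrict _ (d i) hmem1
  have ht1 : Function.Surjective t1 := by
    rintro ⟨b, hb⟩
    obtain ⟨x, hx⟩ := (hexP i b).mp hb
    exact ⟨x, Subtype.ext hx⟩
  -- f' : ker (d (i+1)) → E'
  have hker1 : ∀ x : ↥(P i), t1 x = 0 → π (x, 0) = 0 := by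
    intro x hx
    have hx' : x ∈ LinearMap.ker (d i) := congrArg Subtype.val hx
    have : ((x, (0 : ↥(Q i))) : ↥(P i) × ↥(Q i)) ∈ V := ⟨s.f ⟨x, hx'⟩, s.hvf ⟨x, hx'⟩⟩
    rwa [← Submodule.Quotient.mk_eq_zero V] at this
  obtain ⟨f', hf'c⟩ := factor_surj t1 ht1 (π.comp (LinearMap.inl R ↥(P i) ↥(Q i))) hker1
  have hf'x : ∀ x, f' (t1 x) = π (x, 0) := fun x => congrArg (fun F => F x) hf'c
  -- g' : E' → ker (e (i+1))
  have hmem2 : ∀ z : ↥(P i) × ↥(Q i), e i z.2 ∈ LinearMap.ker (e (i+1)) :=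
    fun z => (hexQ i).apply_apply_eq_zero z.2
  have hkill : ∀ z ∈ V, (LinearMap.codRestrict (LinearMap.ker (e (i+1)))
      ((e i).comp (LinearMap.snd R ↥(P i) ↥(Q i))) hmem2) z = 0 := by
    rintro z ⟨w, rfl⟩
    apply Subtype.ext
    show e i ((s.v w).2) = 0
    rw [s.hvg w]
    exact (s.g w).2
  let g' : ↥E' →ₗ[R] ↥(LinearMap.ker (e (i+1))) := V.liftQ _ hkill
  have hg'mk : ∀ z : ↥(P i) × ↥(Q i), ((g' (π z) : ↥(Q (i+1)))) = e i z.2 := fun z => rfl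
  -- injectivity of f'
  have hf' : Function.Injective f' := by
    rw [← LinearMap.ker_eq_bot, Submodule.eq_bot_iff]
    intro b hb
    obtain ⟨x, rfl⟩ := ht1 b
    have : π (x, 0) = 0 := by rw [← hf'x]; exact hb
    have hxV : ((x, (0:↥(Q i))) : ↥(P i) × ↥(Q i)) ∈ V := by
      have h0 : (Submodule.Quotient.mk ((x, (0:↥(Q i))) : ↥(P i) × ↥(Q i)) : _ ⧸ V) = 0 := this
      exact (Submodule.Quotient.mk_eq_zero V).mp h0
    obtain ⟨w, hw⟩ := hxV
    have hw2 : ((s.g w : ↥(Q i))) = 0 := by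
      rw [← s.hvg w, hw]
    have : s.g w = 0 := Subtype.ext hw2
    obtain ⟨a, ha⟩ := (s.hfg w).mp this
    have : s.v w = ((a : ↥(P i)), 0) := by rw [← ha, s.hvf]
    have hxa : x = (a : ↥(P i)) := by
      have := hw.symm.trans this
      exact congrArg Prod.fst this
    apply Subtype.ext
    show d i x = 0
    rw [hxa]
    exact a.2
  -- surjectivity of g'
  have hg' : Function.Surjective g' := by
    rintro ⟨b, hb⟩
    obtain ⟨y, hy⟩ := (hexQ i b).mp hb
    exact ⟨π (0, y), Subtype.ext hy⟩
  -- exactness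
  have hfg' : Function.Exact f' g' := by
    intro z
    constructor
    · intro hz
      obtain ⟨p, rfl⟩ := V.mkQ_surjective z
      obtain ⟨x, y⟩ := p
      have hy : e i y = 0 := congrArg Subtype.val hz
      obtain ⟨w, hw⟩ := s.hg ⟨y, hy⟩
      have hw2 : (s.v w).2 = y := by rw [s.hvg, hw]
      refine ⟨t1 (x - (s.v w).1), ?_⟩
      rw [hf'x]
      show (Submodule.Quotient.mk ((x - (s.v w).1, 0) : ↥(P i) × ↥(Q i)) : _ ⧸ V)
        = Submodule.Quotient.mk (x, y)
      rw [Submodule.Quotient.eq]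
      refine ⟨-w, ?_⟩
      rw [map_neg]
      ext
      · show -(s.v w).1 = (x - (s.v w).1) - x
        abel
      · show -(s.v w).2 = 0 - y
        rw [hw2]
        abel
    · rintro ⟨b, rfl⟩
      obtain ⟨x, rfl⟩ := ht1 b
      rw [hf'x]
      apply Subtype.ext
      rw [hg'mk]
      show e i 0 = 0
      simp
  obtain ⟨v', hv', hv'f, hv'g⟩ := mkV P d Q e hprojQ hexQ hliftQ (i+1) E' f' g' hf' hg' hfg'
    (hprojP (i+1))
  refine ⟨⟨E', f', g', v', hf', hg', hfg', hv', hv'f, hv'g⟩, π, V.mkQ_surjective, ?_⟩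
  intro z
  constructor
  · intro hz
    have h0 : (Submodule.Quotient.mk z : _ ⧸ V) = 0 := hz
    obtain ⟨w, hw⟩ := (Submodule.Quotient.mk_eq_zero V).mp h0
    exact ⟨w, hw⟩
  · rintro ⟨w, rfl⟩
    show (Submodule.Quotient.mk (s.v w) : _ ⧸ V) = 0
    exact (Submodule.Quotient.mk_eq_zero V).mpr ⟨w, rfl⟩

end Horseshoe
end GPAux
namespace GPAux
open LinearMap Submodule Function
variable {R : Type u} [Ring R]

section Horseshoe2
variable (P : ℤ → ModuleCat.{u} R) (d : ∀ i : ℤ, P i →ₗ[R] P (i+1))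
variable (Q : ℤ → ModuleCat.{u} R) (e : ∀ i : ℤ, Q i →ₗ[R] Q (i+1))
variable (hprojP : ∀ i, Module.Projective R (P i))
variable (hexP : ∀ i, Function.Exact (d i) (d (i+1)))
variable (hprojQ : ∀ i, Module.Projective R (Q i))
variable (hexQ : ∀ i, Function.Exact (e i) (e (i+1)))

include hexP hexQ hprojQ in
theorem downStep (i : ℤ) (s' : SD P d Q e (i+1)) :
    ∃ s : SD P d Q e i, ∃ π : ↥(P i) × ↥(Q i) →ₗ[R] ↥s'.E,
      Function.Surjective π ∧ Function.Exact s.v π := by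
  classical
  haveI := hprojQ i
  have hmem1 : ∀ x : ↥(P i), d i x ∈ LinearMap.ker (d (i+1)) :=
    fun x => (hexP i).apply_apply_eq_zero x
  let t1 : ↥(P i) →ₗ[R] ↥(LinearMap.ker (d (i+1))) := LinearMap.codRestrict _ (d i) hmem1
  have ht1 : Function.Surjective t1 := by
    rintro ⟨b, hb⟩
    obtain ⟨x, hx⟩ := (hexP i b).mp hb
    exact ⟨x, Subtype.ext hx⟩
  have hmem2 : ∀ y : ↥(Q i), e i y ∈ LinearMap.ker (e (i+1)) :=
    fun y => (hexQ i).apply_apply_eq_zero y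
  let t2 : ↥(Q i) →ₗ[R] ↥(LinearMap.ker (e (i+1))) := LinearMap.codRestrict _ (e i) hmem2
  have ht2 : Function.Surjective t2 := by
    rintro ⟨b, hb⟩
    obtain ⟨y, hy⟩ := (hexQ i b).mp hb
    exact ⟨y, Subtype.ext hy⟩
  obtain ⟨μ, hμ⟩ := Module.projective_lifting_property (R := R) s'.g t2 s'.hg
  have hμ' : ∀ y, s'.g (μ y) = t2 y := fun y => congrArg (fun F => F y) hμ
  let π : ↥(P i) × ↥(Q i) →ₗ[R] ↥s'.E :=
    (s'.f.comp (t1.comp (LinearMap.fst R ↥(P i) ↥(Q i)))) +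
      (μ.comp (LinearMap.snd R ↥(P i) ↥(Q i)))
  have hπ : ∀ x y, π (x, y) = s'.f (t1 x) + μ y := fun x y => rfl
  have hπs : Function.Surjective π := by
    intro z
    obtain ⟨y, hy⟩ := ht2 (s'.g z)
    have : s'.g (z - μ y) = 0 := by
      rw [map_sub, hμ' y, hy, sub_self]
    obtain ⟨a, ha⟩ := (s'.hfg (z - μ y)).mp this
    obtain ⟨x, hx⟩ := ht1 a
    refine ⟨(x, y), ?_⟩
    rw [hπ, hx, ha]
    abel
  -- E at level i is the kernel of π
  let K : Submodule R (↥(P i) × ↥(Q i)) := LinearMap.ker π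
  have hmemf : ∀ a : ↥(LinearMap.ker (d i)),
      ((LinearMap.inl R ↥(P i) ↥(Q i)).comp ((LinearMap.ker (d i)).subtype)) a ∈ K := by
    intro a
    show π ((a : ↥(P i)), 0) = 0
    rw [hπ]
    have : t1 (a : ↥(P i)) = 0 := by
      apply Subtype.ext
      exact a.2
    rw [this, map_zero, map_zero, add_zero]
  let f₀ : ↥(LinearMap.ker (d i)) →ₗ[R] ↥K := LinearMap.codRestrict K _ hmemf
  have hmemg : ∀ z : ↥K, (z : ↥(P i) × ↥(Q i)).2 ∈ LinearMap.ker (e i) := by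
    rintro ⟨⟨x, y⟩, hz⟩
    have hz' : s'.f (t1 x) + μ y = 0 := hz
    have : s'.g (s'.f (t1 x)) + s'.g (μ y) = 0 := by
      rw [← map_add, hz', map_zero]
    rw [s'.hfg.apply_apply_eq_zero (t1 x), zero_add, hμ'] at this
    exact congrArg Subtype.val this
  let g₀ : ↥K →ₗ[R] ↥(LinearMap.ker (e i)) :=
    LinearMap.codRestrict _ ((LinearMap.snd R ↥(P i) ↥(Q i)).comp K.subtype) hmemg
  have hf₀ : Function.Injective f₀ := by
    intro a b hab
    have : ((a : ↥(P i)), (0:↥(Q i))) = ((b : ↥(P i)), (0:↥(Q i))) := congrArg Subtype.val hab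
    exact Subtype.ext (congrArg Prod.fst this)
  have hg₀ : Function.Surjective g₀ := by
    rintro ⟨y, hy⟩
    have hty : t2 y = 0 := Subtype.ext hy
    have : s'.g (μ y) = 0 := by rw [hμ', hty]
    obtain ⟨a, ha⟩ := (s'.hfg (μ y)).mp this
    obtain ⟨x, hx⟩ := ht1 a
    have hmem : ((-x, y) : ↥(P i) × ↥(Q i)) ∈ K := by
      show π (-x, y) = 0
      rw [hπ, map_neg, map_neg, hx, ha]
      abel
    exact ⟨⟨(-x, y), hmem⟩, rfl⟩
  have hfg₀ : Function.Exact f₀ g₀ := by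
    intro z
    constructor
    · intro h0
      obtain ⟨⟨x, y⟩, hz⟩ := z
      have hy0 : y = 0 := congrArg Subtype.val h0
      have hπ0 : s'.f (t1 x) + μ y = 0 := hz
      rw [hy0, map_zero, add_zero] at hπ0
      have ht1x : t1 x = 0 := s'.hf (by rw [hπ0, map_zero])
      have hxk : x ∈ LinearMap.ker (d i) := congrArg Subtype.val ht1x
      refine ⟨⟨x, hxk⟩, ?_⟩
      apply Subtype.ext
      show ((x : ↥(P i)), (0:↥(Q i))) = (x, y)
      rw [hy0]
    · rintro ⟨a, rfl⟩
      apply Subtype.ext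
      rfl
  refine ⟨⟨ModuleCat.of R ↥K, f₀, g₀, K.subtype, hf₀, hg₀, hfg₀,
    Submodule.injective_subtype K, fun a => rfl, fun z => rfl⟩, π, hπs, ?_⟩
  intro z
  constructor
  · intro hz
    exact ⟨⟨z, hz⟩, rfl⟩
  · rintro ⟨w, rfl⟩
    exact w.2

end Horseshoe2
end GPAux
namespace GPAux
open LinearMap Submodule Function
variable {R : Type u} [Ring R]

theorem gp_extension {A B Emod : ModuleCat.{u} R} (f : A →ₗ[R] Emod) (g : Emod →ₗ[R] B)
    (hf : Function.Injective f) (hg : Function.Surjective g) (hfg : Function.Exact f g)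
    (hA : IsGorensteinProjective R A) (hB : IsGorensteinProjective R B) :
    IsGorensteinProjective R Emod := by
  classical
  obtain ⟨P, d, hprojP, hexP, hliftP, ⟨eA⟩⟩ := hA
  obtain ⟨Q, e, hprojQ, hexQ, hliftQ, ⟨eB⟩⟩ := hB
  let f0 : ↥(LinearMap.ker (d 0)) →ₗ[R] ↥Emod :=
    f.comp (eA.symm : ↥(LinearMap.ker (d 0)) →ₗ[R] ↥A)
  let g0 : ↥Emod →ₗ[R] ↥(LinearMap.ker (e 0)) := (eB : ↥B →ₗ[R] ↥(LinearMap.ker (e 0))).comp g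
  have hf0 : Function.Injective f0 := hf.comp eA.symm.injective
  have hg0 : Function.Surjective g0 := eB.surjective.comp hg
  have hfg0 : Function.Exact f0 g0 := by
    intro y
    constructor
    · intro hy
      have : g y = 0 := by
        apply eB.injective
        rw [map_zero]
        exact hy
      obtain ⟨a, ha⟩ := (hfg y).mp this
      exact ⟨eA a, by show f (eA.symm (eA a)) = y; rw [eA.symm_apply_apply]; exact ha⟩
    · rintro ⟨b, rfl⟩
      show eB (g (f (eA.symm b))) = 0
      rw [hfg.apply_apply_eq_zero, map_zero]
  obtain ⟨v0, hv0, hv0f, hv0g⟩ := mkV P d Q e hprojQ hexQ hliftQ 0 Emod f0 g0 hf0 hg0 hfg0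
    (hprojP 0)
  let s0 : SD P d Q e 0 := ⟨Emod, f0, g0, v0, hf0, hg0, hfg0, hv0, hv0f, hv0g⟩
  obtain ⟨T, hT0, hTlink⟩ := int_chain
    (F := fun i => SD P d Q e i)
    (fun i s s' => ∃ π : ↥(P i) × ↥(Q i) →ₗ[R] ↥s'.E,
      Function.Surjective π ∧ Function.Exact s.v π)
    s0
    (fun i s => upStep P d Q e hprojP hexP hprojQ hexQ hliftQ i s)
    (fun i s' => downStep P d Q e hexP hprojQ hexQ i s')
  choose π hπs hπe using hTlink
  let PQ : ℤ → ModuleCat.{u} R := fun i => ModuleCat.of R (↥(P i) × ↥(Q i))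
  let D : ∀ i : ℤ, PQ i →ₗ[R] PQ (i+1) := fun i => ((T (i+1)).v).comp (π i)
  have hDexact : ∀ i, Function.Exact (D i) (D (i+1)) := by
    intro i z
    constructor
    · intro hz
      have hz' : π (i+1) z = 0 := by
        apply (T (i+1+1)).hv
        rw [map_zero]
        exact hz
      obtain ⟨w, hw⟩ := (hπe (i+1) z).mp hz'
      obtain ⟨x, rfl⟩ := hπs i w
      exact ⟨x, hw⟩
    · rintro ⟨x, rfl⟩
      show (T (i+1+1)).v (π (i+1) ((T (i+1)).v (π i x))) = 0
      have : π (i+1) ((T (i+1)).v (π i x)) = 0 := (hπe (i+1) _).mpr ⟨π i x, rfl⟩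
      rw [this, map_zero]
  refine ⟨PQ, D, ?_, hDexact, ?_, ?_⟩
  · intro i
    haveI := hprojP i
    haveI := hprojQ i
    show Module.Projective R (↥(P i) × ↥(Q i))
    infer_instance
  · intro Z hZ i F hF
    have hFv : ∀ w : ↥(T (i+1)).E, F ((T (i+1)).v w) = 0 := by
      intro w
      obtain ⟨x, rfl⟩ := hπs i w
      exact congrArg (fun F' => F' x) hF
    obtain ⟨G₁, hG₁⟩ := factor_surj (π (i+1)) (hπs (i+1)) F (by
      intro z hz
      obtain ⟨w, hw⟩ := (hπe (i+1) z).mp hz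
      rw [← hw]
      exact hFv w)
    have hG₁' : ∀ z, G₁ (π (i+1) z) = F z := fun z => congrArg (fun F' => F' z) hG₁
    have hlifts : Lifts R ((T (i+1+1+1)).E) Z :=
      lifts_of_ext ((T (i+1+1+1)).f) ((T (i+1+1+1)).g)
        ((T (i+1+1+1)).hf) ((T (i+1+1+1)).hg) ((T (i+1+1+1)).hfg)
        (totAcyc_lifts P d hprojP hexP hliftP Z hZ (i+1+1+1))
        (totAcyc_lifts Q e hprojQ hexQ hliftQ Z hZ (i+1+1+1))
    obtain ⟨ψ, hψ⟩ := hlifts ((T (i+1+1)).E) (PQ (i+1+1)) ((T (i+1+1)).v) (π (i+1+1))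
      ((T (i+1+1)).hv) (hπs (i+1+1)) (hπe (i+1+1)) G₁
    have hψ' : ∀ w, ψ ((T (i+1+1)).v w) = G₁ w := fun w => congrArg (fun F' => F' w) hψ
    refine ⟨ψ, ?_⟩
    refine LinearMap.ext fun z => ?_
    show ψ ((T (i+1+1)).v (π (i+1) z)) = F z
    rw [hψ', hG₁']
  · -- the syzygy is Emod
    have hs0e : Function.Exact v0 (π 0) := by
      have h := hπe 0
      rw [hT0] at h
      exact h
    have hEq : LinearMap.range v0 = LinearMap.ker (D 0) := by
      ext x
      constructor
      · intro hx
        show (T (0+1)).v (π 0 x) = 0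
        have : π 0 x = 0 := (hs0e x).mpr hx
        rw [this, map_zero]
      · intro hx
        have hx' : π 0 x = 0 := by
          apply (T (0+1)).hv
          rw [map_zero]
          exact hx
        exact (hs0e x).mp hx'
    exact ⟨(LinearEquiv.ofInjective v0 hv0).trans (LinearEquiv.ofEq _ _ hEq)⟩

end GPAux
namespace GPAux
open LinearMap Submodule Function
variable {R : Type u} [Ring R]

/-- Every Gorenstein projective embeds in a projective with Gorenstein projective cokernel. -/
theorem gp_embed {G : ModuleCat.{u} R} (hG : IsGorensteinProjective R G) :
    ∃ (Pm C : ModuleCat.{u} R) (uu : ↥G →ₗ[R] ↥Pm) (vv : ↥Pm →ₗ[R] ↥C),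
      Module.Projective R Pm ∧ Function.Injective uu ∧ Function.Surjective vv ∧
      Function.Exact uu vv ∧ IsGorensteinProjective R C := by
  obtain ⟨P, d, hproj, hexd, hlift, ⟨eG⟩⟩ := hG
  refine ⟨P 0, ModuleCat.of R ↥(LinearMap.ker (d (0+1))),
    ((LinearMap.ker (d 0)).subtype).comp (eG : ↥G →ₗ[R] ↥(LinearMap.ker (d 0))),
    LinearMap.codRestrict (LinearMap.ker (d (0+1))) (d 0)
      (fun x => (hexd 0).apply_apply_eq_zero x),
    hproj 0, ?_, ?_, ?_, ?_⟩
  · exact (Submodule.injective_subtype _).comp eG.injective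
  · rintro ⟨b, hb⟩
    obtain ⟨x, hx⟩ := (hexd 0 b).mp hb
    exact ⟨x, Subtype.ext hx⟩
  · intro x
    constructor
    · intro hx
      have hx' : x ∈ LinearMap.ker (d 0) := congrArg Subtype.val hx
      refine ⟨eG.symm ⟨x, hx'⟩, ?_⟩
      show ((eG (eG.symm ⟨x, hx'⟩) : ↥(P 0))) = x
      rw [eG.apply_symm_apply]
    · rintro ⟨a, rfl⟩
      apply Subtype.ext
      exact (eG a).2
  · exact ⟨fun i => P (i+1), fun i => d (i+1), fun i => hproj (i+1), fun i => hexd (i+1),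
      fun Z hZ i F hF => hlift Z hZ (i+1) F hF,
      ⟨LinearEquiv.refl R ↥(LinearMap.ker (d (0+1)))⟩⟩

theorem pdLE_of_equiv : ∀ (n : ℕ) {M N : ModuleCat.{u} R},
    (↥M ≃ₗ[R] ↥N) → pdLE R n M → pdLE R n N := by
  intro n
  induction n with
  | zero =>
    intro M N e h
    have : Module.Projective R ↥M := h
    exact Module.Projective.of_equiv e
  | succ n ih =>
    intro M N e h
    obtain ⟨Pm, p, hP, hs, hk⟩ := h
    refine ⟨Pm, (e : ↥M →ₗ[R] ↥N).comp p, hP, e.surjective.comp hs, ?_⟩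
    have hker : LinearMap.ker ((e : ↥M →ₗ[R] ↥N).comp p) = LinearMap.ker p := by
      rw [LinearMap.ker_comp]
      have : LinearMap.ker (e : ↥M →ₗ[R] ↥N) = ⊥ := LinearMap.ker_eq_bot.mpr e.injective
      rw [this, Submodule.comap_bot]
    rw [hker]
    exact hk

theorem exact_subtype_ker {M N : ModuleCat.{u} R} (p : ↥M →ₗ[R] ↥N) :
    Function.Exact ((LinearMap.ker p).subtype) p := by
  intro y
  constructor
  · intro hy
    exact ⟨⟨y, hy⟩, rfl⟩
  · rintro ⟨z, rfl⟩
    exact z.2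

theorem exact_mkQ {M : ModuleCat.{u} R} (V : Submodule R ↥M) :
    Function.Exact V.subtype V.mkQ := by
  intro y
  constructor
  · intro hy
    have := (Submodule.Quotient.mk_eq_zero V).mp hy
    exact ⟨⟨y, this⟩, rfl⟩
  · rintro ⟨z, rfl⟩
    exact (Submodule.Quotient.mk_eq_zero V).mpr z.2

/-- The inductive step: approximation from embedding at the previous level. -/
theorem gpd_approx_aux (n : ℕ)
    (hembed : ∀ (M' : ModuleCat.{u} R), GpdLE R n M' →
      ∃ (W C : ModuleCat.{u} R) (uu : ↥M' →ₗ[R] ↥W) (vv : ↥W →ₗ[R] ↥C),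
        Function.Injective uu ∧ Function.Surjective vv ∧ Function.Exact uu vv ∧
        pdLE R n W ∧ IsGorensteinProjective R C)
    (M : ModuleCat.{u} R) (hM : GpdLE R (n+1) M) :
    ∃ (K G : ModuleCat.{u} R) (i : ↥K →ₗ[R] ↥G) (p : ↥G →ₗ[R] ↥M),
      Function.Injective i ∧ Function.Surjective p ∧ Function.Exact i p ∧
      IsGorensteinProjective R G ∧ pdLE R n K := by
  obtain ⟨G₀, p₀, hG₀, hp₀, hker⟩ := hM
  obtain ⟨W, C, uu, vv, huu, hvv, huv, hpdW, hC⟩ := hembed _ hker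
  obtain ⟨E, inW, outC, inB, outCc, h1, h2, h3, h4, h5, h6⟩ :=
    pushout_ses (A := ModuleCat.of R ↥(LinearMap.ker p₀)) (B := G₀) (C := M)
      ((LinearMap.ker p₀).subtype) p₀ (Submodule.injective_subtype _) hp₀
      (exact_subtype_ker p₀) uu huu vv hvv huv
  exact ⟨W, E, inW, outC, h1, h2, h3, gp_extension inB outCc h4 h5 h6 hG₀ hC, hpdW⟩

/-- Embedding into a module of finite projective dimension with GP cokernel. -/
theorem gpd_embed : ∀ (n : ℕ) (M : ModuleCat.{u} R), GpdLE R n M →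
    ∃ (W C : ModuleCat.{u} R) (uu : ↥M →ₗ[R] ↥W) (vv : ↥W →ₗ[R] ↥C),
      Function.Injective uu ∧ Function.Surjective vv ∧ Function.Exact uu vv ∧
      pdLE R n W ∧ IsGorensteinProjective R C := by
  intro n
  induction n with
  | zero =>
    intro M hM
    have hGP : IsGorensteinProjective R M := hM
    obtain ⟨Pm, C, uu, vv, hproj, hu, hv, huv, hC⟩ := gp_embed hGP
    exact ⟨Pm, C, uu, vv, hu, hv, huv, hproj, hC⟩
  | succ n ih =>
    intro M hM
    obtain ⟨K, G, i, p, hi, hp, hip, hG, hK⟩ := gpd_approx_aux n ih M hM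
    obtain ⟨Pm, C', j, vC, hprojPm, hj, hvC, hjv, hC'⟩ := gp_embed hG
    set ji : ↥K →ₗ[R] ↥Pm := j.comp i with hjidef
    have hji : Function.Injective ji := by
      intro a b hab
      exact hi (hj hab)
    set V : Submodule R ↥Pm := LinearMap.range ji with hV
    let Wq : ModuleCat.{u} R := ModuleCat.of R (↥Pm ⧸ V)
    obtain ⟨u', hu'c⟩ := factor_surj p hp (V.mkQ.comp j) (by
      intro gg hgg
      obtain ⟨k, hk⟩ := (hip gg).mp hgg
      show V.mkQ (j gg) = 0
      rw [← hk]
      exact (Submodule.Quotient.mk_eq_zero _).mpr ⟨k, rfl⟩)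
    have hu'x : ∀ gg, u' (p gg) = V.mkQ (j gg) := fun gg => congrArg (fun F => F gg) hu'c
    have hkill : ∀ z ∈ V, vC z = 0 := by
      rintro z ⟨k, rfl⟩
      exact (hjv (ji k)).mpr ⟨i k, rfl⟩
    let v' : ↥Wq →ₗ[R] ↥C' := V.liftQ vC hkill
    have hv'mk : ∀ x, v' (V.mkQ x) = vC x := fun x => rfl
    have hu' : Function.Injective u' := by
      rw [← LinearMap.ker_eq_bot, Submodule.eq_bot_iff]
      intro mm hmm
      obtain ⟨gg, rfl⟩ := hp mm
      have hmm' : u' (p gg) = 0 := hmm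
      rw [hu'x] at hmm'
      have : j gg ∈ V := by
        have h0 : (Submodule.Quotient.mk (j gg) : _ ⧸ V) = 0 := hmm'
        exact (Submodule.Quotient.mk_eq_zero V).mp h0
      obtain ⟨k, hk⟩ := this
      have : gg = i k := hj hk.symm
      rw [this]
      exact hip.apply_apply_eq_zero k
    have hv' : Function.Surjective v' := by
      intro c
      obtain ⟨x, hx⟩ := hvC c
      exact ⟨V.mkQ x, hx⟩
    have huv' : Function.Exact u' v' := by
      intro w
      constructor
      · intro hw
        obtain ⟨x, rfl⟩ := V.mkQ_surjective w
        have : vC x = 0 := hw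
        obtain ⟨gg, hgg⟩ := (hjv x).mp this
        exact ⟨p gg, by rw [hu'x, hgg]⟩
      · rintro ⟨mm, rfl⟩
        obtain ⟨gg, rfl⟩ := hp mm
        rw [hu'x]
        show vC (j gg) = 0
        exact hjv.apply_apply_eq_zero gg
    refine ⟨Wq, C', u', v', hu', hv', huv', ?_, hC'⟩
    refine ⟨Pm, V.mkQ, hprojPm, V.mkQ_surjective, ?_⟩
    have hkmk : LinearMap.ker V.mkQ = V := Submodule.ker_mkQ V
    rw [hkmk]
    exact pdLE_of_equiv n (LinearEquiv.ofInjective ji hji) hK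

end GPAux

/-- If `Gpd M ≤ n` (with `n ≥ 1`), there is a short exact sequence `0 → K → G → M → 0`
with `G` Gorenstein projective and `pd K ≤ n - 1`, which remains exact after applying
`Hom_R(-, X)` for every `X ∈ P_n^⊥`. -/
theorem gp_approximation_sequence (R : Type u) [Ring R] (n : ℕ) (hn : 1 ≤ n)
    (M : ModuleCat.{u} R) (hM : GpdLE R n M) :
    ∃ (K G : ModuleCat.{u} R) (i : K →ₗ[R] G) (p : G →ₗ[R] M),
      Function.Injective i ∧ Function.Surjective p ∧ Function.Exact i p ∧
      IsGorensteinProjective R G ∧ pdLE R (n - 1) K ∧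
      (∀ X : ModuleCat.{u} R,
        (∀ L : ModuleCat.{u} R, pdLE R n L → Ext1Vanishes R L X) →
        ∀ φ : K →ₗ[R] X, ∃ ψ : G →ₗ[R] X, ψ ∘ₗ i = φ) := by
  obtain ⟨m, rfl⟩ : ∃ m, n = m + 1 := ⟨n - 1, by omega⟩
  obtain ⟨K, G, i, p, hi, hp, hip, hG, hK⟩ :=
    GPAux.gpd_approx_aux m (GPAux.gpd_embed m) M hM
  refine ⟨K, G, i, p, hi, hp, hip, hG, hK, ?_⟩
  intro X hX φ
  obtain ⟨Pm, C', j, vC, hprojPm, hj, hvC, hjv, hC'⟩ := GPAux.gp_embed hG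
  set ji : ↥K →ₗ[R] ↥Pm := j.comp i with hjidef
  have hji : Function.Injective ji := fun a b hab => hi (hj hab)
  set V : Submodule R ↥Pm := LinearMap.range ji with hV
  let Wq : ModuleCat.{u} R := ModuleCat.of R (↥Pm ⧸ V)
  have hpd : pdLE R (m+1) Wq := by
    refine ⟨Pm, V.mkQ, hprojPm, V.mkQ_surjective, ?_⟩
    rw [Submodule.ker_mkQ V]
    exact GPAux.pdLE_of_equiv m (LinearEquiv.ofInjective ji hji) hK
  have hlifts : GPAux.Lifts R Wq X := GPAux.ext1_to_lifts (hX Wq hpd)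
  have hex : Function.Exact ji V.mkQ := by
    intro z
    constructor
    · intro hz
      have h0 : (Submodule.Quotient.mk z : _ ⧸ V) = 0 := hz
      obtain ⟨k, hk⟩ := (Submodule.Quotient.mk_eq_zero V).mp h0
      exact ⟨k, hk⟩
    · rintro ⟨k, rfl⟩
      show (Submodule.Quotient.mk (ji k) : _ ⧸ V) = 0
      exact (Submodule.Quotient.mk_eq_zero V).mpr ⟨k, rfl⟩
  obtain ⟨ψP, hψP⟩ := hlifts K Pm ji V.mkQ hji V.mkQ_surjective hex φ
  refine ⟨ψP.comp j, ?_⟩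
  ext x
  show ψP (j (i x)) = φ x
  exact congrArg (fun F => F x) hψP
end

section
/- Let R be a ring and M a module. If there is a short exact sequence 0 → M → L → N → 0 with L of projective dimension at most n and N Gorenstein projective, then M has Gorenstein projective dimension at most n. -/
universe u

open LinearMap

variable {R : Type u} [Ring R]

section Utils
variable {A C W : Type u} [AddCommGroup A] [AddCommGroup C] [AddCommGroup W]
  [Module R A] [Module R C] [Module R W]

/-- Factor a linear map through a surjection whose kernel it kills. -/
theorem exists_factorThru (g : A →ₗ[R] C) (hg : Function.Surjective g)
    (f : A →ₗ[R] W) (hker : ∀ a, g a = 0 → f a = 0) :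
    ∃ h : C →ₗ[R] W, h ∘ₗ g = f := by
  have key : ∀ a a' : A, g a = g a' → f a = f a' := by
    intro a a' h
    have : f (a - a') = 0 := hker _ (by simp [h])
    simpa [map_sub, sub_eq_zero] using this
  refine ⟨{ toFun := fun c => f (hg c).choose
            map_add' := ?_
            map_smul' := ?_ }, ?_⟩
  · intro x y
    have hx := (hg x).choose_spec
    have hy := (hg y).choose_spec
    have hxy := (hg (x + y)).choose_spec
    have := key (hg (x+y)).choose ((hg x).choose + (hg y).choose) (by simp [hx, hy, hxy])
    simpa using this
  · intro r x
    have hx := (hg x).choose_spec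
    have hrx := (hg (r • x)).choose_spec
    have := key (hg (r • x)).choose (r • (hg x).choose) (by simp [hx, hrx])
    simpa using this
  · ext a
    have h1 := (hg (g a)).choose_spec
    exact key _ a h1
end Utils
variable (R : Type u) [Ring R]

/-- concrete Ext¹(A, -) vanishing against projectives -/
def ExtVa (A : Type u) [AddCommGroup A] [Module R A] : Prop :=
  ∀ (E : Type u) [AddCommGroup E] [Module R E],
  ∀ (W : Type u) [AddCommGroup W] [Module R W], Module.Projective R W →
  ∀ (ι : W →ₗ[R] E) (σ : E →ₗ[R] A), Function.Injective ι → Function.Surjective σ →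
    Function.Exact ι σ → ∃ s : A →ₗ[R] E, ∀ a, σ (s a) = a

variable {R}

section ExtVaLemmas
variable {A B C : Type u} [AddCommGroup A] [AddCommGroup B] [AddCommGroup C]
  [Module R A] [Module R B] [Module R C]

theorem extva_congr (e : A ≃ₗ[R] B) (hA : ExtVa R A) : ExtVa R B := by
  intro E _ _ W _ _ hW ι σ hι hσ hex
  obtain ⟨s, hs⟩ := hA E W hW ι (e.symm.toLinearMap ∘ₗ σ) hι
    (e.symm.surjective.comp hσ) (by
      intro x
      constructor
      · intro h
        have h' : e.symm (σ x) = 0 := by simpa using h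
        exact (hex x).1 (by apply e.symm.injective; simpa using h')
      · rintro ⟨w, rfl⟩
        simp [hex.apply_apply_eq_zero w]
    )
  refine ⟨s ∘ₗ e.symm.toLinearMap, fun b => ?_⟩
  have h2 := hs (e.symm b)
  simp only [coe_comp, Function.comp_apply, LinearEquiv.coe_coe] at h2 ⊢
  exact e.symm.injective h2

theorem extva_of_projective (hA : Module.Projective R A) : ExtVa R A := by
  intro E _ _ W _ _ hW ι σ hι hσ hex
  obtain ⟨s, hs⟩ := Module.projective_lifting_property σ LinearMap.id hσ
  exact ⟨s, fun a => by simpa using LinearMap.congr_fun hs a⟩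

theorem extva_of_retract (ρ : C →ₗ[R] A) (τ : A →ₗ[R] C) (hρτ : ∀ a, ρ (τ a) = a)
    (hC : ExtVa R C) : ExtVa R A := by
  intro E _ _ W _ _ hW ι σ hι hσ hex
  -- pullback of σ and ρ
  set X : Submodule R (E × C) := LinearMap.ker ((σ ∘ₗ fst R E C) - (ρ ∘ₗ snd R E C)) with hX
  have memX : ∀ v : E × C, v ∈ X ↔ σ v.1 = ρ v.2 := by
    intro v; simp [hX, LinearMap.mem_ker, sub_eq_zero]
  have hι' : ∀ w : W, ((ι w, 0) : E × C) ∈ X := by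
    intro w; rw [memX]; simp [hex.apply_apply_eq_zero w]
  set ι' : W →ₗ[R] X := codRestrict X ((prod (LinearMap.id) 0) ∘ₗ ι)
    (fun w => by simpa using hι' w) with hι'def
  set π' : X →ₗ[R] C := snd R E C ∘ₗ X.subtype with hπ'
  have hπ'surj : Function.Surjective π' := by
    intro c
    obtain ⟨e, he⟩ := hσ (ρ c)
    exact ⟨⟨(e, c), (memX _).2 (by simpa using he)⟩, rfl⟩
  have hι'inj : Function.Injective ι' := by
    intro w w' h
    apply hι
    have := congrArg (fun x : X => (x : E × C).1) h
    simpa [ι'] using this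
  have hex' : Function.Exact ι' π' := by
    intro x
    constructor
    · intro h0
      have hx2 : (x : E × C).2 = 0 := h0
      have hσx : σ (x : E × C).1 = 0 := by
        have := (memX _).1 x.2
        rw [hx2] at this; simpa using this
      obtain ⟨w, hw⟩ := (hex _).1 hσx
      refine ⟨w, ?_⟩
      apply Subtype.ext
      show ((ι w, 0) : E × C) = (x : E × C)
      exact Prod.ext (by simpa using hw) hx2.symm
    · rintro ⟨w, rfl⟩
      simp [π', ι']
  obtain ⟨s', hs'⟩ := hC X W hW ι' π' hι'inj hπ'surj hex'
  refine ⟨fst R E C ∘ₗ X.subtype ∘ₗ s' ∘ₗ τ, fun a => ?_⟩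
  have hmem := (memX _).1 (s' (τ a)).2
  simp only [coe_comp, Function.comp_apply, Submodule.coe_subtype, fst_apply]
  rw [hmem]
  have h3 : π' (s' (τ a)) = τ a := hs' (τ a)
  simp only [hπ', coe_comp, Function.comp_apply, Submodule.coe_subtype, snd_apply] at h3
  rw [h3, hρτ]

end ExtVaLemmas

section Prod
variable {A B : Type u} [AddCommGroup A] [AddCommGroup B] [Module R A] [Module R B]

theorem extva_prod (hA : ExtVa R A) (hB : ExtVa R B) : ExtVa R (A × B) := by
  intro E _ _ W _ _ hW ι σ hι hσ hex
  set XA : Submodule R E := LinearMap.ker ((snd R A B) ∘ₗ σ) with hXA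
  have memXA : ∀ e : E, e ∈ XA ↔ (σ e).2 = 0 := fun e => by
    simp [hXA, LinearMap.mem_ker]
  set σA : XA →ₗ[R] A := fst R A B ∘ₗ σ ∘ₗ XA.subtype with hσA
  set ιA : W →ₗ[R] XA := codRestrict XA ι
    (fun w => (memXA _).2 (by rw [hex.apply_apply_eq_zero w]; rfl)) with hιA
  have hιAinj : Function.Injective ιA := fun w w' h => hι (congrArg Subtype.val h)
  have hσAsurj : Function.Surjective σA := by
    intro a
    obtain ⟨e, he⟩ := hσ (a, 0)
    refine ⟨⟨e, (memXA _).2 (by rw [he])⟩, ?_⟩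
    simp [hσA, he]
  have hexA : Function.Exact ιA σA := by
    intro x
    constructor
    · intro h0
      have h1 : (σ (x : E)).1 = 0 := h0
      have h2 : (σ (x : E)).2 = 0 := (memXA _).1 x.2
      have : σ (x : E) = 0 := Prod.ext h1 h2
      obtain ⟨w, hw⟩ := (hex _).1 this
      exact ⟨w, Subtype.ext hw⟩
    · rintro ⟨w, rfl⟩
      simp [hσA, hιA, hex.apply_apply_eq_zero w]
  obtain ⟨sA, hsA⟩ := hA XA W hW ιA σA hιAinj hσAsurj hexA
  set XB : Submodule R E := LinearMap.ker ((fst R A B) ∘ₗ σ) with hXB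
  have memXB : ∀ e : E, e ∈ XB ↔ (σ e).1 = 0 := fun e => by
    simp [hXB, LinearMap.mem_ker]
  set σB : XB →ₗ[R] B := snd R A B ∘ₗ σ ∘ₗ XB.subtype with hσB
  set ιB : W →ₗ[R] XB := codRestrict XB ι
    (fun w => (memXB _).2 (by rw [hex.apply_apply_eq_zero w]; rfl)) with hιB
  have hιBinj : Function.Injective ιB := fun w w' h => hι (congrArg Subtype.val h)
  have hσBsurj : Function.Surjective σB := by
    intro b
    obtain ⟨e, he⟩ := hσ (0, b)
    refine ⟨⟨e, (memXB _).2 (by rw [he])⟩, ?_⟩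
    simp [hσB, he]
  have hexB : Function.Exact ιB σB := by
    intro x
    constructor
    · intro h0
      have h1 : (σ (x : E)).2 = 0 := h0
      have h2 : (σ (x : E)).1 = 0 := (memXB _).1 x.2
      have : σ (x : E) = 0 := Prod.ext h2 h1
      obtain ⟨w, hw⟩ := (hex _).1 this
      exact ⟨w, Subtype.ext hw⟩
    · rintro ⟨w, rfl⟩
      simp [hσB, hιB, hex.apply_apply_eq_zero w]
  obtain ⟨sB, hsB⟩ := hB XB W hW ιB σB hιBinj hσBsurj hexB
  refine ⟨XA.subtype ∘ₗ sA ∘ₗ fst R A B + XB.subtype ∘ₗ sB ∘ₗ snd R A B, fun ab => ?_⟩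
  obtain ⟨a, b⟩ := ab
  have h1 : σ ((sA a : E)) = (a, 0) := by
    have := hsA a
    simp only [hσA, coe_comp, Function.comp_apply, Submodule.coe_subtype, fst_apply] at this
    exact Prod.ext this ((memXA _).1 (sA a).2)
  have h2 : σ ((sB b : E)) = (0, b) := by
    have := hsB b
    simp only [hσB, coe_comp, Function.comp_apply, Submodule.coe_subtype, snd_apply] at this
    exact Prod.ext ((memXB _).1 (sB b).2) this
  simp only [LinearMap.add_apply, coe_comp, Function.comp_apply, Submodule.coe_subtype,
    fst_apply, snd_apply, map_add]
  exact Prod.ext (by simp [h1, h2]) (by simp [h1, h2])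

end Prod

section Split
variable {K X B : Type u} [AddCommGroup K] [AddCommGroup X] [AddCommGroup B]
  [Module R K] [Module R X] [Module R B]

theorem split_equiv (ι : K →ₗ[R] X) (π : X →ₗ[R] B)
    (hι : Function.Injective ι) (hex : Function.Exact ι π)
    (s : B →ₗ[R] X) (hs : ∀ b, π (s b) = b) :
    Nonempty (X ≃ₗ[R] K × B) := by
  have hrange : ∀ x : X, x - s (π x) ∈ LinearMap.range ι := by
    intro x
    exact (hex _).1 (by simp [hs])
  set eK := LinearEquiv.ofInjective ι hι with heK
  have hcoe : ∀ k : K, ((eK k : X)) = ι k := fun k => rfl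
  have hcoe' : ∀ y : LinearMap.range ι, ι (eK.symm y) = (y : X) := by
    intro y
    have := hcoe (eK.symm y)
    rw [eK.apply_symm_apply] at this
    exact this.symm
  set t : X →ₗ[R] LinearMap.range ι :=
    codRestrict (LinearMap.range ι) (LinearMap.id - s ∘ₗ π) (fun x => hrange x) with ht
  have htval : ∀ x : X, ((t x : X)) = x - s (π x) := fun x => rfl
  set F : X →ₗ[R] K × B := prod (eK.symm.toLinearMap ∘ₗ t) π with hF
  set G : (K × B) →ₗ[R] X := ι ∘ₗ fst R K B + s ∘ₗ snd R K B with hG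
  have hGval : ∀ (k : K) (b : B), G (k, b) = ι k + s b := fun k b => rfl
  have hFval : ∀ x : X, F x = (eK.symm (t x), π x) := fun x => rfl
  refine ⟨LinearEquiv.ofLinear F G ?_ ?_⟩
  · apply LinearMap.ext
    rintro ⟨k, b⟩
    have h1 : π (G (k, b)) = b := by
      rw [hGval]; simp [hex.apply_apply_eq_zero k, hs]
    have h2 : ((t (G (k, b)) : X)) = ι k := by
      rw [htval, h1, hGval]; abel
    have h3 : eK.symm (t (G (k, b))) = k := by
      rw [eK.symm_apply_eq]
      exact Subtype.ext (by rw [hcoe, h2])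
    show F (G (k, b)) = (k, b)
    rw [hFval, h1, h3]
  · apply LinearMap.ext
    intro x
    show G (F x) = x
    rw [hFval, hGval, hcoe' (t x), htval]
    abel

end Split

section Schanuel
variable {A B A' B' C : Type u} [AddCommGroup A] [AddCommGroup B] [AddCommGroup A']
  [AddCommGroup B'] [AddCommGroup C]
  [Module R A] [Module R B] [Module R A'] [Module R B'] [Module R C]

theorem schanuel_s7 (a : A →ₗ[R] B) (f : B →ₗ[R] C)
    (ha : Function.Injective a) (hf : Function.Surjective f) (hab : Function.Exact a f)
    (a' : A' →ₗ[R] B') (f' : B' →ₗ[R] C)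
    (ha' : Function.Injective a') (hf' : Function.Surjective f') (hab' : Function.Exact a' f')
    (hB : Module.Projective R B) (hB' : Module.Projective R B') :
    Nonempty ((A × B') ≃ₗ[R] (A' × B)) := by
  set X : Submodule R (B × B') := LinearMap.ker ((f ∘ₗ fst R B B') - (f' ∘ₗ snd R B B')) with hX
  have memX : ∀ v : B × B', v ∈ X ↔ f v.1 = f' v.2 := by
    intro v; simp [hX, LinearMap.mem_ker, sub_eq_zero]
  -- first fibration : X → B with kernel A'
  set π1 : X →ₗ[R] B := fst R B B' ∘ₗ X.subtype with hπ1
  set ι1 : A' →ₗ[R] X := codRestrict X (prod 0 a')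
    (fun x => (memX _).2 (by simp [hab'.apply_apply_eq_zero x])) with hι1
  have hπ1surj : Function.Surjective π1 := by
    intro b
    obtain ⟨b', hb'⟩ := hf' (f b)
    exact ⟨⟨(b, b'), (memX _).2 (by simp [hb'])⟩, rfl⟩
  have hι1inj : Function.Injective ι1 := by
    intro x y h
    exact ha' (congrArg (fun v : X => (v : B × B').2) h)
  have hex1 : Function.Exact ι1 π1 := by
    intro x
    constructor
    · intro h0
      have h1 : (x : B × B').1 = 0 := h0
      have h2 : f' (x : B × B').2 = 0 := by
        have := (memX _).1 x.2
        rw [h1] at this; simpa using this.symm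
      obtain ⟨w, hw⟩ := (hab' _).1 h2
      exact ⟨w, Subtype.ext (Prod.ext (by simp [ι1]; exact h1.symm) (by simpa [ι1] using hw))⟩
    · rintro ⟨w, rfl⟩
      simp [π1, ι1]
  obtain ⟨s1, hs1⟩ := Module.projective_lifting_property π1 LinearMap.id hπ1surj
  obtain ⟨e1⟩ := split_equiv ι1 π1 hι1inj hex1 s1
    (fun b => by simpa using LinearMap.congr_fun hs1 b)
  -- second fibration : X → B' with kernel A
  set π2 : X →ₗ[R] B' := snd R B B' ∘ₗ X.subtype with hπ2
  set ι2 : A →ₗ[R] X := codRestrict X (prod a 0)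
    (fun x => (memX _).2 (by simp [hab.apply_apply_eq_zero x])) with hι2
  have hπ2surj : Function.Surjective π2 := by
    intro b'
    obtain ⟨b, hb⟩ := hf (f' b')
    exact ⟨⟨(b, b'), (memX _).2 (by simp [hb])⟩, rfl⟩
  have hι2inj : Function.Injective ι2 := by
    intro x y h
    exact ha (congrArg (fun v : X => (v : B × B').1) h)
  have hex2 : Function.Exact ι2 π2 := by
    intro x
    constructor
    · intro h0
      have h1 : (x : B × B').2 = 0 := h0
      have h2 : f (x : B × B').1 = 0 := by
        have := (memX _).1 x.2
        rw [h1] at this; simpa using this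
      obtain ⟨w, hw⟩ := (hab _).1 h2
      exact ⟨w, Subtype.ext (Prod.ext (by simpa [ι2] using hw) (by simp [ι2]; exact h1.symm))⟩
    · rintro ⟨w, rfl⟩
      simp [π2, ι2]
  obtain ⟨s2, hs2⟩ := Module.projective_lifting_property π2 LinearMap.id hπ2surj
  obtain ⟨e2⟩ := split_equiv ι2 π2 hι2inj hex2 s2
    (fun b => by simpa using LinearMap.congr_fun hs2 b)
  exact ⟨e2.symm.trans e1⟩

end Schanuel

section Complex
variable {P : ℤ → ModuleCat.{u} R} {d : ∀ i : ℤ, P i →ₗ[R] P (i+1)}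

theorem extva_ker_aux
    (hproj : ∀ i, Module.Projective R (P i))
    (hexact : ∀ i, Function.Exact (d i) (d (i+1)))
    (hlift : ∀ (Q : ModuleCat.{u} R), Module.Projective R Q →
      ∀ (i : ℤ) (f : P (i+1) →ₗ[R] Q), f ∘ₗ d i = 0 →
        ∃ g : P (i+1+1) →ₗ[R] Q, g ∘ₗ d (i+1) = f)
    (i : ℤ) : ExtVa R (LinearMap.ker (d (i+1+1+1))) := by
  intro E _ _ W _ _ hW ι σ hι hσ hex
  set π : P (i+1+1) →ₗ[R] LinearMap.ker (d (i+1+1+1)) :=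
    codRestrict _ (d (i+1+1)) (fun x => (hexact (i+1+1)).apply_apply_eq_zero x) with hπ
  have hπval : ∀ x, ((π x : P (i+1+1+1))) = d (i+1+1) x := fun x => rfl
  have hπsurj : Function.Surjective π := by
    rintro ⟨y, hy⟩
    obtain ⟨x, hx⟩ := ((hexact (i+1+1)) y).1 hy
    exact ⟨x, Subtype.ext (by rw [hπval, hx])⟩
  obtain ⟨φ, hφ⟩ := Module.projective_lifting_property (h := hproj (i+1+1)) σ π hσ
  have hφval : ∀ x, σ (φ x) = π x := fun x => LinearMap.congr_fun hφ x
  have hmem : ∀ x : P (i+1), φ (d (i+1) x) ∈ LinearMap.range ι := by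
    intro x
    apply (hex _).1
    have : π (d (i+1) x) = 0 :=
      Subtype.ext (by rw [hπval]; exact (hexact (i+1)).apply_apply_eq_zero x)
    rw [hφval, this]
  set eι := LinearEquiv.ofInjective ι hι with heι
  have hcoe' : ∀ y : LinearMap.range ι, ι (eι.symm y) = (y : E) := by
    intro y
    have : ((eι (eι.symm y) : E)) = ι (eι.symm y) := rfl
    rw [eι.apply_symm_apply] at this
    exact this.symm
  set ψ : P (i+1) →ₗ[R] W :=
    eι.symm.toLinearMap ∘ₗ codRestrict (LinearMap.range ι) (φ ∘ₗ d (i+1)) hmem with hψ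
  have hψval : ∀ x, ι (ψ x) = φ (d (i+1) x) := by
    intro x
    show ι (eι.symm _) = _
    rw [hcoe']
    rfl
  have hψd : ψ ∘ₗ d i = 0 := by
    apply LinearMap.ext
    intro x
    apply hι
    show ι (ψ (d i x)) = ι 0
    rw [hψval]
    have h1 : d (i+1) (d i x) = 0 := (hexact i).apply_apply_eq_zero x
    rw [h1]
    simp
  obtain ⟨g, hg⟩ := hlift (ModuleCat.of R W) hW i ψ hψd
  have hgval : ∀ x, g (d (i+1) x) = ψ x := fun x => LinearMap.congr_fun hg x
  set φ' : P (i+1+1) →ₗ[R] E := φ - ι ∘ₗ g with hφ'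
  have hφ'val : ∀ x, φ' x = φ x - ι (g x) := fun x => rfl
  have hσφ' : ∀ x, σ (φ' x) = π x := by
    intro x
    rw [hφ'val, map_sub, hφval]
    have : σ (ι (g x)) = 0 := hex.apply_apply_eq_zero _
    rw [this, sub_zero]
  have hφ'd : ∀ x, φ' (d (i+1) x) = 0 := by
    intro x
    rw [hφ'val, hgval, hψval, sub_self]
  obtain ⟨s, hs⟩ := exists_factorThru π hπsurj φ' (by
    intro x hx
    have hdx : d (i+1+1) x = 0 := congrArg Subtype.val hx
    obtain ⟨y, hy⟩ := ((hexact (i+1)) x).1 hdx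
    rw [← hy]
    exact hφ'd y)
  refine ⟨s, fun c => ?_⟩
  obtain ⟨x, rfl⟩ := hπsurj c
  have : s (π x) = φ' x := LinearMap.congr_fun hs x
  rw [this, hσφ']

theorem extva_ker
    (hproj : ∀ i, Module.Projective R (P i))
    (hexact : ∀ i, Function.Exact (d i) (d (i+1)))
    (hlift : ∀ (Q : ModuleCat.{u} R), Module.Projective R Q →
      ∀ (i : ℤ) (f : P (i+1) →ₗ[R] Q), f ∘ₗ d i = 0 →
        ∃ g : P (i+1+1) →ₗ[R] Q, g ∘ₗ d (i+1) = f)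
    (j : ℤ) : ExtVa R (LinearMap.ker (d j)) := by
  have h : j - 1 - 1 - 1 + 1 + 1 + 1 = j := by ring
  rw [← h]
  exact extva_ker_aux hproj hexact hlift (j - 1 - 1 - 1)

end Complex

section Extend
variable {A B C W : Type u} [AddCommGroup A] [AddCommGroup B] [AddCommGroup C] [AddCommGroup W]
  [Module R A] [Module R B] [Module R C] [Module R W]

theorem exists_extension (a : A →ₗ[R] B) (f : B →ₗ[R] C)
    (ha : Function.Injective a) (hf : Function.Surjective f) (hex : Function.Exact a f)
    (hC : ExtVa R C) (hW : Module.Projective R W) (h : A →ₗ[R] W) :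
    ∃ H : B →ₗ[R] W, H ∘ₗ a = h := by
  set S : Submodule R (W × B) := LinearMap.range (prod h (-a)) with hS
  have memS : ∀ v : W × B, v ∈ S ↔ ∃ m : A, h m = v.1 ∧ -(a m) = v.2 := by
    intro v
    constructor
    · rintro ⟨m, rfl⟩; exact ⟨m, rfl, rfl⟩
    · rintro ⟨m, h1, h2⟩; exact ⟨m, Prod.ext h1 h2⟩
  set mk : (W × B) →ₗ[R] ((W × B) ⧸ S) := S.mkQ with hmk
  set ιW : W →ₗ[R] ((W × B) ⧸ S) := mk ∘ₗ inl R W B with hιW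
  set jB : B →ₗ[R] ((W × B) ⧸ S) := mk ∘ₗ inr R W B with hjB
  set σ : ((W × B) ⧸ S) →ₗ[R] C := S.liftQ (f ∘ₗ snd R W B) (by
    rintro v ⟨m, rfl⟩
    show f (-(a m)) = 0
    rw [map_neg, hex.apply_apply_eq_zero m, neg_zero]) with hσ
  have hσmk : ∀ v : W × B, σ (mk v) = f v.2 := fun v => rfl
  have hmk0 : ∀ x : W × B, mk x = 0 ↔ x ∈ S := fun x => by
    rw [hmk, Submodule.mkQ_apply, Submodule.Quotient.mk_eq_zero]
  have hιWinj : Function.Injective ιW := by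
    intro w w' hww
    have h0 : mk (w - w', 0) = 0 := by
      have hp : ((w, 0) : W × B) - (w', 0) = (w - w', 0) := by simp
      have h0' : mk (w - w', 0) = ιW w - ιW w' := by
        rw [← hp, map_sub]
        rfl
      rw [h0', hww, sub_self]
    obtain ⟨m, h1, h2⟩ := (memS _).1 ((hmk0 _).1 h0)
    have hm : m = 0 := ha (by simpa using h2.symm)
    have hww0 : w - w' = 0 := by rw [hm] at h1; simpa using h1.symm
    exact sub_eq_zero.1 hww0
  have hσsurj : Function.Surjective σ := by
    intro c
    obtain ⟨b, rfl⟩ := hf c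
    exact ⟨jB b, rfl⟩
  have hmksurj : Function.Surjective mk := S.mkQ_surjective
  have hexWσ : Function.Exact ιW σ := by
    intro e
    obtain ⟨v, rfl⟩ := hmksurj e
    constructor
    · intro h0
      rw [hσmk] at h0
      obtain ⟨m, hm⟩ := (hex _).1 h0
      refine ⟨v.1 + h m, ?_⟩
      show mk (v.1 + h m, 0) = mk v
      rw [← sub_eq_zero, ← map_sub]
      refine (hmk0 _).2 ((memS _).2 ⟨m, ?_, ?_⟩) <;> simp [hm]
    · rintro ⟨w, hw⟩
      rw [← hw]
      show σ (mk (w, 0)) = 0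
      rw [hσmk]
      simp
  obtain ⟨s, hs⟩ := hC ((W × B) ⧸ S) W hW ιW σ hιWinj hσsurj hexWσ
  set t : ((W × B) ⧸ S) →ₗ[R] ((W × B) ⧸ S) := LinearMap.id - s ∘ₗ σ with hT
  have htmem : ∀ e, t e ∈ LinearMap.range ιW := by
    intro e
    apply (hexWσ _).1
    show σ (e - s (σ e)) = 0
    rw [map_sub, hs, sub_self]
  set eW := LinearEquiv.ofInjective ιW hιWinj with heW
  have hcoe' : ∀ y : LinearMap.range ιW, ιW (eW.symm y) = (y : (W × B) ⧸ S) := by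
    intro y
    have : ((eW (eW.symm y) : (W × B) ⧸ S)) = ιW (eW.symm y) := rfl
    rw [eW.apply_symm_apply] at this
    exact this.symm
  set r : ((W × B) ⧸ S) →ₗ[R] W :=
    eW.symm.toLinearMap ∘ₗ codRestrict (LinearMap.range ιW) t htmem with hr
  have hrιW : ∀ w, r (ιW w) = w := by
    intro w
    have h1 : t (ιW w) = ιW w := by
      show ιW w - s (σ (ιW w)) = ιW w
      have : σ (ιW w) = 0 := hexWσ.apply_apply_eq_zero w
      rw [this, map_zero, sub_zero]
    apply hιWinj
    show ιW (eW.symm _) = ιW w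
    rw [hcoe']
    show ((t (ιW w) : (W × B) ⧸ S)) = ιW w
    rw [h1]
  refine ⟨r ∘ₗ jB, ?_⟩
  apply LinearMap.ext
  intro m
  show r (jB (a m)) = h m
  have hjBa : jB (a m) = ιW (h m) := by
    show mk (0, a m) = mk (h m, 0)
    rw [← sub_eq_zero, ← map_sub]
    exact (hmk0 _).2 ((memS _).2 ⟨-m, by simp, by simp⟩)
  rw [hjBa, hrιW]

end Extend

open CategoryTheory

theorem gp_congr {M M' : ModuleCat.{u} R} (e : (M : Type u) ≃ₗ[R] (M' : Type u))
    (h : IsGorensteinProjective R M) : IsGorensteinProjective R M' := by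
  obtain ⟨P, d, h1, h2, h3, ⟨e0⟩⟩ := h
  exact ⟨P, d, h1, h2, h3, ⟨e.symm.trans e0⟩⟩

theorem gp_of_projective (Q : ModuleCat.{u} R) (hQ : Module.Projective R Q) :
    IsGorensteinProjective R Q := by
  haveI := hQ
  refine ⟨fun _ => ModuleCat.of R ((↑Q × ↑Q : Type u)),
    fun _ => LinearMap.prod (LinearMap.snd R Q Q) 0, fun i => ?_, fun i => ?_, ?_, ?_⟩
  · exact inferInstanceAs (Module.Projective R (↑Q × ↑Q : Type u))
  · intro y
    constructor
    · intro h0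
      have h2 : (y.2 : (Q : Type u)) = 0 := congrArg Prod.fst h0
      exact ⟨(0, y.1), Prod.ext rfl h2.symm⟩
    · rintro ⟨x, rfl⟩
      rfl
  · intro W hW i f hf
    refine ⟨f ∘ₗ LinearMap.prod 0 (LinearMap.fst R Q Q), ?_⟩
    apply LinearMap.ext
    rintro ⟨a, b⟩
    show f (0, b) = f (a, b)
    have h1 : f (a, 0) = 0 := LinearMap.congr_fun hf (0, a)
    have h2 : ((a, b) : (↑Q × ↑Q : Type u)) = (a, 0) + (0, b) := by simp
    rw [h2, map_add, h1, zero_add]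
  · refine ⟨LinearEquiv.ofBijective
      (LinearMap.codRestrict _ (LinearMap.prod LinearMap.id 0)
        (fun a => LinearMap.mem_ker.mpr rfl)) ⟨?_, ?_⟩⟩
    · intro x y hxy
      exact congrArg (fun v => (Subtype.val v).1) hxy
    · rintro ⟨⟨a, b⟩, hmem⟩
      have hb : b = 0 := congrArg Prod.fst (LinearMap.mem_ker.mp hmem)
      exact ⟨a, Subtype.ext (Prod.ext rfl hb.symm)⟩

theorem gpdLE_congr (n : ℕ) : ∀ {M M' : ModuleCat.{u} R},
    ((M : Type u) ≃ₗ[R] (M' : Type u)) → GpdLE R n M → GpdLE R n M' := by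
  induction n with
  | zero =>
    intro M M' e h
    exact gp_congr e h
  | succ n ih =>
    intro M M' e h
    obtain ⟨G, p, hG, hp, hker⟩ := h
    refine ⟨G, e.toLinearMap ∘ₗ p, hG, e.surjective.comp hp, ?_⟩
    have hk : LinearMap.ker (e.toLinearMap ∘ₗ p) = LinearMap.ker p := by
      ext x
      simp [LinearMap.mem_ker]
    rw [hk]
    exact hker

theorem gpdLE_of_pdLE (n : ℕ) : ∀ {M : ModuleCat.{u} R}, pdLE R n M → GpdLE R n M := by
  induction n with
  | zero =>
    intro M h
    exact gp_of_projective M h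
  | succ n ih =>
    intro M h
    obtain ⟨P, p, hP, hp, hker⟩ := h
    exact ⟨P, p, gp_of_projective P hP, hp, ih hker⟩

noncomputable def canonF (A : Type u) [AddCommGroup A] [Module R A] : (A →₀ R) →ₗ[R] A :=
  Finsupp.linearCombination R _root_.id

theorem canonF_surjective (A : Type u) [AddCommGroup A] [Module R A] :
    Function.Surjective (canonF (R := R) A) := by
  intro a
  exact ⟨Finsupp.single a 1, by simp [canonF]⟩

noncomputable def Syz (M : ModuleCat.{u} R) : ℕ → ModuleCat.{u} R
  | 0 => M
  | k+1 => ModuleCat.of R (LinearMap.ker (canonF (R := R) (Syz M k)))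

theorem exact_subtype_canonF (A : Type u) [AddCommGroup A] [Module R A] :
    Function.Exact (LinearMap.ker (canonF (R := R) A)).subtype (canonF (R := R) A) := by
  intro y
  constructor
  · intro h0
    exact ⟨⟨y, LinearMap.mem_ker.2 h0⟩, rfl⟩
  · rintro ⟨z, rfl⟩
    exact LinearMap.mem_ker.1 z.2

theorem exact_syz_helper {A B : Type u} [AddCommGroup A] [AddCommGroup B]
    [Module R A] [Module R B] (T : A →ₗ[R] B) (hT : Function.Injective T) :
    Function.Exact
      ((LinearMap.ker (canonF (R := R) A)).subtype ∘ₗ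
        canonF (R := R) (LinearMap.ker (canonF (R := R) A)))
      (T ∘ₗ canonF (R := R) A) := by
  intro y
  constructor
  · intro h0
    have h1 : canonF (R := R) A y = 0 := by
      apply hT
      simpa using h0
    obtain ⟨x, hx⟩ := canonF_surjective (R := R) (LinearMap.ker (canonF (R := R) A))
      ⟨y, LinearMap.mem_ker.2 h1⟩
    exact ⟨x, congrArg Subtype.val hx⟩
  · rintro ⟨x, rfl⟩
    show T (canonF (R := R) A ((canonF (R := R) _ x : LinearMap.ker (canonF (R := R) A)) : A →₀ R)) = 0
    rw [LinearMap.mem_ker.1 (canonF (R := R) (LinearMap.ker (canonF (R := R) A)) x).2]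
    simp

theorem lift_syz_helper {A B C W : Type u} [AddCommGroup A] [AddCommGroup B]
    [AddCommGroup C] [AddCommGroup W] [Module R A] [Module R B] [Module R C] [Module R W]
    (T : A →ₗ[R] B) (F : B →ₗ[R] C)
    (hT : Function.Injective T) (hF : Function.Surjective F) (hex : Function.Exact T F)
    (hC : ExtVa R C) (hW : Module.Projective R W)
    (f : (A →₀ R) →ₗ[R] W)
    (hf : f ∘ₗ ((LinearMap.ker (canonF (R := R) A)).subtype ∘ₗ
        canonF (R := R) (LinearMap.ker (canonF (R := R) A))) = 0) :
    ∃ g : B →ₗ[R] W, g ∘ₗ (T ∘ₗ canonF (R := R) A) = f := by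
  have hfker : ∀ y : A →₀ R, canonF (R := R) A y = 0 → f y = 0 := by
    intro y hy
    obtain ⟨x, hx⟩ := canonF_surjective (R := R) (LinearMap.ker (canonF (R := R) A))
      ⟨y, LinearMap.mem_ker.2 hy⟩
    have h1 := LinearMap.congr_fun hf x
    have h2 : ((LinearMap.ker (canonF (R := R) A)).subtype ∘ₗ
        canonF (R := R) (LinearMap.ker (canonF (R := R) A))) x = y := by
      show ((canonF (R := R) (LinearMap.ker (canonF (R := R) A)) x : LinearMap.ker (canonF (R := R) A)) : A →₀ R) = y
      rw [hx]
    rw [← h2]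
    exact h1
  obtain ⟨h, hh⟩ := exists_factorThru (canonF (R := R) A) (canonF_surjective (R := R) A) f hfker
  obtain ⟨H, hH⟩ := exists_extension T F hT hF hex hC hW h
  refine ⟨H, ?_⟩
  rw [← LinearMap.comp_assoc, hH, hh]

theorem gp_of_ses_proj (M L N : ModuleCat.{u} R) (i : M →ₗ[R] L) (p : L →ₗ[R] N)
    (hi : Function.Injective i) (hp : Function.Surjective p) (he : Function.Exact i p)
    (hLproj : Module.Projective R L) (hN : IsGorensteinProjective R N) :
    IsGorensteinProjective R M := by
  obtain ⟨P, d, hproj, hexact, hlift, ⟨eN⟩⟩ := hN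
  have hdd : ∀ (j : ℤ) (x : (P j : Type u)), d (j+1) (d j x) = 0 :=
    fun j x => (hexact j).apply_apply_eq_zero x
  have extvN : ExtVa R (N : Type u) :=
    extva_congr eN.symm (extva_ker hproj hexact hlift 0)
  have chain : ∀ k : ℕ, ∃ (jz : ℤ) (U V : ModuleCat.{u} R),
      Module.Projective R (U : Type u) ∧ Module.Projective R (V : Type u) ∧
      Nonempty ((Prod (Syz M k : Type u) (U : Type u)) ≃ₗ[R]
        (Prod (LinearMap.ker (d jz) : Type u) (V : Type u))) := by
    intro k
    induction k with
    | zero =>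
      refine ⟨-1, P (-1), L, hproj _, hLproj, ?_⟩
      have hex1 : Function.Exact i (eN.toLinearMap ∘ₗ p) := by
        intro l
        constructor
        · intro h0
          exact (he l).1 (eN.map_eq_zero_iff.1 h0)
        · rintro ⟨m, rfl⟩
          show eN (p (i m)) = 0
          rw [he.apply_apply_eq_zero]
          simp
      have hsurj1 : Function.Surjective (eN.toLinearMap ∘ₗ p) := eN.surjective.comp hp
      set π1 : (P (-1) : Type u) →ₗ[R] LinearMap.ker (d 0) :=
        LinearMap.codRestrict _ (d (-1)) (fun x => LinearMap.mem_ker.2 (hdd (-1) x)) with hπ1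
      have hπ1surj : Function.Surjective π1 := by
        rintro ⟨y, hy⟩
        obtain ⟨x, hx⟩ := (hexact (-1) (show (P ((-1:ℤ)+1) : Type u) from y)).1
          (LinearMap.mem_ker.1 hy)
        exact ⟨x, Subtype.ext hx⟩
      have hexπ1 : Function.Exact (LinearMap.ker (d (-1))).subtype π1 := by
        intro x
        constructor
        · intro h0
          exact ⟨⟨x, LinearMap.mem_ker.2 (congrArg Subtype.val h0)⟩, rfl⟩
        · rintro ⟨z, rfl⟩
          exact Subtype.ext (LinearMap.mem_ker.1 z.2)
      exact schanuel_s7 i (eN.toLinearMap ∘ₗ p) hi hsurj1 hex1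
        (LinearMap.ker (d (-1))).subtype π1 (Submodule.injective_subtype _) hπ1surj hexπ1
        hLproj (hproj (-1))
    | succ k ih =>
      obtain ⟨jz, U, V, hU, hV, ⟨e⟩⟩ := ih
      have hj : jz - 1 + 1 = jz := by ring
      rw [← hj] at e
      haveI := hU
      haveI := hV
      haveI := hproj (jz - 1)
      set cA := canonF (R := R) (Syz M k : Type u) with hcA
      set aL : ((Syz M (k+1)) : Type u) →ₗ[R] (Prod ((Syz M k : Type u) →₀ R) (U : Type u)) :=
        LinearMap.prod (LinearMap.ker cA).subtype 0 with haL
      set fL : (Prod ((Syz M k : Type u) →₀ R) (U : Type u)) →ₗ[R]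
          (Prod (Syz M k : Type u) (U : Type u)) :=
        LinearMap.prodMap cA LinearMap.id with hfL
      have haLinj : Function.Injective aL := by
        intro x y hxy
        exact Subtype.ext (congrArg Prod.fst hxy)
      have hfLsurj : Function.Surjective fL := by
        rintro ⟨v, u⟩
        obtain ⟨x, hx⟩ := canonF_surjective (R := R) (Syz M k : Type u) v
        exact ⟨(x, u), by show (cA x, u) = (v, u); rw [hx]⟩
      have hexL : Function.Exact aL fL := by
        rintro ⟨v, u⟩
        constructor
        · intro h0
          have h1 : cA v = 0 := congrArg Prod.fst h0
          have h2 : u = 0 := congrArg Prod.snd h0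
          refine ⟨(⟨v, LinearMap.mem_ker.2 h1⟩ : LinearMap.ker cA), ?_⟩
          show ((v, 0) : Prod ((Syz M k : Type u) →₀ R) (U : Type u)) = (v, u)
          rw [h2]
        · rintro ⟨z, hzeq⟩
          rw [← hzeq]
          have hz2 : cA ((LinearMap.ker cA).subtype (show ↥(LinearMap.ker cA) from z)) = 0 :=
            LinearMap.mem_ker.1 (show ↥(LinearMap.ker cA) from z).2
          show ((cA ((LinearMap.ker cA).subtype (show ↥(LinearMap.ker cA) from z)),
            (0 : (U : Type u))) : Prod (Syz M k : Type u) (U : Type u)) = 0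
          rw [hz2]
          rfl
      set aR : (LinearMap.ker (d (jz - 1)) : Type u) →ₗ[R]
          (Prod (P (jz - 1) : Type u) (V : Type u)) :=
        LinearMap.prod (LinearMap.ker (d (jz - 1))).subtype 0 with haR
      set π2 : (P (jz - 1) : Type u) →ₗ[R] LinearMap.ker (d (jz - 1 + 1)) :=
        LinearMap.codRestrict _ (d (jz - 1)) (fun x => LinearMap.mem_ker.2 (hdd (jz - 1) x))
        with hπ2
      have hπ2surj : Function.Surjective π2 := by
        rintro ⟨y, hy⟩
        obtain ⟨x, hx⟩ := (hexact (jz - 1) y).1 (LinearMap.mem_ker.1 hy)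
        exact ⟨x, Subtype.ext hx⟩
      set fR0 : (Prod (P (jz - 1) : Type u) (V : Type u)) →ₗ[R]
          (Prod (LinearMap.ker (d (jz - 1 + 1)) : Type u) (V : Type u)) :=
        LinearMap.prodMap π2 LinearMap.id with hfR0
      set fR : (Prod (P (jz - 1) : Type u) (V : Type u)) →ₗ[R]
          (Prod (Syz M k : Type u) (U : Type u)) := e.symm.toLinearMap ∘ₗ fR0 with hfR
      have haRinj : Function.Injective aR := by
        intro x y hxy
        exact Subtype.ext (congrArg Prod.fst hxy)
      have hfRsurj : Function.Surjective fR := by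
        intro c
        obtain ⟨⟨y, v⟩, hyv⟩ : ∃ w, fR0 w = e c := by
          obtain ⟨x, hx⟩ := hπ2surj (e c).1
          exact ⟨(x, (e c).2), by show (π2 x, (e c).2) = e c; rw [hx]⟩
        refine ⟨(y, v), ?_⟩
        show e.symm (fR0 (y, v)) = c
        rw [hyv, e.symm_apply_apply]
      have hexR : Function.Exact aR fR := by
        rintro ⟨y, v⟩
        constructor
        · intro h0
          have h1 : fR0 (y, v) = 0 := by
            have h2 : e.symm (fR0 (y, v)) = 0 := h0
            simpa using e.symm.map_eq_zero_iff.1 h2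
          have h3 : π2 y = 0 := congrArg Prod.fst h1
          have h4 : v = 0 := congrArg Prod.snd h1
          have h5 : d (jz - 1) y = 0 := congrArg Subtype.val h3
          refine ⟨⟨y, LinearMap.mem_ker.2 h5⟩, ?_⟩
          show ((y, 0) : Prod (P (jz - 1) : Type u) (V : Type u)) = (y, v)
          rw [h4]
        · rintro ⟨z, hzeq⟩
          rw [← hzeq]
          show e.symm (fR0 ((z : (P (jz - 1) : Type u)), 0)) = 0
          have h1 : fR0 ((z : (P (jz - 1) : Type u)), 0) = 0 := by
            show ((π2 (z : (P (jz - 1) : Type u)), 0) :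
              Prod (LinearMap.ker (d (jz - 1 + 1)) : Type u) (V : Type u)) = 0
            have h2 : π2 (z : (P (jz - 1) : Type u)) = 0 :=
              Subtype.ext (LinearMap.mem_ker.1 z.2)
            rw [h2]
            rfl
          rw [h1]
          simp
      have hBproj : Module.Projective R (Prod ((Syz M k : Type u) →₀ R) (U : Type u)) :=
        inferInstance
      have hB'proj : Module.Projective R (Prod (P (jz - 1) : Type u) (V : Type u)) :=
        inferInstance
      obtain ⟨e'⟩ := schanuel_s7 aL fL haLinj hfLsurj hexL aR fR haRinj hfRsurj hexR
        hBproj hB'proj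
      exact ⟨jz - 1, ModuleCat.of R (Prod (P (jz - 1) : Type u) (V : Type u)),
        ModuleCat.of R (Prod ((Syz M k : Type u) →₀ R) (U : Type u)),
        inferInstanceAs (Module.Projective R (Prod (P (jz - 1) : Type u) (V : Type u))),
        inferInstanceAs (Module.Projective R (Prod ((Syz M k : Type u) →₀ R) (U : Type u))),
        ⟨e'⟩⟩
  have extvSyz : ∀ k : ℕ, ExtVa R (Syz M k : Type u) := by
    intro k
    obtain ⟨jz, U, V, hU, hV, ⟨e⟩⟩ := chain k
    exact extva_of_retract (LinearMap.fst R _ _) (LinearMap.prod LinearMap.id 0) (fun a => rfl)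
      (extva_congr e.symm (extva_prod (extva_ker hproj hexact hlift jz)
        (extva_of_projective hV)))
  refine ⟨(fun j => match j with
      | Int.ofNat 0 => L
      | Int.ofNat (k+1) => P (k : ℤ)
      | Int.negSucc k => ModuleCat.of R ((Syz M k : Type u) →₀ R)),
    (fun j => match j with
      | Int.ofNat 0 => (LinearMap.ker (d 0)).subtype ∘ₗ eN.toLinearMap ∘ₗ p
      | Int.ofNat (k+1) => d (k : ℤ)
      | Int.negSucc 0 => i ∘ₗ canonF (R := R) (M : Type u)
      | Int.negSucc (k+1) =>
          (LinearMap.ker (canonF (R := R) (Syz M k))).subtype ∘ₗ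
            canonF (R := R) (Syz M (k+1))),
    ?_, ?_, ?_, ?_⟩
  · intro j
    match j with
    | Int.ofNat 0 => exact hLproj
    | Int.ofNat (k+1) => exact hproj _
    | Int.negSucc k => exact inferInstanceAs (Module.Projective R ((Syz M k : Type u) →₀ R))
  · intro j
    match j with
    | Int.ofNat 0 =>
      have key : Function.Exact ((LinearMap.ker (d 0)).subtype ∘ₗ eN.toLinearMap ∘ₗ p) (d 0) := by
        intro y
        constructor
        · intro h0
          obtain ⟨x, hx⟩ := hp (eN.symm ⟨y, LinearMap.mem_ker.2 h0⟩)
          refine ⟨x, ?_⟩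
          show ((eN (p x) : LinearMap.ker (d 0)) : (P 0 : Type u)) = y
          rw [hx, eN.apply_symm_apply]
        · rintro ⟨x, rfl⟩
          show d 0 ((eN (p x) : LinearMap.ker (d 0)) : (P 0 : Type u)) = 0
          exact LinearMap.mem_ker.1 (eN (p x)).2
      exact key
    | Int.ofNat (k+1) => exact hexact ((k : ℕ) : ℤ)
    | Int.negSucc 0 =>
      have key : Function.Exact (i ∘ₗ canonF (R := R) (M : Type u))
          ((LinearMap.ker (d 0)).subtype ∘ₗ eN.toLinearMap ∘ₗ p) := by
        intro y
        constructor
        · intro h0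
          have h0' : ((eN (p y) : LinearMap.ker (d 0)) : (P 0 : Type u)) = 0 := h0
          have h1 : p y = 0 := by
            have h2 : eN (p y) = 0 := Subtype.ext (by simpa using h0')
            exact eN.map_eq_zero_iff.1 h2
          obtain ⟨m, hm⟩ := (he y).1 h1
          obtain ⟨x, hx⟩ := canonF_surjective (R := R) (M : Type u) m
          refine ⟨x, ?_⟩
          show i (canonF (R := R) (M : Type u) x) = y
          rw [hx, hm]
        · rintro ⟨x, rfl⟩
          show ((eN (p (i (canonF (R := R) (M : Type u) x))) :
            LinearMap.ker (d 0)) : (P 0 : Type u)) = 0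
          rw [he.apply_apply_eq_zero]
          simp
      exact key
    | Int.negSucc 1 => exact exact_syz_helper i hi
    | Int.negSucc (k+2) =>
      exact exact_syz_helper (A := ((Syz M (k+1)) : Type u))
        (B := ((Syz M k : Type u) →₀ R))
        ((LinearMap.ker (canonF (R := R) (Syz M k : Type u))).subtype)
        (Submodule.injective_subtype _)
  · intro W hW j f hf
    match j with
    | Int.ofNat 0 =>
      have hfd : f ∘ₗ d (-1) = 0 := by
        apply LinearMap.ext
        intro x
        have hz : d 0 (d (-1) x) = 0 := hdd (-1) x
        obtain ⟨l, hl⟩ := hp (eN.symm ⟨show (P 0 : Type u) from d (-1) x,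
          LinearMap.mem_ker.2 hz⟩)
        have h1 : ((LinearMap.ker (d 0)).subtype ∘ₗ eN.toLinearMap ∘ₗ p) l = d (-1) x := by
          show ((eN (p l) : LinearMap.ker (d 0)) : (P 0 : Type u)) = d (-1) x
          rw [hl, eN.apply_symm_apply]
        have h2 := LinearMap.congr_fun hf l
        show f (d (-1) x) = 0
        rw [← h1]
        exact h2
      exact hlift W hW (-1)
        (show (P ((-1:ℤ)+1) : Type u) →ₗ[R] (W : Type u) from f) hfd
    | Int.ofNat (k+1) =>
      exact hlift W hW ((k : ℕ) : ℤ)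
        (show (P (((k : ℕ) : ℤ)+1) : Type u) →ₗ[R] (W : Type u) from f) hf
    | Int.negSucc 0 =>
      have hfi : ∀ m : (M : Type u), f (i m) = 0 := by
        intro m
        obtain ⟨x, hx⟩ := canonF_surjective (R := R) (M : Type u) m
        have h2 := LinearMap.congr_fun hf x
        show f (i m) = 0
        rw [← hx]
        exact h2
      obtain ⟨h, hh⟩ := exists_factorThru p hp f (by
        intro l hl
        obtain ⟨m, hm⟩ := (he l).1 hl
        rw [← hm]
        exact hfi m)
      set h' : (P (-1) : Type u) →ₗ[R] (W : Type u) :=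
        h ∘ₗ eN.symm.toLinearMap ∘ₗ LinearMap.codRestrict (LinearMap.ker (d 0)) (d (-1))
          (fun y => LinearMap.mem_ker.2 (hdd (-1) y)) with hh'
      have hh'd : h' ∘ₗ d (-2) = 0 := by
        apply LinearMap.ext
        intro x
        have h3 : LinearMap.codRestrict (LinearMap.ker (d 0)) (d (-1))
            (fun y => LinearMap.mem_ker.2 (hdd (-1) y)) (d (-2) x) = 0 :=
          Subtype.ext (hdd (-2) x)
        show h (eN.symm (LinearMap.codRestrict (LinearMap.ker (d 0)) (d (-1))
            (fun y => LinearMap.mem_ker.2 (hdd (-1) y)) (d (-2) x))) = 0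
        rw [h3]
        simp
      obtain ⟨g, hg⟩ := hlift W hW (-2)
        (show (P ((-2:ℤ)+1) : Type u) →ₗ[R] (W : Type u) from h') hh'd
      refine ⟨g, ?_⟩
      apply LinearMap.ext
      intro l
      show g (((eN (p l) : LinearMap.ker (d 0)) : (P 0 : Type u))) = f l
      obtain ⟨x, hx⟩ := (hexact (-1) (show (P ((-1:ℤ)+1) : Type u) from
          ((eN (p l) : LinearMap.ker (d 0)) : (P 0 : Type u)))).1
        (LinearMap.mem_ker.1 (eN (p l)).2)
      have hx' : d (-1) x = ((eN (p l) : LinearMap.ker (d 0)) : (P 0 : Type u)) := hx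
      rw [← hx']
      have h4' : g (d (-1) x) = h' x := LinearMap.congr_fun hg x
      rw [h4']
      have h5 : (LinearMap.codRestrict (LinearMap.ker (d 0)) (d (-1))
          (fun y => LinearMap.mem_ker.2 (hdd (-1) y)) x) = eN (p l) := Subtype.ext hx
      show h (eN.symm (LinearMap.codRestrict (LinearMap.ker (d 0)) (d (-1))
          (fun y => LinearMap.mem_ker.2 (hdd (-1) y)) x)) = f l
      rw [h5, eN.symm_apply_apply]
      exact LinearMap.congr_fun hh l
    | Int.negSucc 1 =>
      exact lift_syz_helper (A := (M : Type u)) i p hi hp he extvN hW f hf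
    | Int.negSucc (k+2) =>
      exact lift_syz_helper (A := ((Syz M (k+1)) : Type u))
        (B := ((Syz M k : Type u) →₀ R))
        ((LinearMap.ker (canonF (R := R) (Syz M k : Type u))).subtype)
        (canonF (R := R) (Syz M k : Type u))
        (Submodule.injective_subtype _) (canonF_surjective (R := R) _)
        (exact_subtype_canonF _) (extvSyz k) hW f hf
  · refine ⟨LinearEquiv.ofBijective (LinearMap.codRestrict _ i (fun m => LinearMap.mem_ker.2 ?_)) ⟨?_, ?_⟩⟩
    · show ((eN (p (i m)) : LinearMap.ker (d 0)) : (P 0 : Type u)) = 0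
      rw [he.apply_apply_eq_zero]
      simp
    · intro x y hxy
      exact hi (congrArg Subtype.val hxy)
    · rintro ⟨l, hl⟩
      have h0' : ((eN (p l) : LinearMap.ker (d 0)) : (P 0 : Type u)) = 0 := LinearMap.mem_ker.1 hl
      have h1 : p l = 0 := eN.map_eq_zero_iff.1 (Subtype.ext (by simpa using h0'))
      obtain ⟨m, hm⟩ := (he l).1 h1
      exact ⟨m, Subtype.ext hm⟩

/-- If `0 → M → L → N → 0` is exact with `pd L ≤ n` and `N` Gorenstein projective,
then `Gpd M ≤ n`. -/
theorem gpdLE_of_ses (R : Type u) [Ring R] (n : ℕ) (M L N : ModuleCat.{u} R)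
    (i : M →ₗ[R] L) (p : L →ₗ[R] N)
    (hi : Function.Injective i) (hp : Function.Surjective p) (he : Function.Exact i p)
    (hL : pdLE R n L) (hN : IsGorensteinProjective R N) :
    GpdLE R n M := by
  match n with
  | 0 => exact gp_of_ses_proj M L N i p hi hp he hL hN
  | Nat.succ n =>
    obtain ⟨P, q, hP, hq, hker⟩ := hL
    set pq : (P : Type u) →ₗ[R] (N : Type u) := p ∘ₗ q with hpq
    set X : Submodule R (P : Type u) := LinearMap.ker pq with hX
    have hpqsurj : Function.Surjective pq := by
      intro c
      obtain ⟨l, hl⟩ := hp c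
      obtain ⟨x, hx⟩ := hq l
      exact ⟨x, by show p (q x) = c; rw [hx, hl]⟩
    have hexX : Function.Exact X.subtype pq := by
      intro x
      constructor
      · intro h0
        exact ⟨⟨x, LinearMap.mem_ker.2 h0⟩, rfl⟩
      · rintro ⟨z, rfl⟩
        exact LinearMap.mem_ker.1 z.2
    have hGP : IsGorensteinProjective R (ModuleCat.of R X) :=
      gp_of_ses_proj (ModuleCat.of R X) P N X.subtype pq
        (Submodule.injective_subtype X) hpqsurj hexX hP hN
    set eM := LinearEquiv.ofInjective i hi with heM
    have hcoeM : ∀ y : LinearMap.range i, i (eM.symm y) = (y : (L : Type u)) := by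
      intro y
      have h := congrArg (Subtype.val) (eM.apply_symm_apply y)
      exact h
    have hmem : ∀ x : X, q (X.subtype x) ∈ LinearMap.range i := by
      intro x
      exact (he _).1 (LinearMap.mem_ker.1 x.2)
    set r : (X : Type u) →ₗ[R] (M : Type u) :=
      eM.symm.toLinearMap ∘ₗ LinearMap.codRestrict (LinearMap.range i) (q ∘ₗ X.subtype) hmem
      with hr
    have hrval : ∀ x : X, i (r x) = q (X.subtype x) := by
      intro x
      show i (eM.symm (⟨q (X.subtype x), hmem x⟩ : LinearMap.range i)) = q (X.subtype x)
      rw [hcoeM]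
    have hrsurj : Function.Surjective r := by
      intro m
      obtain ⟨x, hx⟩ := hq (i m)
      have hxX : x ∈ X := by
        show p (q x) = 0
        rw [hx, he.apply_apply_eq_zero]
      refine ⟨⟨x, hxX⟩, ?_⟩
      apply hi
      rw [hrval]
      exact hx
    refine ⟨ModuleCat.of R X, r, hGP, hrsurj, ?_⟩
    have hle : LinearMap.ker q ≤ X := by
      intro x hx
      show p (q x) = 0
      rw [LinearMap.mem_ker.1 hx, map_zero]
    have hTmem : ∀ z : LinearMap.ker q, Submodule.inclusion hle z ∈ LinearMap.ker r := by
      intro z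
      apply LinearMap.mem_ker.2
      apply hi
      rw [hrval, map_zero]
      show q ((z : (P : Type u))) = 0
      exact LinearMap.mem_ker.1 z.2
    set T : (LinearMap.ker q : Type u) →ₗ[R] (LinearMap.ker r : Type u) :=
      LinearMap.codRestrict _ (Submodule.inclusion hle) hTmem with hT
    have hTbij : Function.Bijective T := by
      constructor
      · intro x y hxy
        exact Subtype.ext (congrArg (fun v => ((Subtype.val v : X) : (P : Type u))) hxy)
      · rintro ⟨y, hy⟩
        have h1 : q ((y : (P : Type u))) = 0 := by
          have h2 : i (r y) = q ((y : (P : Type u))) := hrval y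
          rw [LinearMap.mem_ker.1 hy, map_zero] at h2
          exact h2.symm
        exact ⟨⟨(y : (P : Type u)), LinearMap.mem_ker.2 h1⟩,
          Subtype.ext (Subtype.ext rfl)⟩
    exact gpdLE_congr n (LinearEquiv.ofBijective T hTbij) (gpdLE_of_pdLE n hker)
end
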